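/- arXiv:math/0606001 — 9 statements merged into one kernel-verified Lean document; each statement's English description precedes it below -/
import Mathlib

section
/- Let A be a commutative Banach ring and let v be a minimal element of P(A), the set of bounded submultiplicative seminorms on A ordered pointwise (i.e., v ∈ P(A) and every w ∈ P(A) with w(a) ≤ v(a) for all a satisfies w = v). Then v is multiplicative: v(ab) = v(a)·v(b) for all a, b ∈ A. -/
open Finset Polynomial

/-- `v` belongs to `P(A)`: it is a bounded submultiplicative seminorm on `A`. -/
def IsBddSubmultSeminorm {A : Type*} [NormedRing A] (v : A → ℝ) : Prop :=
  (∀ a : A, 0 ≤ v a) ∧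
  (∀ a b : A, v (a + b) ≤ v a + v b) ∧
  (∀ a : A, v (-a) = v a) ∧
  (∀ a b : A, v (a * b) ≤ v a * v b) ∧
  v 1 = 1 ∧
  (∃ C : ℝ, 0 < C ∧ ∀ a : A, v a ≤ C * ‖a‖)

namespace MinSemAux

variable {A : Type*} [NormedRing A]

theorem v_nonneg {v : A → ℝ} (hv : IsBddSubmultSeminorm v) (a : A) : 0 ≤ v a := hv.1 a
theorem v_add_le {v : A → ℝ} (hv : IsBddSubmultSeminorm v) (a b : A) :
    v (a + b) ≤ v a + v b := hv.2.1 a b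
theorem v_neg {v : A → ℝ} (hv : IsBddSubmultSeminorm v) (a : A) : v (-a) = v a := hv.2.2.1 a
theorem v_mul_le {v : A → ℝ} (hv : IsBddSubmultSeminorm v) (a b : A) :
    v (a * b) ≤ v a * v b := hv.2.2.2.1 a b
theorem v_one {v : A → ℝ} (hv : IsBddSubmultSeminorm v) : v 1 = 1 := hv.2.2.2.2.1

theorem v_zero {v : A → ℝ} (hv : IsBddSubmultSeminorm v) : v 0 = 0 := by
  obtain ⟨C, hC, hB⟩ := hv.2.2.2.2.2
  have h := hB 0
  simp only [norm_zero, mul_zero] at h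
  exact le_antisymm h (hv.1 0)

theorem v_pow_le {v : A → ℝ} (hv : IsBddSubmultSeminorm v) (a : A) :
    ∀ n : ℕ, v (a ^ n) ≤ v a ^ n := by
  intro n
  induction n with
  | zero => simp [v_one hv]
  | succ n ih =>
    calc v (a ^ (n + 1)) = v (a ^ n * a) := by rw [pow_succ]
    _ ≤ v (a ^ n) * v a := v_mul_le hv _ _
    _ ≤ v a ^ n * v a := mul_le_mul_of_nonneg_right ih (hv.1 a)
    _ = v a ^ (n + 1) := (pow_succ _ _).symm

theorem v_sum_le {v : A → ℝ} (hv : IsBddSubmultSeminorm v) {ι : Type*} (t : Finset ι)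
    (f : ι → A) : v (∑ i ∈ t, f i) ≤ ∑ i ∈ t, v (f i) := by
  classical
  induction t using Finset.induction with
  | empty => simp [v_zero hv]
  | insert _ _ h ih =>
    rw [Finset.sum_insert h, Finset.sum_insert h]
    exact (v_add_le hv _ _).trans (by linarith)

theorem nontrivial_of_seminorm {v : A → ℝ} (hv : IsBddSubmultSeminorm v) : Nontrivial A := by
  refine ⟨0, 1, fun h => ?_⟩
  have h1 := v_one hv
  rw [← h, v_zero hv] at h1
  norm_num at h1

/-- ε-limit lemma for products. -/
theorem le_mul_of_forall_eps {Z X Y : ℝ} (hX : 0 ≤ X) (hY : 0 ≤ Y)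
    (h : ∀ ε : ℝ, 0 < ε → Z ≤ (X + ε) * (Y + ε)) : Z ≤ X * Y := by
  refine le_of_forall_pos_le_add fun δ hδ => ?_
  set ε : ℝ := min 1 (δ / (X + Y + 1)) with hε
  have hXY1 : (0:ℝ) < X + Y + 1 := by linarith
  have hε0 : 0 < ε := lt_min one_pos (div_pos hδ hXY1)
  have hε1 : ε ≤ 1 := min_le_left _ _
  have hε2 : ε * (X + Y + 1) ≤ δ := by
    have h2 : ε ≤ δ / (X + Y + 1) := min_le_right _ _
    calc ε * (X + Y + 1) ≤ (δ / (X + Y + 1)) * (X + Y + 1) :=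
      mul_le_mul_of_nonneg_right h2 hXY1.le
    _ = δ := by field_simp
  have := h ε hε0
  nlinarith [mul_le_mul_of_nonneg_left hε1 hε0.le]

section Construction1

variable {A : Type*} [NormedCommRing A]

/-- The comparison sequence. -/
noncomputable def cseq (v : A → ℝ) (a : A) (m : ℕ) (x : A) : ℝ := v (a ^ m * x) / v a ^ m

theorem cseq_nonneg {v : A → ℝ} (hv : IsBddSubmultSeminorm v) (a : A) (m : ℕ) (x : A) :
    0 ≤ cseq v a m x :=
  div_nonneg (hv.1 _) (pow_nonneg (hv.1 a) m)

theorem cseq_succ_le {v : A → ℝ} (hv : IsBddSubmultSeminorm v) {a : A} (ha : 0 < v a)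
    (m : ℕ) (x : A) : cseq v a (m + 1) x ≤ cseq v a m x := by
  unfold cseq
  have h1 : v (a ^ (m + 1) * x) ≤ v a * v (a ^ m * x) := by
    have : a ^ (m + 1) * x = a * (a ^ m * x) := by ring
    rw [this]
    exact v_mul_le hv _ _
  have h2 : v a ^ (m + 1) = v a ^ m * v a := pow_succ _ _
  rw [h2]
  calc v (a ^ (m + 1) * x) / (v a ^ m * v a) ≤ (v a * v (a ^ m * x)) / (v a ^ m * v a) := by
        gcongr
  _ = v (a ^ m * x) / v a ^ m := by
        rw [mul_comm (v a) (v (a ^ m * x)), mul_div_mul_right _ _ ha.ne']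

theorem cseq_antitone {v : A → ℝ} (hv : IsBddSubmultSeminorm v) {a : A} (ha : 0 < v a)
    (x : A) : Antitone (fun m => cseq v a m x) :=
  antitone_nat_of_succ_le (fun m => cseq_succ_le hv ha m x)

theorem cseq_zero {v : A → ℝ} (a x : A) : cseq v a 0 x = v x := by
  simp [cseq]

/-- Construction 1: the infimum seminorm. -/
noncomputable def wInf (v : A → ℝ) (a : A) (x : A) : ℝ := ⨅ m : ℕ, cseq v a m x

theorem wInf_bddBelow {v : A → ℝ} (hv : IsBddSubmultSeminorm v) (a x : A) :
    BddBelow (Set.range fun m => cseq v a m x) := by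
  refine ⟨0, ?_⟩
  rintro t ⟨m, rfl⟩
  exact cseq_nonneg hv a m x

theorem wInf_nonneg {v : A → ℝ} (hv : IsBddSubmultSeminorm v) (a x : A) : 0 ≤ wInf v a x :=
  Real.iInf_nonneg (fun m => cseq_nonneg hv a m x)

theorem wInf_le_cseq {v : A → ℝ} (hv : IsBddSubmultSeminorm v) (a x : A) (m : ℕ) :
    wInf v a x ≤ cseq v a m x :=
  ciInf_le (wInf_bddBelow hv a x) m

theorem wInf_le_v {v : A → ℝ} (hv : IsBddSubmultSeminorm v) (a x : A) : wInf v a x ≤ v x :=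
  (wInf_le_cseq hv a x 0).trans_eq (cseq_zero a x)

theorem wInf_exists_lt {v : A → ℝ} (hv : IsBddSubmultSeminorm v) (a x : A) {ε : ℝ}
    (hε : 0 < ε) : ∃ m, cseq v a m x < wInf v a x + ε := by
  apply exists_lt_of_ciInf_lt
  exact lt_add_of_pos_right _ hε

theorem wInf_add_le {v : A → ℝ} (hv : IsBddSubmultSeminorm v) {a : A} (ha : 0 < v a)
    (x y : A) : wInf v a (x + y) ≤ wInf v a x + wInf v a y := by
  refine le_of_forall_pos_le_add fun ε hε => ?_
  obtain ⟨m, hm⟩ := wInf_exists_lt hv a x (half_pos hε)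
  obtain ⟨k, hk⟩ := wInf_exists_lt hv a y (half_pos hε)
  set n := max m k with hn
  have h1 : cseq v a n (x + y) ≤ cseq v a n x + cseq v a n y := by
    unfold cseq
    rw [← add_div]
    gcongr
    rw [mul_add]
    exact v_add_le hv _ _
  have h2 : cseq v a n x ≤ cseq v a m x := cseq_antitone hv ha x (le_max_left m k)
  have h3 : cseq v a n y ≤ cseq v a k y := cseq_antitone hv ha y (le_max_right m k)
  have := wInf_le_cseq hv a (x + y) n
  linarith

theorem wInf_neg {v : A → ℝ} (hv : IsBddSubmultSeminorm v) (a x : A) :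
    wInf v a (-x) = wInf v a x := by
  unfold wInf
  congr 1
  funext m
  unfold cseq
  rw [mul_neg, v_neg hv]

theorem wInf_mul_le {v : A → ℝ} (hv : IsBddSubmultSeminorm v) {a : A} (ha : 0 < v a)
    (x y : A) : wInf v a (x * y) ≤ wInf v a x * wInf v a y := by
  apply le_mul_of_forall_eps (wInf_nonneg hv a x) (wInf_nonneg hv a y)
  intro ε hε
  obtain ⟨m, hm⟩ := wInf_exists_lt hv a x hε
  obtain ⟨k, hk⟩ := wInf_exists_lt hv a y hε
  have h1 : cseq v a (m + k) (x * y) ≤ cseq v a m x * cseq v a k y := by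
    unfold cseq
    rw [div_mul_div_comm, ← pow_add]
    gcongr
    have h5 : a ^ (m + k) * (x * y) = (a ^ m * x) * (a ^ k * y) := by
      rw [pow_add]; ring
    rw [h5]
    exact v_mul_le hv _ _
  have h2 : cseq v a m x * cseq v a k y ≤ (wInf v a x + ε) * (wInf v a y + ε) :=
    mul_le_mul hm.le hk.le (cseq_nonneg hv a k y)
      (by have := wInf_nonneg hv a x; linarith)
  exact (wInf_le_cseq hv a (x * y) (m + k)).trans (h1.trans h2)

theorem wInf_one {v : A → ℝ} (hv : IsBddSubmultSeminorm v) {a : A} (ha : 0 < v a)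
    (hpm : ∀ m : ℕ, v (a ^ m) = v a ^ m) : wInf v a 1 = 1 := by
  have : ∀ m : ℕ, cseq v a m 1 = 1 := by
    intro m
    unfold cseq
    rw [mul_one, hpm m, div_self (by positivity)]
  unfold wInf
  simp only [this]
  exact ciInf_const

theorem wInf_isSeminorm {v : A → ℝ} (hv : IsBddSubmultSeminorm v) {a : A} (ha : 0 < v a)
    (hpm : ∀ m : ℕ, v (a ^ m) = v a ^ m) : IsBddSubmultSeminorm (wInf v a) := by
  obtain ⟨C, hC, hB⟩ := hv.2.2.2.2.2
  refine ⟨wInf_nonneg hv a, wInf_add_le hv ha, wInf_neg hv a, wInf_mul_le hv ha,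
    wInf_one hv ha hpm, C, hC, fun x => (wInf_le_v hv a x).trans (hB x)⟩

/-- Conclusion of construction 1 (given power-multiplicativity at `a`). -/
theorem pow_mul_case {v : A → ℝ} (hv : IsBddSubmultSeminorm v)
    (hmin : ∀ w : A → ℝ, IsBddSubmultSeminorm w → (∀ a : A, w a ≤ v a) → w = v)
    {a : A} (ha : 0 < v a) (hpm : ∀ m : ℕ, v (a ^ m) = v a ^ m) (b : A) :
    v a * v b ≤ v (a * b) := by
  have heq := hmin (wInf v a) (wInf_isSeminorm hv ha hpm) (wInf_le_v hv a)
  have h1 : v b ≤ v (a * b) / v a := by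
    have := wInf_le_cseq hv a b 1
    rw [heq] at this
    simpa [cseq] using this
  calc v a * v b ≤ v a * (v (a * b) / v a) := mul_le_mul_of_nonneg_left h1 (hv.1 a)
  _ = v (a * b) := by field_simp

end Construction1

section Construction2

variable {A : Type*} [NormedCommRing A]

/-- Weighted cost of a polynomial: `∑ v(pᵢ) sⁱ`. -/
noncomputable def cost (v : A → ℝ) (s : ℝ) (p : Polynomial A) : ℝ :=
  ∑ i ∈ Finset.range (p.natDegree + 1), v (p.coeff i) * s ^ i

theorem cost_nonneg {v : A → ℝ} (hv : IsBddSubmultSeminorm v) {s : ℝ} (hs : 0 ≤ s)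
    (p : Polynomial A) : 0 ≤ cost v s p :=
  Finset.sum_nonneg fun i _ => mul_nonneg (hv.1 _) (pow_nonneg hs i)

theorem cost_eq {v : A → ℝ} (hv : IsBddSubmultSeminorm v) (s : ℝ) {p : Polynomial A}
    {N : ℕ} (hN : p.natDegree < N) :
    cost v s p = ∑ i ∈ Finset.range N, v (p.coeff i) * s ^ i := by
  apply Finset.sum_subset
  · exact Finset.range_subset_range.mpr hN
  · intro i _ hi
    rw [Finset.mem_range, not_lt] at hi
    rw [Polynomial.coeff_eq_zero_of_natDegree_lt (lt_of_lt_of_le (Nat.lt_of_succ_le hi) le_rfl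
      |>.trans_le le_rfl), v_zero hv, zero_mul]

theorem cost_C {v : A → ℝ} (hv : IsBddSubmultSeminorm v) (s : ℝ) (x : A) :
    cost v s (Polynomial.C x) = v x := by
  simp [cost]

theorem cost_X {v : A → ℝ} (hv : IsBddSubmultSeminorm v) (s : ℝ) [Nontrivial A] :
    cost v s (Polynomial.X : Polynomial A) = s := by
  rw [cost, Polynomial.natDegree_X]
  simp [Finset.sum_range_succ, v_zero hv, v_one hv]

theorem cost_add_le {v : A → ℝ} (hv : IsBddSubmultSeminorm v) (s : ℝ) (hs : 0 ≤ s)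
    (p q : Polynomial A) : cost v s (p + q) ≤ cost v s p + cost v s q := by
  set N := max p.natDegree q.natDegree + 1 with hN
  have hp : p.natDegree < N := Nat.lt_succ_of_le (le_max_left _ _)
  have hq : q.natDegree < N := Nat.lt_succ_of_le (le_max_right _ _)
  have hpq : (p + q).natDegree < N :=
    Nat.lt_succ_of_le ((Polynomial.natDegree_add_le p q).trans (Nat.le_of_lt_succ
      (Nat.lt_succ_of_le (le_refl _))))
  rw [cost_eq hv s hp, cost_eq hv s hq, cost_eq hv s hpq, ← Finset.sum_add_distrib]
  apply Finset.sum_le_sum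
  intro i _
  rw [Polynomial.coeff_add, ← add_mul]
  exact mul_le_mul_of_nonneg_right (v_add_le hv _ _) (pow_nonneg hs i)

theorem cost_neg {v : A → ℝ} (hv : IsBddSubmultSeminorm v) (s : ℝ) (p : Polynomial A) :
    cost v s (-p) = cost v s p := by
  unfold cost
  rw [Polynomial.natDegree_neg]
  exact Finset.sum_congr rfl fun i _ => by rw [Polynomial.coeff_neg, v_neg hv]

theorem cost_mul_le {v : A → ℝ} (hv : IsBddSubmultSeminorm v) {s : ℝ} (hs : 0 ≤ s)
    (p q : Polynomial A) : cost v s (p * q) ≤ cost v s p * cost v s q := by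
  classical
  set N := p.natDegree + q.natDegree + 1 with hNdef
  have hp : p.natDegree < N := by omega
  have hq : q.natDegree < N := by omega
  have hpq : (p * q).natDegree < N :=
    Nat.lt_succ_of_le (Polynomial.natDegree_mul_le)
  set F : ℕ × ℕ → ℝ := fun ij => (v (p.coeff ij.1) * s ^ ij.1) * (v (q.coeff ij.2) * s ^ ij.2)
    with hF
  have hFnn : ∀ ij : ℕ × ℕ, 0 ≤ F ij := fun ij => by
    apply mul_nonneg <;> exact mul_nonneg (hv.1 _) (pow_nonneg hs _)
  have step1 : cost v s (p * q) ≤ ∑ n ∈ Finset.range N, ∑ ij ∈ Finset.HasAntidiagonal.antidiagonal n, F ij := by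
    rw [cost_eq hv s hpq]
    apply Finset.sum_le_sum
    intro n _
    have h1 : v ((p * q).coeff n) ≤ ∑ ij ∈ Finset.HasAntidiagonal.antidiagonal n, v (p.coeff ij.1) * v (q.coeff ij.2) := by
      rw [Polynomial.coeff_mul]
      exact (v_sum_le hv _ _).trans (Finset.sum_le_sum fun ij _ => v_mul_le hv _ _)
    calc v ((p * q).coeff n) * s ^ n
        ≤ (∑ ij ∈ Finset.HasAntidiagonal.antidiagonal n, v (p.coeff ij.1) * v (q.coeff ij.2)) * s ^ n :=
          mul_le_mul_of_nonneg_right h1 (pow_nonneg hs n)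
      _ = ∑ ij ∈ Finset.HasAntidiagonal.antidiagonal n, v (p.coeff ij.1) * v (q.coeff ij.2) * s ^ n :=
          Finset.sum_mul _ _ _
      _ = ∑ ij ∈ Finset.HasAntidiagonal.antidiagonal n, F ij := by
          apply Finset.sum_congr rfl
          intro ij hij
          have := Finset.HasAntidiagonal.mem_antidiagonal.mp hij
          rw [hF, ← this, pow_add]
          ring
  have hdisj : (↑(Finset.range N) : Set ℕ).PairwiseDisjoint Finset.HasAntidiagonal.antidiagonal := by
    intro m _ n _ hmn
    simp only [Function.onFun]
    rw [Finset.disjoint_left]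
    intro ij h1 h2
    exact hmn ((Finset.HasAntidiagonal.mem_antidiagonal.mp h1).symm.trans (Finset.HasAntidiagonal.mem_antidiagonal.mp h2))
  have step2 : ∑ n ∈ Finset.range N, ∑ ij ∈ Finset.HasAntidiagonal.antidiagonal n, F ij
      = ∑ ij ∈ (Finset.range N).biUnion Finset.HasAntidiagonal.antidiagonal, F ij :=
    (Finset.sum_biUnion hdisj).symm
  have hsub : (Finset.range N).biUnion Finset.HasAntidiagonal.antidiagonal ⊆ Finset.range N ×ˢ Finset.range N := by
    intro ij hij
    rw [Finset.mem_biUnion] at hij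
    obtain ⟨n, hn, hijn⟩ := hij
    rw [Finset.mem_range] at hn
    have := Finset.HasAntidiagonal.mem_antidiagonal.mp hijn
    rw [Finset.mem_product, Finset.mem_range, Finset.mem_range]
    omega
  have step3 : ∑ ij ∈ (Finset.range N).biUnion Finset.HasAntidiagonal.antidiagonal, F ij
      ≤ ∑ ij ∈ Finset.range N ×ˢ Finset.range N, F ij :=
    Finset.sum_le_sum_of_subset_of_nonneg hsub (fun ij _ _ => hFnn ij)
  have step4 : ∑ ij ∈ Finset.range N ×ˢ Finset.range N, F ij = cost v s p * cost v s q := by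
    rw [Finset.sum_product, cost_eq hv s hp, cost_eq hv s hq, Finset.sum_mul_sum]
  linarith [step1, step2.le, step3, step4.le]

theorem v_eval_le_cost {v : A → ℝ} (hv : IsBddSubmultSeminorm v) {s M : ℝ}
    (hM0 : 0 ≤ M) (a : A) (hM : ∀ j : ℕ, v (a ^ j) ≤ M * s ^ j) (p : Polynomial A) :
    v (p.eval a) ≤ M * cost v s p := by
  rw [Polynomial.eval_eq_sum_range, cost, Finset.mul_sum]
  refine (v_sum_le hv _ _).trans (Finset.sum_le_sum fun i _ => ?_)
  calc v (p.coeff i * a ^ i) ≤ v (p.coeff i) * v (a ^ i) := v_mul_le hv _ _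
  _ ≤ v (p.coeff i) * (M * s ^ i) := mul_le_mul_of_nonneg_left (hM i) (hv.1 _)
  _ = M * (v (p.coeff i) * s ^ i) := by ring

/-- The Gauss/contraction seminorm: infimum of costs over polynomial representations. -/
noncomputable def gaussSN (v : A → ℝ) (s : ℝ) (a : A) (x : A) : ℝ :=
  sInf {r : ℝ | ∃ p : Polynomial A, p.eval a = x ∧ cost v s p = r}

theorem gaussSN_set_nonempty (v : A → ℝ) (s : ℝ) (a x : A) :
    {r : ℝ | ∃ p : Polynomial A, p.eval a = x ∧ cost v s p = r}.Nonempty :=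
  ⟨cost v s (Polynomial.C x), Polynomial.C x, Polynomial.eval_C, rfl⟩

theorem gaussSN_set_bddBelow {v : A → ℝ} (hv : IsBddSubmultSeminorm v) {s : ℝ} (hs : 0 ≤ s)
    (a x : A) : BddBelow {r : ℝ | ∃ p : Polynomial A, p.eval a = x ∧ cost v s p = r} := by
  refine ⟨0, ?_⟩
  rintro r ⟨p, -, rfl⟩
  exact cost_nonneg hv hs p

theorem gaussSN_le_cost {v : A → ℝ} (hv : IsBddSubmultSeminorm v) {s : ℝ} (hs : 0 ≤ s)
    (a x : A) (p : Polynomial A) (hp : p.eval a = x) : gaussSN v s a x ≤ cost v s p :=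
  csInf_le (gaussSN_set_bddBelow hv hs a x) ⟨p, hp, rfl⟩

theorem gaussSN_nonneg {v : A → ℝ} (hv : IsBddSubmultSeminorm v) {s : ℝ} (hs : 0 ≤ s)
    (a x : A) : 0 ≤ gaussSN v s a x :=
  le_csInf (gaussSN_set_nonempty v s a x) (by rintro r ⟨p, -, rfl⟩; exact cost_nonneg hv hs p)

theorem gaussSN_le_v {v : A → ℝ} (hv : IsBddSubmultSeminorm v) {s : ℝ} (hs : 0 ≤ s)
    (a x : A) : gaussSN v s a x ≤ v x :=
  (gaussSN_le_cost hv hs a x (Polynomial.C x) Polynomial.eval_C).trans_eq (cost_C hv s x)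

theorem gaussSN_exists_rep {v : A → ℝ} (hv : IsBddSubmultSeminorm v) {s : ℝ} (hs : 0 ≤ s)
    (a x : A) {ε : ℝ} (hε : 0 < ε) :
    ∃ p : Polynomial A, p.eval a = x ∧ cost v s p < gaussSN v s a x + ε := by
  have h := (csInf_lt_iff (gaussSN_set_bddBelow hv hs a x) (gaussSN_set_nonempty v s a x)).mp
    (lt_add_of_pos_right _ hε : gaussSN v s a x < gaussSN v s a x + ε)
  obtain ⟨r, ⟨p, hp, rfl⟩, hr⟩ := h
  exact ⟨p, hp, hr⟩

theorem gaussSN_add_le {v : A → ℝ} (hv : IsBddSubmultSeminorm v) {s : ℝ} (hs : 0 ≤ s)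
    (a x y : A) : gaussSN v s a (x + y) ≤ gaussSN v s a x + gaussSN v s a y := by
  refine le_of_forall_pos_le_add fun ε hε => ?_
  obtain ⟨p, hp, hcp⟩ := gaussSN_exists_rep hv hs a x (half_pos hε)
  obtain ⟨q, hq, hcq⟩ := gaussSN_exists_rep hv hs a y (half_pos hε)
  have h1 : (p + q).eval a = x + y := by rw [Polynomial.eval_add, hp, hq]
  have := (gaussSN_le_cost hv hs a (x + y) (p + q) h1).trans (cost_add_le hv s hs p q)
  linarith

theorem gaussSN_neg {v : A → ℝ} (hv : IsBddSubmultSeminorm v) {s : ℝ} (hs : 0 ≤ s)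
    (a : A) : ∀ x, gaussSN v s a (-x) = gaussSN v s a x := by
  have key : ∀ x, gaussSN v s a (-x) ≤ gaussSN v s a x := by
    intro x
    refine le_csInf (gaussSN_set_nonempty v s a x) ?_
    rintro r ⟨p, hp, rfl⟩
    have h1 : (-p).eval a = -x := by rw [Polynomial.eval_neg, hp]
    exact (gaussSN_le_cost hv hs a (-x) (-p) h1).trans_eq (cost_neg hv s p)
  intro x
  refine le_antisymm (key x) ?_
  have := key (-x)
  rwa [neg_neg] at this

theorem gaussSN_mul_le {v : A → ℝ} (hv : IsBddSubmultSeminorm v) {s : ℝ} (hs : 0 ≤ s)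
    (a x y : A) : gaussSN v s a (x * y) ≤ gaussSN v s a x * gaussSN v s a y := by
  apply le_mul_of_forall_eps (gaussSN_nonneg hv hs a x) (gaussSN_nonneg hv hs a y)
  intro ε hε
  obtain ⟨p, hp, hcp⟩ := gaussSN_exists_rep hv hs a x hε
  obtain ⟨q, hq, hcq⟩ := gaussSN_exists_rep hv hs a y hε
  have h1 : (p * q).eval a = x * y := by rw [Polynomial.eval_mul, hp, hq]
  have h2 : cost v s p * cost v s q ≤ (gaussSN v s a x + ε) * (gaussSN v s a y + ε) :=
    mul_le_mul hcp.le hcq.le (cost_nonneg hv hs q)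
      (by have := gaussSN_nonneg hv hs a x; linarith)
  exact ((gaussSN_le_cost hv hs a (x * y) (p * q) h1).trans (cost_mul_le hv hs p q)).trans h2

theorem gaussSN_one {v : A → ℝ} (hv : IsBddSubmultSeminorm v) {s M : ℝ} (hs : 0 ≤ s)
    (hM0 : 0 < M) (a : A) (hM : ∀ j : ℕ, v (a ^ j) ≤ M * s ^ j) : gaussSN v s a 1 = 1 := by
  have hpos : 1 / M ≤ gaussSN v s a 1 := by
    refine le_csInf (gaussSN_set_nonempty v s a 1) ?_
    rintro r ⟨p, hp, rfl⟩
    have h1 : v ((1 : A)) ≤ M * cost v s p := by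
      rw [← hp]; exact v_eval_le_cost hv hM0.le a hM p
    rw [v_one hv] at h1
    rw [div_le_iff₀ hM0, mul_comm]
    linarith
  have h2 : gaussSN v s a 1 ≤ 1 := (gaussSN_le_v hv hs a 1).trans_eq (v_one hv)
  have h3 : gaussSN v s a 1 ≤ gaussSN v s a 1 * gaussSN v s a 1 := by
    have := gaussSN_mul_le hv hs a 1 1
    rwa [mul_one] at this
  have h0 : 0 < gaussSN v s a 1 := lt_of_lt_of_le (by positivity) hpos
  nlinarith

theorem gaussSN_isSeminorm {v : A → ℝ} (hv : IsBddSubmultSeminorm v) {s M : ℝ} (hs : 0 ≤ s)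
    (hM0 : 0 < M) (a : A) (hM : ∀ j : ℕ, v (a ^ j) ≤ M * s ^ j) :
    IsBddSubmultSeminorm (gaussSN v s a) := by
  obtain ⟨C, hC, hB⟩ := hv.2.2.2.2.2
  exact ⟨gaussSN_nonneg hv hs a, gaussSN_add_le hv hs a, gaussSN_neg hv hs a,
    gaussSN_mul_le hv hs a, gaussSN_one hv hs hM0 a hM,
    C, hC, fun x => (gaussSN_le_v hv hs a x).trans (hB x)⟩

/-- Construction 2 rules out the degenerate case. -/
theorem not_degenerate {v : A → ℝ} (hv : IsBddSubmultSeminorm v)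
    (hmin : ∀ w : A → ℝ, IsBddSubmultSeminorm w → (∀ a : A, w a ≤ v a) → w = v)
    {a : A} (ha : 0 < v a) {m₀ : ℕ} (hm : v (a ^ m₀) < v a ^ m₀) : False := by
  have : Nontrivial A := nontrivial_of_seminorm hv
  have hm₀ : m₀ ≠ 0 := by
    rintro rfl
    rw [pow_zero, pow_zero, v_one hv] at hm
    exact lt_irrefl _ hm
  have hm₀R : (0:ℝ) < (m₀ : ℝ) := by exact_mod_cast Nat.pos_of_ne_zero hm₀
  set θ : ℝ := max (v (a ^ m₀) / v a ^ m₀) (1 / 2) with hθdef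
  have hθ0 : 0 < θ := lt_of_lt_of_le (by norm_num) (le_max_right _ _)
  have hθhalf : 1 / 2 ≤ θ := le_max_right _ _
  have hθ1 : θ < 1 := by
    apply max_lt _ (by norm_num)
    rw [div_lt_one (by positivity)]
    exact hm
  have hθm : v (a ^ m₀) ≤ θ * v a ^ m₀ := by
    have h1 : v (a ^ m₀) / v a ^ m₀ ≤ θ := le_max_left _ _
    rw [div_le_iff₀ (by positivity : (0:ℝ) < v a ^ m₀)] at h1
    linarith [h1]
  set s : ℝ := v a * θ ^ ((m₀ : ℝ)⁻¹) with hsdef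
  have hs0 : 0 < s := mul_pos ha (Real.rpow_pos_of_pos hθ0 _)
  have hsa : s < v a := by
    have h1 : θ ^ ((m₀ : ℝ)⁻¹) < 1 := Real.rpow_lt_one hθ0.le hθ1 (by positivity)
    calc s = v a * θ ^ ((m₀ : ℝ)⁻¹) := rfl
    _ < v a * 1 := mul_lt_mul_of_pos_left h1 ha
    _ = v a := mul_one _
  -- the key growth bound
  have hM : ∀ j : ℕ, v (a ^ j) ≤ 2 * s ^ j := by
    intro j
    set q := j / m₀ with hqdef
    set r := j % m₀ with hrdef
    have hj : m₀ * q + r = j := Nat.div_add_mod j m₀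
    have hrlt : r < m₀ := Nat.mod_lt _ (Nat.pos_of_ne_zero hm₀)
    have step1 : v (a ^ j) ≤ θ ^ q * v a ^ j := by
      have e1 : a ^ j = (a ^ m₀) ^ q * a ^ r := by rw [← pow_mul, ← pow_add, hj]
      have h1 : v (a ^ j) ≤ v ((a ^ m₀) ^ q) * v (a ^ r) := by
        rw [e1]; exact v_mul_le hv _ _
      have h2 : v ((a ^ m₀) ^ q) ≤ v (a ^ m₀) ^ q := v_pow_le hv _ q
      have h3 : v (a ^ m₀) ^ q ≤ (θ * v a ^ m₀) ^ q :=
        pow_le_pow_left₀ (hv.1 _) hθm q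
      have h4 : v (a ^ r) ≤ v a ^ r := v_pow_le hv a r
      have h5 : (θ * v a ^ m₀) ^ q * v a ^ r = θ ^ q * v a ^ j := by
        rw [mul_pow, ← pow_mul, mul_assoc, ← pow_add, Nat.mul_comm m₀ q]
        rw [Nat.mul_comm q m₀, hj]
      calc v (a ^ j) ≤ v ((a ^ m₀) ^ q) * v (a ^ r) := h1
      _ ≤ (θ * v a ^ m₀) ^ q * v a ^ r := by
          apply mul_le_mul (h2.trans h3) h4 (hv.1 _) (by positivity)
      _ = θ ^ q * v a ^ j := h5
    have step2 : θ ^ q ≤ 2 * θ ^ ((m₀ : ℝ)⁻¹ * j) := by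
      have hle : (m₀ : ℝ)⁻¹ * j ≤ (q : ℝ) + 1 := by
        rw [inv_mul_le_iff₀ hm₀R]
        have : (j : ℝ) < (m₀ : ℝ) * ((q : ℝ) + 1) := by
          have h6 : j < m₀ * (q + 1) := by rw [Nat.mul_succ]; omega
          exact_mod_cast h6
        linarith
      have h1 : θ ^ ((q : ℝ) + 1) ≤ θ ^ ((m₀ : ℝ)⁻¹ * j) :=
        Real.rpow_le_rpow_of_exponent_ge hθ0 hθ1.le hle
      have h2 : θ ^ ((q : ℝ) + 1) = θ ^ q * θ := by
        rw [Real.rpow_add hθ0, Real.rpow_one, Real.rpow_natCast]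
      rw [h2] at h1
      have h3 : θ ^ q * (1 / 2) ≤ θ ^ q * θ :=
        mul_le_mul_of_nonneg_left hθhalf (pow_nonneg hθ0.le q)
      linarith
    have step3 : s ^ j = v a ^ j * θ ^ ((m₀ : ℝ)⁻¹ * j) := by
      rw [hsdef, mul_pow]
      congr 1
      rw [← Real.rpow_natCast (θ ^ ((m₀ : ℝ)⁻¹)) j, ← Real.rpow_mul hθ0.le]
    calc v (a ^ j) ≤ θ ^ q * v a ^ j := step1
    _ ≤ (2 * θ ^ ((m₀ : ℝ)⁻¹ * j)) * v a ^ j :=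
        mul_le_mul_of_nonneg_right step2 (pow_nonneg (hv.1 a) j)
    _ = 2 * s ^ j := by rw [step3]; ring
  -- build the competitor seminorm and contradict minimality
  have hw := gaussSN_isSeminorm hv hs0.le (by norm_num : (0:ℝ) < 2) a hM
  have heq := hmin (gaussSN v s a) hw (gaussSN_le_v hv hs0.le a)
  have hX : gaussSN v s a a ≤ s := by
    have h1 : (Polynomial.X : Polynomial A).eval a = a := Polynomial.eval_X
    exact (gaussSN_le_cost hv hs0.le a a Polynomial.X h1).trans_eq (cost_X hv s)
  rw [heq] at hX
  linarith

end Construction2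

end MinSemAux

/-- On a commutative Banach ring, any minimal bounded submultiplicative seminorm
is multiplicative. -/
theorem minimal_seminorm_is_multiplicative {A : Type*} [NormedCommRing A] [CompleteSpace A]
    (v : A → ℝ) (hv : IsBddSubmultSeminorm v)
    (hmin : ∀ w : A → ℝ, IsBddSubmultSeminorm w → (∀ a : A, w a ≤ v a) → w = v) :
    ∀ a b : A, v (a * b) = v a * v b := by
  intro a b
  rcases eq_or_lt_of_le (hv.1 a) with ha | ha
  · -- v a = 0
    have h2 : v a * v b = 0 := by rw [← ha]; ring
    have h3 : v (a * b) = 0 :=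
      le_antisymm ((MinSemAux.v_mul_le hv a b).trans_eq h2) (hv.1 (a * b))
    rw [h3, h2]
  · have hpm : ∀ m : ℕ, v (a ^ m) = v a ^ m := by
      intro m
      by_contra hne
      exact MinSemAux.not_degenerate hv hmin ha
        (lt_of_le_of_ne (MinSemAux.v_pow_le hv a m) hne)
    exact le_antisymm (MinSemAux.v_mul_le hv a b)
      (MinSemAux.pow_mul_case hv hmin ha hpm b)
end

section
/- Let A be a Banach ring with ‖1‖ = 1. Then the partially ordered set P(A) of bounded submultiplicative seminorms on A has a minimal element: there exists v ∈ P(A) such that every w ∈ P(A) with w(a) ≤ v(a) for all a ∈ A satisfies w = v. -/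
lemma aux_le_of_eps {x p q : ℝ} (_hp : 0 ≤ p) (_hq : 0 ≤ q)
    (h : ∀ ε : ℝ, 0 < ε → x ≤ (p + ε) * (q + ε)) : x ≤ p * q := by
  by_contra hc
  push_neg at hc
  have hcont : Filter.Tendsto (fun ε : ℝ => (p + ε) * (q + ε))
      (nhdsWithin 0 (Set.Ioi 0)) (nhds (p * q)) := by
    have : Filter.Tendsto (fun ε : ℝ => (p + ε) * (q + ε)) (nhds 0) (nhds ((p + 0) * (q + 0))) := by
      apply Filter.Tendsto.mul <;> exact (continuous_const.add continuous_id).tendsto 0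
    simpa using this.mono_left nhdsWithin_le_nhds
  have : x ≤ p * q := by
    refine ge_of_tendsto hcont ?_
    filter_upwards [self_mem_nhdsWithin] with ε hε
    exact h ε hε
  linarith

/-- The set `P(A)` of bounded submultiplicative seminorms on a Banach ring with `‖1‖ = 1`
has a minimal element with respect to the pointwise order. -/
theorem exists_minimal_bounded_submultiplicative_seminorm
    {A : Type*} [NormedRing A] [CompleteSpace A] [NormOneClass A] :
    ∃ v : A → ℝ, IsBddSubmultSeminorm v ∧
      ∀ w : A → ℝ, IsBddSubmultSeminorm w → (∀ a : A, w a ≤ v a) → w = v := by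
  -- Work in the dual order; a maximal element there is minimal.
  set S : Set ((A → ℝ)ᵒᵈ) := {v | IsBddSubmultSeminorm (OrderDual.ofDual v)} with hS
  have hnorm : IsBddSubmultSeminorm (fun a : A => ‖a‖) :=
    ⟨fun a => norm_nonneg a, fun a b => norm_add_le a b, fun a => norm_neg a,
      fun a b => norm_mul_le a b, norm_one, ⟨1, one_pos, fun a => by simp⟩⟩
  have key : ∀ c ⊆ S, IsChain (· ≤ ·) c → ∀ y ∈ c, ∃ ub ∈ S, ∀ z ∈ c, z ≤ ub := by
    intro c hcS hc y hy
    -- lower bound of a nonempty chain: the pointwise infimum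
    set g : A → ℝ := fun a => sInf ((fun v : (A → ℝ)ᵒᵈ => OrderDual.ofDual v a) '' c) with hg
    have hne : ∀ a : A, ((fun v : (A → ℝ)ᵒᵈ => OrderDual.ofDual v a) '' c).Nonempty :=
      fun a => ⟨OrderDual.ofDual y a, ⟨y, hy, rfl⟩⟩
    have hbdd : ∀ a : A, ∀ x ∈ (fun v : (A → ℝ)ᵒᵈ => OrderDual.ofDual v a) '' c, (0:ℝ) ≤ x := by
      rintro a x ⟨v, hv, rfl⟩
      exact (hcS hv).1 a
    have hg_nonneg : ∀ a, 0 ≤ g a := fun a => le_csInf (hne a) (hbdd a)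
    have hg_le : ∀ v ∈ c, ∀ a : A, g a ≤ OrderDual.ofDual v a := by
      intro v hv a
      exact csInf_le ⟨0, hbdd a⟩ ⟨v, hv, rfl⟩
    -- any two elements of the chain have a common lower bound in the chain
    have hmin : ∀ v ∈ c, ∀ w ∈ c, ∃ u ∈ c,
        (∀ a : A, OrderDual.ofDual u a ≤ OrderDual.ofDual v a) ∧
        (∀ a : A, OrderDual.ofDual u a ≤ OrderDual.ofDual w a) := by
      intro v hv w hw
      rcases eq_or_ne v w with rfl | hne'
      · exact ⟨v, hv, fun a => le_rfl, fun a => le_rfl⟩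
      rcases hc hv hw hne' with h | h
      · exact ⟨w, hw, fun a => h a, fun a => le_rfl⟩
      · exact ⟨v, hv, fun a => le_rfl, fun a => h a⟩
    -- approximate infimum
    have happrox : ∀ (a : A) (ε : ℝ), 0 < ε → ∃ v ∈ c, OrderDual.ofDual v a < g a + ε := by
      intro a ε hε
      obtain ⟨x, ⟨v, hv, rfl⟩, hx⟩ := Real.lt_sInf_add_pos (hne a) hε
      exact ⟨v, hv, hx⟩
    have hgS : IsBddSubmultSeminorm g := by
      refine ⟨hg_nonneg, ?_, ?_, ?_, ?_, ?_⟩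
      · -- triangle
        intro a b
        refine le_of_forall_pos_le_add fun ε hε => ?_
        obtain ⟨v, hv, hva⟩ := happrox a (ε/2) (by linarith)
        obtain ⟨w, hw, hwb⟩ := happrox b (ε/2) (by linarith)
        obtain ⟨u, hu, huv, huw⟩ := hmin v hv w hw
        have h1 := (hcS hu).2.1 a b
        calc g (a + b) ≤ OrderDual.ofDual u (a + b) := hg_le u hu _
          _ ≤ OrderDual.ofDual u a + OrderDual.ofDual u b := h1
          _ ≤ OrderDual.ofDual v a + OrderDual.ofDual w b := add_le_add (huv a) (huw b)
          _ ≤ (g a + ε/2) + (g b + ε/2) := add_le_add hva.le hwb.le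
          _ = g a + g b + ε := by ring
      · -- neg
        intro a
        have : (fun v : (A → ℝ)ᵒᵈ => OrderDual.ofDual v (-a)) '' c
            = (fun v : (A → ℝ)ᵒᵈ => OrderDual.ofDual v a) '' c := by
          apply Set.image_congr
          intro v hv
          exact (hcS hv).2.2.1 a
        simp only [hg, this]
      · -- submultiplicative
        intro a b
        refine aux_le_of_eps (hg_nonneg a) (hg_nonneg b) fun ε hε => ?_
        obtain ⟨v, hv, hva⟩ := happrox a ε hε
        obtain ⟨w, hw, hwb⟩ := happrox b ε hε
        obtain ⟨u, hu, huv, huw⟩ := hmin v hv w hw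
        have h1 := (hcS hu).2.2.2.1 a b
        have hun : ∀ x : A, 0 ≤ OrderDual.ofDual u x := (hcS hu).1
        calc g (a * b) ≤ OrderDual.ofDual u (a * b) := hg_le u hu _
          _ ≤ OrderDual.ofDual u a * OrderDual.ofDual u b := h1
          _ ≤ (g a + ε) * (g b + ε) := by
              apply mul_le_mul ((huv a).trans hva.le) ((huw b).trans hwb.le) (hun b)
              exact le_trans (hg_nonneg a) (by linarith)
      · -- value at 1
        have h1 : ∀ v ∈ c, OrderDual.ofDual v (1:A) = 1 := fun v hv => (hcS hv).2.2.2.2.1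
        have : (fun v : (A → ℝ)ᵒᵈ => OrderDual.ofDual v (1:A)) '' c = {1} := by
          apply Set.eq_singleton_iff_nonempty_unique_mem.mpr
          exact ⟨hne 1, by rintro x ⟨v, hv, rfl⟩; exact h1 v hv⟩
        simp [hg, this]
      · -- bounded
        obtain ⟨C, hC, hCb⟩ := (hcS hy).2.2.2.2.2
        exact ⟨C, hC, fun a => (hg_le y hy a).trans (hCb a)⟩
    exact ⟨OrderDual.toDual g, hgS, fun z hz => fun a => hg_le z hz a⟩
  obtain ⟨m, -, hmS, hmax⟩ := zorn_le_nonempty₀ (α := (A → ℝ)ᵒᵈ) S key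
    (OrderDual.toDual (fun a : A => ‖a‖)) hnorm
  refine ⟨OrderDual.ofDual m, hmS, fun w hw hwm => ?_⟩
  have hle : m ≤ OrderDual.toDual w := fun a => hwm a
  have h2 := hmax hw hle
  funext a
  exact le_antisymm (hwm a) (h2 a)
end

section
/- Let K be a non-archimedean valuation field, n a natural number, and r : Fin n → ℝ with r(i) > 0 for all i. For f in the monoid algebra of the free monoid on n generators over K (equivalently, the free associative algebra K⟨T₁,…,Tₙ⟩, with f a finitely supported function from words w in the alphabet Fin n to K), define the Gauss norm ‖f‖_r = sup over words w of ‖f(w)‖·∏ r(i), the product taken over all letters i of w (counted with multiplicity). Then the Gauss norm is multiplicative: ‖f·g‖_r = ‖f‖_r·‖g‖_r for all f, g, where the product is the convolution product of the monoid algebra (concatenation of words). -/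
/-- The Gauss norm of multiradius `r` on the free associative algebra
`K⟨T₁,…,Tₙ⟩ = MonoidAlgebra K (FreeMonoid (Fin n))`: the supremum over all words `w`
of `‖f w‖` times the product of `r i` over the letters `i` of `w`. -/
noncomputable def gaussNorm {K : Type*} [NormedField K] {n : ℕ} (r : Fin n → ℝ)
    (f : MonoidAlgebra K (FreeMonoid (Fin n))) : ℝ :=
  ⨆ w : FreeMonoid (Fin n), ‖f.coeff w‖ * ((FreeMonoid.toList w).map r).prod

namespace GaussAux


variable {K : Type*} [NormedField K] {n : ℕ}

/-- The weight of a word. -/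
noncomputable def W (r : Fin n → ℝ) (w : FreeMonoid (Fin n)) : ℝ :=
  ((FreeMonoid.toList w).map r).prod

lemma W_pos {r : Fin n → ℝ} (hr : ∀ i, 0 < r i) (w : FreeMonoid (Fin n)) : 0 < W r w := by
  refine List.prod_pos ?_
  intro a ha
  obtain ⟨i, _, rfl⟩ := List.mem_map.mp ha
  exact hr i

lemma W_mul (r : Fin n → ℝ) (u v : FreeMonoid (Fin n)) : W r (u * v) = W r u * W r v := by
  simp [W, FreeMonoid.toList_mul]

lemma bddAbove_range (r : Fin n → ℝ) (f : MonoidAlgebra K (FreeMonoid (Fin n))) :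
    BddAbove (Set.range fun w : FreeMonoid (Fin n) => ‖f.coeff w‖ * W r w) := by
  classical
  refine BddAbove.mono ?_
    (((f.coeff.support.image (fun w => ‖f.coeff w‖ * W r w)) : Finset ℝ).finite_toSet.insert 0).bddAbove
  rintro x ⟨w, rfl⟩
  by_cases hw : f.coeff w = 0
  · simp [hw]
  · exact Set.mem_insert_of_mem _ (by
      simpa using Finset.mem_image_of_mem _ (Finsupp.mem_support_iff.mpr hw))

lemma le_gaussNorm (r : Fin n → ℝ) (f : MonoidAlgebra K (FreeMonoid (Fin n)))
    (w : FreeMonoid (Fin n)) : ‖f.coeff w‖ * W r w ≤ _root_.gaussNorm r f :=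
  le_ciSup (bddAbove_range r f) w

lemma gaussNorm_nonneg {r : Fin n → ℝ} (hr : ∀ i, 0 < r i)
    (f : MonoidAlgebra K (FreeMonoid (Fin n))) : 0 ≤ _root_.gaussNorm r f :=
  Real.iSup_nonneg fun w => mul_nonneg (norm_nonneg _) (W_pos hr w).le

/-- For a nonzero `f`, there is a maximizer of the Gauss norm of maximal length. -/
lemma exists_max {r : Fin n → ℝ} (hr : ∀ i, 0 < r i)
    {f : MonoidAlgebra K (FreeMonoid (Fin n))} (hf : f ≠ 0) :
    ∃ u : FreeMonoid (Fin n), f.coeff u ≠ 0 ∧ ‖f.coeff u‖ * W r u = _root_.gaussNorm r f ∧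
      ∀ w, ‖f.coeff w‖ * W r w = _root_.gaussNorm r f →
        (FreeMonoid.toList w).length ≤ (FreeMonoid.toList u).length := by
  classical
  have hsupp : f.coeff.support.Nonempty := Finsupp.support_nonempty_iff.mpr
    (fun h => hf (MonoidAlgebra.coeff_injective (by simpa using h)))
  obtain ⟨u', hu'mem, hu'max⟩ :=
    Finset.exists_max_image f.coeff.support (fun w => ‖f.coeff w‖ * W r w) hsupp
  have hMeq : _root_.gaussNorm r f = ‖f.coeff u'‖ * W r u' := by
    refine le_antisymm (ciSup_le fun w => ?_) (le_gaussNorm r f u')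
    by_cases hw : f.coeff w = 0
    · simp only [hw, norm_zero, zero_mul]
      exact mul_nonneg (norm_nonneg _) (W_pos hr u').le
    · exact hu'max w (Finsupp.mem_support_iff.mpr hw)
  have hMpos : 0 < _root_.gaussNorm r f := by
    rw [hMeq]
    exact mul_pos (norm_pos_iff.mpr (Finsupp.mem_support_iff.mp hu'mem)) (W_pos hr u')
  set T : Finset (FreeMonoid (Fin n)) :=
    f.coeff.support.filter (fun w => ‖f.coeff w‖ * W r w = _root_.gaussNorm r f) with hT
  have hu'T : u' ∈ T := Finset.mem_filter.mpr ⟨hu'mem, hMeq.symm⟩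
  obtain ⟨u, huT, hulen⟩ :=
    Finset.exists_max_image T (fun w => (FreeMonoid.toList w).length) ⟨u', hu'T⟩
  obtain ⟨humem, humax⟩ := Finset.mem_filter.mp huT
  refine ⟨u, Finsupp.mem_support_iff.mp humem, humax, fun w hw => ?_⟩
  have hwsupp : w ∈ f.coeff.support := by
    rw [Finsupp.mem_support_iff]
    intro h0
    rw [h0] at hw
    simp only [norm_zero, zero_mul] at hw
    exact hMpos.ne hw
  exact hulen w (Finset.mem_filter.mpr ⟨hwsupp, hw⟩)

end GaussAux

/-- The Gauss norm on the free associative polynomial algebra over a non-archimedean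
valuation field is multiplicative. -/
theorem gaussNorm_mul {K : Type*} [NormedField K] [IsUltrametricDist K] {n : ℕ}
    (r : Fin n → ℝ) (hr : ∀ i, 0 < r i)
    (f g : MonoidAlgebra K (FreeMonoid (Fin n))) :
    gaussNorm r (f * g) = gaussNorm r f * gaussNorm r g := by
  classical
  open GaussAux in
  by_cases hf : f = 0
  · simp [hf, gaussNorm]
  by_cases hg : g = 0
  · simp [hg, gaussNorm]
  obtain ⟨u, hu0, huM, hulen⟩ := GaussAux.exists_max hr hf
  obtain ⟨v, hv0, hvM, hvlen⟩ := GaussAux.exists_max hr hg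
  have hMf0 : 0 ≤ gaussNorm r f := GaussAux.gaussNorm_nonneg hr f
  have hMg0 : 0 ≤ gaussNorm r g := GaussAux.gaussNorm_nonneg hr g
  have hMfpos : 0 < gaussNorm r f := by
    rw [← huM]; exact mul_pos (norm_pos_iff.mpr hu0) (GaussAux.W_pos hr u)
  have hMgpos : 0 < gaussNorm r g := by
    rw [← hvM]; exact mul_pos (norm_pos_iff.mpr hv0) (GaussAux.W_pos hr v)
  have hmul : ∀ x : FreeMonoid (Fin n), (f * g).coeff x = ∑ p ∈ f.coeff.support ×ˢ g.coeff.support,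
      (if p.1 * p.2 = x then f.coeff p.1 * g.coeff p.2 else 0) := by
    intro x
    rw [MonoidAlgebra.coeff_mul, Finset.sum_product]
    rfl
  refine le_antisymm ?_ ?_
  · -- upper bound
    refine ciSup_le fun x => ?_
    rw [hmul x]
    obtain ⟨p, -, hple⟩ := IsUltrametricDist.exists_norm_finset_sum_le
      (f.coeff.support ×ˢ g.coeff.support) (fun p => if p.1 * p.2 = x then f.coeff p.1 * g.coeff p.2 else 0)
    refine le_trans (mul_le_mul_of_nonneg_right hple (GaussAux.W_pos hr x).le) ?_
    by_cases hpx : p.1 * p.2 = x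
    · rw [if_pos hpx]
      have hWx : GaussAux.W r x = GaussAux.W r p.1 * GaussAux.W r p.2 := by
        rw [← hpx, GaussAux.W_mul]
      have : ‖f.coeff p.1 * g.coeff p.2‖ * GaussAux.W r x
          = (‖f.coeff p.1‖ * GaussAux.W r p.1) * (‖g.coeff p.2‖ * GaussAux.W r p.2) := by
        rw [hWx, norm_mul]; ring
      show ‖f.coeff p.1 * g.coeff p.2‖ * GaussAux.W r x ≤ _
      rw [this]
      exact mul_le_mul (GaussAux.le_gaussNorm r f p.1) (GaussAux.le_gaussNorm r g p.2)
        (mul_nonneg (norm_nonneg _) (GaussAux.W_pos hr p.2).le) hMf0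
    · rw [if_neg hpx]
      simpa using mul_nonneg hMf0 hMg0
  · -- lower bound
    set w₀ := u * v with hw₀
    set P := f.coeff.support ×ˢ g.coeff.support with hP
    set F : FreeMonoid (Fin n) × FreeMonoid (Fin n) → K :=
      fun p => if p.1 * p.2 = w₀ then f.coeff p.1 * g.coeff p.2 else 0 with hF
    have hp₀ : (u, v) ∈ P := Finset.mem_product.mpr
      ⟨Finsupp.mem_support_iff.mpr hu0, Finsupp.mem_support_iff.mpr hv0⟩
    have hFp₀ : F (u, v) = f.coeff u * g.coeff v := if_pos rfl
    have hfugv : 0 < ‖f.coeff u * g.coeff v‖ := by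
      rw [norm_mul]
      exact mul_pos (norm_pos_iff.mpr hu0) (norm_pos_iff.mpr hv0)
    -- key strict inequality
    have hkey : ∀ p ∈ P.erase (u, v), ‖F p‖ < ‖f.coeff u * g.coeff v‖ := by
      rintro ⟨a, b⟩ hp
      obtain ⟨hpne, hpP⟩ := Finset.mem_erase.mp hp
      obtain ⟨haf, hbg⟩ := Finset.mem_product.mp hpP
      have ha0 : f.coeff a ≠ 0 := Finsupp.mem_support_iff.mp haf
      have hb0 : g.coeff b ≠ 0 := Finsupp.mem_support_iff.mp hbg
      by_cases hab : a * b = w₀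
      · rw [hF]
        simp only [if_pos hab]
        have hW : GaussAux.W r w₀ = GaussAux.W r a * GaussAux.W r b := by
          rw [← hab, GaussAux.W_mul]
        have hWw : 0 < GaussAux.W r w₀ := GaussAux.W_pos hr w₀
        rw [← mul_lt_mul_iff_of_pos_right hWw]
        have hL : ‖f.coeff a * g.coeff b‖ * GaussAux.W r w₀
            = (‖f.coeff a‖ * GaussAux.W r a) * (‖g.coeff b‖ * GaussAux.W r b) := by
          rw [hW, norm_mul]; ring
        have hR : ‖f.coeff u * g.coeff v‖ * GaussAux.W r w₀
            = gaussNorm r f * gaussNorm r g := by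
          rw [hw₀, GaussAux.W_mul, norm_mul, ← huM, ← hvM]; ring
        rw [hL, hR]
        -- list decomposition
        have hlist : FreeMonoid.toList a ++ FreeMonoid.toList b
            = FreeMonoid.toList u ++ FreeMonoid.toList v := by
          rw [← FreeMonoid.toList_mul, ← FreeMonoid.toList_mul, hab, hw₀]
        rcases List.append_eq_append_iff.mp hlist with ⟨c, hc1, hc2⟩ | ⟨c, hc1, hc2⟩
        · -- u = a ++ c, b = c ++ v : b at least as long as v
          rcases List.eq_nil_or_concat c with rfl | -
          · exfalso
            apply hpne
            have ha : a = u := FreeMonoid.toList.injective (by simpa using hc1.symm)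
            have hb : b = v := FreeMonoid.toList.injective (by simpa using hc2)
            rw [ha, hb]
          · -- c ≠ [] so b strictly longer than v
            have hclen : c ≠ [] := by
              rintro rfl
              apply hpne
              have ha : a = u := FreeMonoid.toList.injective (by simpa using hc1.symm)
              have hb : b = v := FreeMonoid.toList.injective (by simpa using hc2)
              rw [ha, hb]
            have hblen : (FreeMonoid.toList v).length < (FreeMonoid.toList b).length := by
              rw [hc2, List.length_append]
              have : 0 < c.length := List.length_pos_iff.mpr hclen
              omega
            have hbstrict : ‖g.coeff b‖ * GaussAux.W r b < gaussNorm r g := by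
              rcases lt_or_eq_of_le (GaussAux.le_gaussNorm r g b) with h | h
              · exact h
              · exact absurd (hvlen b h) (not_le.mpr hblen)
            refine mul_lt_mul' (GaussAux.le_gaussNorm r f a) hbstrict
              (mul_nonneg (norm_nonneg _) (GaussAux.W_pos hr b).le) hMfpos
        · -- a = u ++ c, v = c ++ b : a at least as long as u
          have hclen : c ≠ [] := by
            rintro rfl
            apply hpne
            have ha : a = u := FreeMonoid.toList.injective (by simpa using hc1)
            have hb : b = v := FreeMonoid.toList.injective (by simpa using hc2.symm)
            rw [ha, hb]
          have halen : (FreeMonoid.toList u).length < (FreeMonoid.toList a).length := by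
            rw [hc1, List.length_append]
            have : 0 < c.length := List.length_pos_iff.mpr hclen
            omega
          have hastrict : ‖f.coeff a‖ * GaussAux.W r a < gaussNorm r f := by
            rcases lt_or_eq_of_le (GaussAux.le_gaussNorm r f a) with h | h
            · exact h
            · exact absurd (hulen a h) (not_le.mpr halen)
          have hbpos : 0 < ‖g.coeff b‖ * GaussAux.W r b :=
            mul_pos (norm_pos_iff.mpr hb0) (GaussAux.W_pos hr b)
          exact mul_lt_mul hastrict (GaussAux.le_gaussNorm r g b) hbpos hMf0
      · rw [hF]
        simp only [if_neg hab, norm_zero]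
        exact hfugv
    have hsum : (f * g).coeff w₀ = F (u, v) + ∑ p ∈ P.erase (u, v), F p := by
      rw [hmul w₀, ← Finset.add_sum_erase _ _ hp₀]
    have hrest : ‖∑ p ∈ P.erase (u, v), F p‖ < ‖f.coeff u * g.coeff v‖ := by
      rcases (P.erase (u, v)).eq_empty_or_nonempty with he | hne
      · rw [he]
        simpa using hfugv
      · obtain ⟨i, hi, hle⟩ := IsUltrametricDist.exists_norm_finset_sum_le_of_nonempty hne F
        exact hle.trans_lt (hkey i hi)
    have hnorm : ‖(f * g).coeff w₀‖ = ‖f.coeff u * g.coeff v‖ := by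
      rw [hsum, hFp₀]
      rw [IsUltrametricDist.norm_add_eq_max_of_norm_ne_norm (by exact hrest.ne')]
      exact max_eq_left hrest.le
    have hle := GaussAux.le_gaussNorm r (f * g) w₀
    have heq : ‖(f * g).coeff w₀‖ * GaussAux.W r w₀ = gaussNorm r f * gaussNorm r g := by
      rw [hnorm, hw₀, GaussAux.W_mul, norm_mul, ← huM, ← hvM]; ring
    rw [← heq]
    exact hle
end

section
/- Let K be a non-archimedean valuation field, q ∈ Kˣ a unit with ‖q‖ = 1, n a natural number, and r : Fin n → ℝ with r(i) > 0 for all i. Represent elements of the quantum Tate algebra K{T₁,…,Tₙ}_{q,r} by their coefficient functions a : (Fin n →₀ ℕ) → K on the standard monomials T^l = T₁^{l₁}⋯Tₙ^{lₙ}, subject to the decay condition that ‖a(l)‖·∏ᵢ r(i)^{l(i)} tends to 0 along the cofinite filter on Fin n →₀ ℕ. The product of two such elements, written in the standard monomial basis of the algebra with relations TᵢTⱼ = q·TⱼTᵢ for i < j, has coefficients c(k) = Σ_{l+m=k} q^{−e(l,m)}·a(l)·b(m), where e(l,m) = Σ_{(i,j), j<i} l(i)·m(j) and the (finite) sum is over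 all pairs (l,m) of multi-indices with l+m=k. Then: (i) if a and b satisfy the decay condition, so does c; and (ii) the Gauss norm is multiplicative: ⨆_k ‖c(k)‖·∏ᵢ r(i)^{k(i)} = (⨆_l ‖a(l)‖·∏ᵢ r(i)^{l(i)})·(⨆_m ‖b(m)‖·∏ᵢ r(i)^{m(i)}). -/
open Filter

/-- The commutation exponent: `e(l,m) = ∑_{(i,j), j < i} l i * m j`. -/
def commExponent {n : ℕ} (l m : Fin n →₀ ℕ) : ℕ :=
  ∑ i : Fin n, ∑ j : Fin n, if j < i then l i * m j else 0

private lemma exists_eq_ciSup_of_tendsto {ι : Type*} [Nonempty ι] {f : ι → ℝ}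
    (hf : Tendsto f cofinite (nhds 0)) (hpos : 0 < ⨆ i, f i) : ∃ i, f i = ⨆ i, f i := by
  have hbdd : BddAbove (Set.range f) := hf.bddAbove_range_of_cofinite
  set A := ⨆ i, f i with hA
  have h2 : ∀ᶠ l in cofinite, f l < A / 2 := hf.eventually (gt_mem_nhds (by linarith))
  have hSfin : {l | ¬ f l < A / 2}.Finite := eventually_cofinite.mp h2
  have hSne : {l | ¬ f l < A / 2}.Nonempty := by
    by_contra hne
    have hall : ∀ l, f l < A / 2 := fun l => by
      by_contra hl; exact hne ⟨l, hl⟩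
    have : A ≤ A / 2 := ciSup_le fun l => (hall l).le
    linarith
  obtain ⟨i₀, hi₀, hmax⟩ := Set.exists_max_image _ f hSfin hSne
  refine ⟨i₀, le_antisymm (le_ciSup hbdd i₀) (ciSup_le fun l => ?_)⟩
  by_cases hl : l ∈ {l | ¬ f l < A / 2}
  · exact hmax l hl
  · simp only [Set.mem_setOf_eq, not_not] at hl
    have hge : A / 2 ≤ f i₀ := not_lt.mp hi₀
    linarith

private lemma gauss_main {K : Type*} [NormedField K] [IsUltrametricDist K] {n : ℕ}
    (R : (Fin n →₀ ℕ) → ℝ) (hRpos : ∀ l, 0 < R l)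
    (hRadd : ∀ l m, R (l + m) = R l * R m)
    (u : (Fin n →₀ ℕ) × (Fin n →₀ ℕ) → K) (hu : ∀ p, ‖u p‖ = 1)
    (a b c : (Fin n →₀ ℕ) → K)
    (F G H : (Fin n →₀ ℕ) → ℝ)
    (hF : ∀ l, F l = ‖a l‖ * R l) (hG : ∀ m, G m = ‖b m‖ * R m)
    (hH : ∀ k, H k = ‖c k‖ * R k)
    (ha : Tendsto F cofinite (nhds 0))
    (hb : Tendsto G cofinite (nhds 0))
    (hc : ∀ k, c k = ∑ p ∈ Finset.HasAntidiagonal.antidiagonal k, u p * a p.1 * b p.2) :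
    Tendsto H cofinite (nhds 0) ∧ (⨆ k, H k) = (⨆ l, F l) * (⨆ m, G m) := by
  classical
  have hFnn : ∀ l, 0 ≤ F l := fun l => (hF l).symm ▸ mul_nonneg (norm_nonneg _) (hRpos l).le
  have hGnn : ∀ m, 0 ≤ G m := fun m => (hG m).symm ▸ mul_nonneg (norm_nonneg _) (hRpos m).le
  have hHnn : ∀ k, 0 ≤ H k := fun k => (hH k).symm ▸ mul_nonneg (norm_nonneg _) (hRpos k).le
  have hFbdd : BddAbove (Set.range F) := ha.bddAbove_range_of_cofinite
  have hGbdd : BddAbove (Set.range G) := hb.bddAbove_range_of_cofinite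
  set A := ⨆ l, F l with hA
  set B := ⨆ m, G m with hB
  have hFle : ∀ l, F l ≤ A := fun l => le_ciSup hFbdd l
  have hGle : ∀ m, G m ≤ B := fun m => le_ciSup hGbdd m
  have hAnn : 0 ≤ A := (hFnn 0).trans (hFle 0)
  have hBnn : 0 ≤ B := (hGnn 0).trans (hGle 0)
  have hterm : ∀ p : (Fin n →₀ ℕ) × (Fin n →₀ ℕ),
      ‖u p * a p.1 * b p.2‖ = ‖a p.1‖ * ‖b p.2‖ := fun p => by
    rw [norm_mul, norm_mul, hu, one_mul]
  have htermR : ∀ p : (Fin n →₀ ℕ) × (Fin n →₀ ℕ),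
      ‖u p * a p.1 * b p.2‖ * R (p.1 + p.2) = F p.1 * G p.2 := fun p => by
    rw [hterm, hRadd, hF, hG]; ring
  -- master bound
  have hmaster : ∀ k, ∃ p ∈ Finset.HasAntidiagonal.antidiagonal k, H k ≤ F p.1 * G p.2 := by
    intro k
    have hne : (Finset.HasAntidiagonal.antidiagonal k).Nonempty := ⟨(0, k), by simp⟩
    obtain ⟨p, hp, hle⟩ := IsUltrametricDist.exists_norm_finset_sum_le_of_nonempty hne
      (fun p => u p * a p.1 * b p.2)
    refine ⟨p, hp, ?_⟩
    have hpk : p.1 + p.2 = k := Finset.HasAntidiagonal.mem_antidiagonal.mp hp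
    have h1 : ‖c k‖ ≤ ‖u p * a p.1 * b p.2‖ := by rw [hc k]; exact hle
    have h2 : ‖c k‖ * R k ≤ ‖u p * a p.1 * b p.2‖ * R k :=
      mul_le_mul_of_nonneg_right h1 (hRpos k).le
    have h3 := htermR p
    rw [hpk] at h3
    rw [hH]
    exact h2.trans_eq h3
  -- part (i)
  have hdecay : Tendsto H cofinite (nhds 0) := by
    rw [NormedAddCommGroup.tendsto_nhds_zero]
    intro ε hε
    have hB1 : (0:ℝ) < B + 1 := by linarith
    have hA1 : (0:ℝ) < A + 1 := by linarith
    have hεB : 0 < ε / (B + 1) := div_pos hε hB1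
    have hεA : 0 < ε / (A + 1) := div_pos hε hA1
    have hSF : {l | ¬ F l < ε / (B + 1)}.Finite :=
      eventually_cofinite.mp (ha.eventually (gt_mem_nhds hεB))
    have hSG : {m | ¬ G m < ε / (A + 1)}.Finite :=
      eventually_cofinite.mp (hb.eventually (gt_mem_nhds hεA))
    have hbadfin : ((fun p : (Fin n →₀ ℕ) × (Fin n →₀ ℕ) => p.1 + p.2) ''
        ({l | ¬ F l < ε / (B + 1)} ×ˢ {m | ¬ G m < ε / (A + 1)})).Finite :=
      (hSF.prod hSG).image _
    rw [eventually_cofinite]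
    refine hbadfin.subset ?_
    intro k hk
    simp only [Set.mem_setOf_eq, not_lt] at hk
    by_contra hkbad
    obtain ⟨p, hp, hple⟩ := hmaster k
    have hpk : p.1 + p.2 = k := Finset.HasAntidiagonal.mem_antidiagonal.mp hp
    have hnormH : ‖H k‖ = H k := Real.norm_of_nonneg (hHnn k)
    by_cases h1 : F p.1 < ε / (B + 1)
    · have hsmall : F p.1 * G p.2 < ε := by
        calc F p.1 * G p.2 ≤ F p.1 * (B + 1) :=
              mul_le_mul_of_nonneg_left (by linarith [hGle p.2]) (hFnn p.1)
          _ < (ε / (B + 1)) * (B + 1) := mul_lt_mul_of_pos_right h1 hB1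
          _ = ε := div_mul_cancel₀ ε hB1.ne'
      rw [hnormH] at hk
      linarith [hple]
    · by_cases h2 : G p.2 < ε / (A + 1)
      · have hsmall : F p.1 * G p.2 < ε := by
          calc F p.1 * G p.2 ≤ (A + 1) * G p.2 :=
                mul_le_mul_of_nonneg_right (by linarith [hFle p.1]) (hGnn p.2)
            _ < (A + 1) * (ε / (A + 1)) := mul_lt_mul_of_pos_left h2 hA1
            _ = ε := by rw [mul_comm]; exact div_mul_cancel₀ ε hA1.ne'
        rw [hnormH] at hk
        linarith [hple]
      · exact hkbad ⟨p, ⟨h1, h2⟩, hpk⟩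
  have hHbdd : BddAbove (Set.range H) := hdecay.bddAbove_range_of_cofinite
  refine ⟨hdecay, le_antisymm ?_ ?_⟩
  · refine ciSup_le fun k => ?_
    obtain ⟨p, hp, hple⟩ := hmaster k
    exact hple.trans (mul_le_mul (hFle p.1) (hGle p.2) (hGnn p.2) hAnn)
  -- lower bound
  rcases eq_or_lt_of_le hAnn with hA0 | hApos
  · -- A = 0
    have hzero : ∀ l, a l = 0 := by
      intro l
      have h0 : F l = 0 := le_antisymm (hA0 ▸ hFle l) (hFnn l)
      rw [hF] at h0
      rcases mul_eq_zero.mp h0 with h | h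
      · exact norm_eq_zero.mp h
      · exact absurd h (hRpos l).ne'
    have hH0 : ∀ k, H k = 0 := by
      intro k
      have hck : c k = 0 := by
        rw [hc k]
        exact Finset.sum_eq_zero fun p _ => by rw [hzero p.1, mul_zero, zero_mul]
      rw [hH, hck, norm_zero, zero_mul]
    rw [← hA0, zero_mul]
    exact le_ciSup_of_le hHbdd 0 (hHnn 0)
  rcases eq_or_lt_of_le hBnn with hB0 | hBpos
  · have hzero : ∀ m, b m = 0 := by
      intro m
      have h0 : G m = 0 := le_antisymm (hB0 ▸ hGle m) (hGnn m)
      rw [hG] at h0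
      rcases mul_eq_zero.mp h0 with h | h
      · exact norm_eq_zero.mp h
      · exact absurd h (hRpos m).ne'
    rw [← hB0, mul_zero]
    exact le_ciSup_of_le hHbdd 0 (hHnn 0)
  -- A, B > 0 : Gauss argument
  have hAttF : {l | F l = A}.Finite := by
    refine (eventually_cofinite.mp (ha.eventually (gt_mem_nhds hApos))).subset ?_
    intro l hl
    simp only [Set.mem_setOf_eq] at hl ⊢
    rw [hl]; exact lt_irrefl A
  have hAttG : {m | G m = B}.Finite := by
    refine (eventually_cofinite.mp (hb.eventually (gt_mem_nhds hBpos))).subset ?_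
    intro m hm
    simp only [Set.mem_setOf_eq] at hm ⊢
    rw [hm]; exact lt_irrefl B
  obtain ⟨l₁, hl₁⟩ := exists_eq_ciSup_of_tendsto ha hApos
  obtain ⟨m₁, hm₁⟩ := exists_eq_ciSup_of_tendsto hb hBpos
  obtain ⟨l₀, hl₀mem, hl₀min⟩ := Set.exists_min_image _ toLex hAttF ⟨l₁, hl₁⟩
  obtain ⟨m₀, hm₀mem, hm₀min⟩ := Set.exists_min_image _ toLex hAttG ⟨m₁, hm₁⟩
  have hFl₀ : F l₀ = A := hl₀mem
  have hGm₀ : G m₀ = B := hm₀mem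
  set k₀ := l₀ + m₀ with hk₀
  have hmem : (l₀, m₀) ∈ Finset.HasAntidiagonal.antidiagonal k₀ := Finset.HasAntidiagonal.mem_antidiagonal.mpr rfl
  have hrest : ∀ p ∈ (Finset.HasAntidiagonal.antidiagonal k₀).erase (l₀, m₀), F p.1 * G p.2 < A * B := by
    intro p hp
    obtain ⟨hpne, hpmem⟩ := Finset.mem_erase.mp hp
    have hpk : p.1 + p.2 = l₀ + m₀ := Finset.HasAntidiagonal.mem_antidiagonal.mp hpmem
    have hlex : toLex p.1 + toLex p.2 = toLex l₀ + toLex m₀ := congrArg toLex hpk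
    have hne1 : toLex p.1 ≠ toLex l₀ := by
      intro h
      apply hpne
      have h2 : toLex p.2 = toLex m₀ := by
        apply add_left_cancel (a := toLex l₀)
        rw [h] at hlex; exact hlex
      exact Prod.ext (h : p.1 = l₀) (h2 : p.2 = m₀)
    rcases lt_or_gt_of_ne hne1 with hlt | hgt
    · have hFp : F p.1 < A := by
        rcases lt_or_eq_of_le (hFle p.1) with h | h
        · exact h
        · exact absurd hlt (not_lt.mpr (hl₀min p.1 h))
      calc F p.1 * G p.2 ≤ F p.1 * B := mul_le_mul_of_nonneg_left (hGle p.2) (hFnn p.1)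
        _ < A * B := mul_lt_mul_of_pos_right hFp hBpos
    · have hlt2 : toLex p.2 < toLex m₀ := by
        have h3 : toLex l₀ + toLex p.2 < toLex p.1 + toLex p.2 := add_lt_add_left hgt _
        rw [hlex] at h3
        exact lt_of_add_lt_add_left h3
      have hGp : G p.2 < B := by
        rcases lt_or_eq_of_le (hGle p.2) with h | h
        · exact h
        · exact absurd hlt2 (not_lt.mpr (hm₀min p.2 h))
      calc F p.1 * G p.2 ≤ A * G p.2 := mul_le_mul_of_nonneg_right (hFle p.1) (hGnn p.2)
        _ < A * B := mul_lt_mul_of_pos_left hGp hApos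
  have hsplit : c k₀ = (u (l₀, m₀) * a l₀ * b m₀) +
      ∑ p ∈ (Finset.HasAntidiagonal.antidiagonal k₀).erase (l₀, m₀), u p * a p.1 * b p.2 := by
    rw [hc k₀, ← Finset.add_sum_erase _ _ hmem]
  have hdomR : ‖u (l₀, m₀) * a l₀ * b m₀‖ * R k₀ = A * B := by
    have h1 := htermR (l₀, m₀)
    rw [hk₀]
    rw [h1, hFl₀, hGm₀]
  have hrestnorm : ‖∑ p ∈ (Finset.HasAntidiagonal.antidiagonal k₀).erase (l₀, m₀),
      u p * a p.1 * b p.2‖ * R k₀ < A * B := by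
    rcases Finset.eq_empty_or_nonempty ((Finset.HasAntidiagonal.antidiagonal k₀).erase (l₀, m₀)) with he | hne
    · rw [he, Finset.sum_empty, norm_zero, zero_mul]
      exact mul_pos hApos hBpos
    · obtain ⟨p, hp, hle⟩ := IsUltrametricDist.exists_norm_finset_sum_le_of_nonempty hne
        (fun p => u p * a p.1 * b p.2)
      have hpk : p.1 + p.2 = k₀ := Finset.HasAntidiagonal.mem_antidiagonal.mp (Finset.mem_of_mem_erase hp)
      refine lt_of_le_of_lt (mul_le_mul_of_nonneg_right hle (hRpos k₀).le) ?_
      have h1 := htermR p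
      rw [hpk] at h1
      rw [h1]
      exact hrest p hp
  have hlt : ‖∑ p ∈ (Finset.HasAntidiagonal.antidiagonal k₀).erase (l₀, m₀), u p * a p.1 * b p.2‖ <
      ‖u (l₀, m₀) * a l₀ * b m₀‖ :=
    lt_of_mul_lt_mul_right (by rw [hdomR]; exact hrestnorm) (hRpos k₀).le
  have hck : ‖c k₀‖ = ‖u (l₀, m₀) * a l₀ * b m₀‖ := by
    rw [hsplit, IsUltrametricDist.norm_add_eq_max_of_norm_ne_norm hlt.ne', max_eq_left hlt.le]
  have hHk₀ : H k₀ = A * B := by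
    rw [hH, hck, hdomR]
  rw [← hHk₀]
  exact le_ciSup hHbdd k₀

/-- Product coefficients and multiplicativity of the Gauss norm in the quantum Tate
algebra `K{T₁,…,Tₙ}_{q,r}` (variables with `TᵢTⱼ = q TⱼTᵢ` for `i < j`): if the
coefficient functions `a, b` satisfy the decay condition then so does their product
`c(k) = ∑_{l+m=k} q^{-e(l,m)} a(l) b(m)`, and the Gauss norm is multiplicative. -/
theorem quantumTate_gaussNorm_mul {K : Type*} [NormedField K] [IsUltrametricDist K]
    {n : ℕ} (q : Kˣ) (hq : ‖(q : K)‖ = 1) (r : Fin n → ℝ) (hr : ∀ i, 0 < r i)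
    (a b : (Fin n →₀ ℕ) → K)
    (ha : Tendsto (fun l : Fin n →₀ ℕ => ‖a l‖ * ∏ i, r i ^ l i) cofinite (nhds 0))
    (hb : Tendsto (fun m : Fin n →₀ ℕ => ‖b m‖ * ∏ i, r i ^ m i) cofinite (nhds 0))
    (c : (Fin n →₀ ℕ) → K)
    (hc : ∀ k : Fin n →₀ ℕ, c k =
      ∑ p ∈ Finset.HasAntidiagonal.antidiagonal k,
        ((q ^ (-(commExponent p.1 p.2 : ℤ)) : Kˣ) : K) * a p.1 * b p.2) :
    -- (i) the product coefficients satisfy the decay condition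
    Tendsto (fun k : Fin n →₀ ℕ => ‖c k‖ * ∏ i, r i ^ k i) cofinite (nhds 0) ∧
    -- (ii) the Gauss norm is multiplicative
    (⨆ k : Fin n →₀ ℕ, ‖c k‖ * ∏ i, r i ^ k i) =
      (⨆ l : Fin n →₀ ℕ, ‖a l‖ * ∏ i, r i ^ l i) *
        (⨆ m : Fin n →₀ ℕ, ‖b m‖ * ∏ i, r i ^ m i) := by
  have hRpos : ∀ l : Fin n →₀ ℕ, 0 < ∏ i, r i ^ l i :=
    fun l => Finset.prod_pos fun i _ => pow_pos (hr i) _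
  have hRadd : ∀ l m : Fin n →₀ ℕ,
      (∏ i, r i ^ (l + m) i) = (∏ i, r i ^ l i) * ∏ i, r i ^ m i := by
    intro l m
    rw [← Finset.prod_mul_distrib]
    exact Finset.prod_congr rfl fun i _ => by rw [Finsupp.add_apply, pow_add]
  exact gauss_main (fun l => ∏ i, r i ^ l i) hRpos hRadd
    (fun p => ((q ^ (-(commExponent p.1 p.2 : ℤ)) : Kˣ) : K))
    (fun p => by
      show ‖((q ^ (-(commExponent p.1 p.2 : ℤ)) : Kˣ) : K)‖ = 1
      rw [Units.val_zpow_eq_zpow_val, norm_zpow, hq, one_zpow])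
    a b c _ _ _ (fun l => rfl) (fun m => rfl) (fun k => rfl) ha hb hc
end

section
/- Let K be a non-archimedean valuation field, q ∈ Kˣ a unit with ‖q‖ = 1, d a natural number, and φ : (Fin d → ℤ) → (Fin d → ℤ) → ℤ a skew-symmetric biadditive form (φ(λ,μ) = −φ(μ,λ), additive in each argument). Let r : Fin d → ℝ with r(i) > 0 for all i. On the twisted group algebra A_q(T(L,φ)) of regular functions on the quantum torus — finitely supported functions a : (Fin d → ℤ) →₀ K with product (a·b)(κ) = Σ_{λ+μ=κ} q^{φ(λ,μ)}·a(λ)·b(μ) (the sum is finite), corresponding to the relations e(λ)e(μ) = q^{φ(λ,μ)} e(λ+μ) on the basis elements e(λ) — define the norm ν_r(a) = sup over λ in the support of a of ‖a(λ)‖·∏ᵢ r(i)^{λ(i)}. Then ν_r is multiplicative: ν_r(a·b) = ν_r(a)·ν_r(b) for all a, b. -/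
noncomputable instance quantumTorusAux.lexLinearOrder (d : ℕ) :
    LinearOrder (Lex (Fin d → ℤ)) :=
  @Pi.Lex.linearOrder (Fin d) (fun _ => ℤ) _
    (Finite.to_wellFoundedLT) _

namespace quantumTorusAux

lemma lex_add_lt {d : ℕ} {u v : Fin d → ℤ} (z : Fin d → ℤ)
    (h : toLex u < toLex v) : toLex (u + z) < toLex (v + z) := by
  have h' : @Pi.Lex (Fin d) (fun _ => ℤ) (· < ·) (fun {_} => (· < ·)) u v := h
  obtain ⟨i, h1, h2⟩ := h'
  show @Pi.Lex (Fin d) (fun _ => ℤ) (· < ·) (fun {_} => (· < ·)) (u + z) (v + z)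
  refine ⟨i, fun j hj => ?_, ?_⟩
  · have h3 : u j = v j := h1 j hj
    show u j + z j = v j + z j
    omega
  · have h3 : u i < v i := h2
    show u i + z i < v i + z i
    omega

variable {K : Type*} [NormedField K] {d : ℕ}

lemma bdd_pt {w : (Fin d → ℤ) → ℝ} (hwpos : ∀ lm, 0 < w lm)
    (a : (Fin d → ℤ) →₀ K) (ha : a.support.Nonempty) :
    ∀ lm : Fin d → ℤ, ‖a lm‖ * w lm ≤ a.support.sup' ha (fun lm => ‖a lm‖ * w lm) := by
  intro lm
  by_cases h : lm ∈ a.support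
  · exact Finset.le_sup' (f := fun lm => ‖a lm‖ * w lm) h
  · rw [Finsupp.notMem_support_iff] at h
    rw [h, norm_zero, zero_mul]
    obtain ⟨x, hx⟩ := ha
    exact le_trans (mul_nonneg (norm_nonneg (a x)) (hwpos x).le)
      (Finset.le_sup' (f := fun lm => ‖a lm‖ * w lm) hx)

lemma bddAbove_range {w : (Fin d → ℤ) → ℝ} (hwpos : ∀ lm, 0 < w lm)
    (a : (Fin d → ℤ) →₀ K) (ha : a.support.Nonempty) :
    BddAbove (Set.range fun lm : Fin d → ℤ => ‖a lm‖ * w lm) := by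
  refine ⟨a.support.sup' ha (fun lm => ‖a lm‖ * w lm), ?_⟩
  rintro x ⟨lm, rfl⟩
  exact bdd_pt hwpos a ha lm

lemma sup_eq {w : (Fin d → ℤ) → ℝ} (hwpos : ∀ lm, 0 < w lm)
    (a : (Fin d → ℤ) →₀ K) (ha : a.support.Nonempty) :
    (⨆ lm : Fin d → ℤ, ‖a lm‖ * w lm) = a.support.sup' ha (fun lm => ‖a lm‖ * w lm) :=
  le_antisymm (ciSup_le (bdd_pt hwpos a ha))
    (Finset.sup'_le _ _ fun lm _ => le_ciSup (bddAbove_range hwpos a ha) lm)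

/-- Existence of a lex-maximal maximizer. -/
lemma exists_max {w : (Fin d → ℤ) → ℝ} (hwpos : ∀ lm, 0 < w lm)
    (a : (Fin d → ℤ) →₀ K) (ha : a.support.Nonempty) :
    ∃ l₀ ∈ a.support, (‖a l₀‖ * w l₀ = ⨆ lm : Fin d → ℤ, ‖a lm‖ * w lm) ∧
      ∀ lm ∈ a.support, ‖a lm‖ * w lm = ‖a l₀‖ * w l₀ → toLex lm ≤ toLex l₀ := by
  classical
  set ν := ⨆ lm : Fin d → ℤ, ‖a lm‖ * w lm with hν
  set S := a.support.filter (fun lm => ‖a lm‖ * w lm = ν) with hS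
  have hSne : S.Nonempty := by
    obtain ⟨l, hl, hleq⟩ := Finset.exists_mem_eq_sup' ha (fun lm => ‖a lm‖ * w lm)
    exact ⟨l, Finset.mem_filter.2 ⟨hl, by rw [hν, sup_eq hwpos a ha, hleq]⟩⟩
  obtain ⟨l₀, hl₀, hmax⟩ := Finset.exists_max_image S toLex hSne
  rw [hS, Finset.mem_filter] at hl₀
  refine ⟨l₀, hl₀.1, hl₀.2, fun lm hlm heq => ?_⟩
  exact hmax lm (Finset.mem_filter.2 ⟨hlm, by rw [heq, hl₀.2]⟩)

theorem main [IsUltrametricDist K]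
    (q : Kˣ) (hq : ‖(q : K)‖ = 1)
    (φ : (Fin d → ℤ) → (Fin d → ℤ) → ℤ)
    (w : (Fin d → ℤ) → ℝ) (hwpos : ∀ lm, 0 < w lm)
    (hwadd : ∀ lm mu, w (lm + mu) = w lm * w mu)
    (a b : (Fin d → ℤ) →₀ K) (c : (Fin d → ℤ) → K)
    (hc : ∀ κ : Fin d → ℤ, c κ =
      ∑ lm ∈ a.support, ((q ^ φ lm (κ - lm) : Kˣ) : K) * a lm * b (κ - lm)) :
    (⨆ κ : Fin d → ℤ, ‖c κ‖ * w κ) =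
      (⨆ lm : Fin d → ℤ, ‖a lm‖ * w lm) * (⨆ mu : Fin d → ℤ, ‖b mu‖ * w mu) := by
  classical
  have hqn : ∀ n : ℤ, ‖((q ^ n : Kˣ) : K)‖ = 1 := fun n => by
    rw [Units.val_zpow_eq_zpow_val, norm_zpow, hq, one_zpow]
  have hwsub : ∀ κ lm : Fin d → ℤ, w κ = w lm * w (κ - lm) := fun κ lm => by
    rw [← hwadd]
    congr 1
    abel
  by_cases ha0 : a = 0
  · have hca : ∀ κ, c κ = 0 := fun κ => by
      rw [hc κ, ha0]
      simp
    simp only [hca, ha0, Finsupp.coe_zero, Pi.zero_apply, norm_zero, zero_mul, ciSup_const]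
  by_cases hb0 : b = 0
  · have hcb : ∀ κ, c κ = 0 := fun κ => by
      rw [hc κ, hb0]
      simp
    simp only [hcb, hb0, Finsupp.coe_zero, Pi.zero_apply, norm_zero, zero_mul, mul_zero,
      ciSup_const]
  have ha : a.support.Nonempty := Finsupp.support_nonempty_iff.2 ha0
  have hb : b.support.Nonempty := Finsupp.support_nonempty_iff.2 hb0
  obtain ⟨l₀, hl₀s, hl₀v, hl₀m⟩ := exists_max hwpos a ha
  obtain ⟨m₀, hm₀s, hm₀v, hm₀m⟩ := exists_max hwpos b hb
  set νa := ⨆ lm : Fin d → ℤ, ‖a lm‖ * w lm with hνa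
  set νb := ⨆ mu : Fin d → ℤ, ‖b mu‖ * w mu with hνb
  have hA : ∀ lm, ‖a lm‖ * w lm ≤ νa := fun lm => le_ciSup (bddAbove_range hwpos a ha) lm
  have hB : ∀ mu, ‖b mu‖ * w mu ≤ νb := fun mu => le_ciSup (bddAbove_range hwpos b hb) mu
  have hνa0 : 0 < νa := by
    rw [← hl₀v]
    exact mul_pos (norm_pos_iff.2 (Finsupp.mem_support_iff.1 hl₀s)) (hwpos l₀)
  have hνb0 : 0 < νb := by
    rw [← hm₀v]
    exact mul_pos (norm_pos_iff.2 (Finsupp.mem_support_iff.1 hm₀s)) (hwpos m₀)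
  -- pointwise upper bound
  have htermnorm : ∀ (κ lm : Fin d → ℤ),
      ‖((q ^ φ lm (κ - lm) : Kˣ) : K) * a lm * b (κ - lm)‖ * w κ =
        (‖a lm‖ * w lm) * (‖b (κ - lm)‖ * w (κ - lm)) := by
    intro κ lm
    rw [norm_mul, norm_mul, hqn, one_mul, hwsub κ lm]
    ring
  have hub : ∀ κ, ‖c κ‖ * w κ ≤ νa * νb := by
    intro κ
    rw [hc κ, ← le_div_iff₀ (hwpos κ)]
    refine IsUltrametricDist.norm_sum_le_of_forall_le_of_nonneg
      (div_nonneg (mul_nonneg hνa0.le hνb0.le) (hwpos κ).le) (fun lm _ => ?_)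
    rw [le_div_iff₀ (hwpos κ), htermnorm κ lm]
    exact mul_le_mul (hA lm) (hB _) (mul_nonneg (norm_nonneg _) (hwpos _).le) hνa0.le
  have bddC : BddAbove (Set.range fun κ : Fin d → ℤ => ‖c κ‖ * w κ) := by
    refine ⟨νa * νb, ?_⟩
    rintro x ⟨κ, rfl⟩
    exact hub κ
  -- the main term
  set κ₀ : Fin d → ℤ := l₀ + m₀ with hκ₀
  have hκsub : κ₀ - l₀ = m₀ := by rw [hκ₀]; abel
  set main : K := ((q ^ φ l₀ (κ₀ - l₀) : Kˣ) : K) * a l₀ * b (κ₀ - l₀) with hmain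
  have hmainnorm : ‖main‖ = ‖a l₀‖ * ‖b m₀‖ := by
    rw [hmain, norm_mul, norm_mul, hqn, one_mul, hκsub]
  have hmainw : ‖main‖ * w κ₀ = νa * νb := by
    rw [hmainnorm, hκ₀, hwadd l₀ m₀, ← hl₀v, ← hm₀v]
    ring
  have hmainpos : 0 < ‖main‖ := by
    rw [hmainnorm]
    exact mul_pos (norm_pos_iff.2 (Finsupp.mem_support_iff.1 hl₀s))
      (norm_pos_iff.2 (Finsupp.mem_support_iff.1 hm₀s))
  -- every other term is strictly smaller
  have hrest : ∀ lm ∈ a.support.erase l₀,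
      ‖((q ^ φ lm (κ₀ - lm) : Kˣ) : K) * a lm * b (κ₀ - lm)‖ < ‖main‖ := by
    intro lm hlm
    obtain ⟨hne, hmem⟩ := Finset.mem_erase.mp hlm
    rw [← mul_lt_mul_iff_of_pos_right (hwpos κ₀), htermnorm κ₀ lm, hmainw]
    by_cases hcase : ‖a lm‖ * w lm = νa
    · -- lm is a maximizer, so lex-smaller than l₀, so κ₀ - lm is lex-bigger than m₀
      have hlex : toLex lm < toLex l₀ := by
        refine lt_of_le_of_ne (hl₀m lm hmem (by rw [hcase, hl₀v])) ?_
        simpa using hne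
      have hlex2 : toLex m₀ < toLex (κ₀ - lm) := by
        have h2 := lex_add_lt (κ₀ - lm - l₀) hlex
        have e1 : lm + (κ₀ - lm - l₀) = m₀ := by rw [hκ₀]; abel
        have e2 : l₀ + (κ₀ - lm - l₀) = κ₀ - lm := by abel
        rwa [e1, e2] at h2
      have hblt : ‖b (κ₀ - lm)‖ * w (κ₀ - lm) < νb := by
        refine lt_of_le_of_ne (hB _) (fun heq => ?_)
        have hbne : b (κ₀ - lm) ≠ 0 := by
          intro h0
          rw [h0, norm_zero, zero_mul] at heq
          exact hνb0.ne heq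
        have := hm₀m (κ₀ - lm) (Finsupp.mem_support_iff.2 hbne) (by rw [heq, hm₀v])
        exact absurd this (not_le.2 hlex2)
      calc ‖a lm‖ * w lm * (‖b (κ₀ - lm)‖ * w (κ₀ - lm))
          ≤ νa * (‖b (κ₀ - lm)‖ * w (κ₀ - lm)) := by
            exact mul_le_mul_of_nonneg_right (hA lm)
              (mul_nonneg (norm_nonneg _) (hwpos _).le)
        _ < νa * νb := by exact mul_lt_mul_of_pos_left hblt hνa0
    · have halt : ‖a lm‖ * w lm < νa := (hA lm).lt_of_ne hcase
      calc ‖a lm‖ * w lm * (‖b (κ₀ - lm)‖ * w (κ₀ - lm))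
          ≤ ‖a lm‖ * w lm * νb := by
            exact mul_le_mul_of_nonneg_left (hB _)
              (mul_nonneg (norm_nonneg _) (hwpos _).le)
        _ < νa * νb := by exact mul_lt_mul_of_pos_right halt hνb0
  -- norm of c at κ₀
  have hcnorm : ‖c κ₀‖ = ‖main‖ := by
    rw [hc κ₀, ← Finset.add_sum_erase _ _ hl₀s]
    have hrestnorm : ‖∑ lm ∈ a.support.erase l₀,
        ((q ^ φ lm (κ₀ - lm) : Kˣ) : K) * a lm * b (κ₀ - lm)‖ < ‖main‖ := by
      rcases (a.support.erase l₀).eq_empty_or_nonempty with he | hne'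
      · rw [he, Finset.sum_empty, norm_zero]
        exact hmainpos
      · refine lt_of_le_of_lt (hne'.norm_sum_le_sup'_norm _) ?_
        obtain ⟨x, hx, hxe⟩ := Finset.exists_mem_eq_sup' hne'
          (fun lm => ‖((q ^ φ lm (κ₀ - lm) : Kˣ) : K) * a lm * b (κ₀ - lm)‖)
        rw [hxe]
        exact hrest x hx
    rw [IsUltrametricDist.norm_add_eq_max_of_norm_ne_norm (by exact (ne_of_lt hrestnorm).symm)]
    exact max_eq_left hrestnorm.le
  refine le_antisymm (ciSup_le hub) ?_
  calc νa * νb = ‖c κ₀‖ * w κ₀ := by rw [hcnorm, hmainw]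
    _ ≤ ⨆ κ : Fin d → ℤ, ‖c κ‖ * w κ := le_ciSup bddC κ₀

end quantumTorusAux

/-- Multiplicativity of the norm `ν_r` on the algebra `A_q(T(L,φ))` of regular functions
on the quantum torus: elements are finitely supported coefficient functions
`(Fin d → ℤ) →₀ K` with product twisted by `q^{φ(λ,μ)}` (corresponding to
`e(λ)e(μ) = q^{φ(λ,μ)} e(λ+μ)`), and `ν_r(a) = sup_λ ‖a λ‖ ∏ᵢ r i ^ λ i`. -/
theorem quantumTorus_regular_norm_multiplicative {K : Type*} [NormedField K]
    [IsUltrametricDist K] {d : ℕ} (q : Kˣ) (hq : ‖(q : K)‖ = 1)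
    (φ : (Fin d → ℤ) → (Fin d → ℤ) → ℤ)
    (hskew : ∀ lm mu, φ lm mu = -φ mu lm)
    (haddl : ∀ l₁ l₂ mu, φ (l₁ + l₂) mu = φ l₁ mu + φ l₂ mu)
    (haddr : ∀ lm m₁ m₂, φ lm (m₁ + m₂) = φ lm m₁ + φ lm m₂)
    (r : Fin d → ℝ) (hr : ∀ i, 0 < r i)
    (a b : (Fin d → ℤ) →₀ K)
    (c : (Fin d → ℤ) → K)
    (hc : ∀ κ : Fin d → ℤ, c κ =
      ∑ lm ∈ a.support, ((q ^ φ lm (κ - lm) : Kˣ) : K) * a lm * b (κ - lm)) :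
    (⨆ κ : Fin d → ℤ, ‖c κ‖ * ∏ i, r i ^ κ i) =
      (⨆ lm : Fin d → ℤ, ‖a lm‖ * ∏ i, r i ^ lm i) *
        (⨆ mu : Fin d → ℤ, ‖b mu‖ * ∏ i, r i ^ mu i) := by
  have hwpos : ∀ lm : Fin d → ℤ, 0 < ∏ i, r i ^ lm i :=
    fun lm => Finset.prod_pos fun i _ => zpow_pos (hr i) _
  have hwadd : ∀ lm mu : Fin d → ℤ, (∏ i, r i ^ (lm + mu) i) =
      (∏ i, r i ^ lm i) * ∏ i, r i ^ mu i := by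
    intro lm mu
    rw [← Finset.prod_mul_distrib]
    refine Finset.prod_congr rfl fun i _ => ?_
    rw [Pi.add_apply, zpow_add₀ (hr i).ne']
  exact quantumTorusAux.main q hq φ (fun lm => ∏ i, r i ^ lm i) hwpos hwadd a b c hc
end

section
/- Let K be a complete non-archimedean valuation field, q ∈ Kˣ a unit with ‖q‖ = 1, d a natural number, φ : (Fin d → ℤ) → (Fin d → ℤ) → ℤ a skew-symmetric biadditive form, and r : Fin d → ℝ with r(i) > 0 for all i. Let a, b : (Fin d → ℤ) → K satisfy the decay condition that ‖a(λ)‖·∏ᵢ r(i)^{λ(i)} → 0 and ‖b(λ)‖·∏ᵢ r(i)^{λ(i)} → 0 along the cofinite filter on Fin d → ℤ (these are coefficient functions of analytic functions on the quantum torus of multiradius r). Then: (i) for every κ, the family λ ↦ q^{φ(λ,κ−λ)}·a(λ)·b(κ−λ) is summable in K; (ii) the twisted convolution c(κ) = Σ'_λ q^{φ(λ,κ−λ)}·a(λ)·b(κ−λ) again satisfies the decay condition; (iii) the norm ν_r(f) = ⨆_λ ‖f(λ)‖·∏ᵢ r(i)^{λ(i)} is submultiplicative on these products: ν_r(c) ≤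 ν_r(a)·ν_r(b). In other words, the analytic functions on the quantum torus of multiradius r form a Banach K-algebra. -/
open Filter

/-- The analytic functions on the quantum torus of multiradius `r` form a Banach
`K`-algebra: if the coefficient functions `a, b` satisfy the decay condition
`‖a λ‖ ∏ᵢ r i ^ λ i → 0` (along the cofinite filter), then for every `κ` the twisted
convolution is summable, its coefficients again satisfy the decay condition, and the
norm `ν_r` is submultiplicative. -/
theorem quantumTorus_analytic_banachAlgebra {K : Type*} [NormedField K]
    [IsUltrametricDist K] [CompleteSpace K] {d : ℕ} (q : Kˣ) (hq : ‖(q : K)‖ = 1)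
    (φ : (Fin d → ℤ) → (Fin d → ℤ) → ℤ)
    (hskew : ∀ lm mu, φ lm mu = -φ mu lm)
    (haddl : ∀ l₁ l₂ mu, φ (l₁ + l₂) mu = φ l₁ mu + φ l₂ mu)
    (haddr : ∀ lm m₁ m₂, φ lm (m₁ + m₂) = φ lm m₁ + φ lm m₂)
    (r : Fin d → ℝ) (hr : ∀ i, 0 < r i)
    (a b : (Fin d → ℤ) → K)
    (ha : Tendsto (fun lm : Fin d → ℤ => ‖a lm‖ * ∏ i, r i ^ lm i) cofinite (nhds 0))
    (hb : Tendsto (fun mu : Fin d → ℤ => ‖b mu‖ * ∏ i, r i ^ mu i) cofinite (nhds 0)) :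
    -- (i) summability of the twisted convolution
    (∀ κ : Fin d → ℤ,
      Summable fun lm : Fin d → ℤ => ((q ^ φ lm (κ - lm) : Kˣ) : K) * a lm * b (κ - lm)) ∧
    -- (ii) the product again satisfies the decay condition
    Tendsto
      (fun κ : Fin d → ℤ =>
        ‖∑' lm : Fin d → ℤ, ((q ^ φ lm (κ - lm) : Kˣ) : K) * a lm * b (κ - lm)‖ *
          ∏ i, r i ^ κ i)
      cofinite (nhds 0) ∧
    -- (iii) the norm `ν_r` is submultiplicative
    (⨆ κ : Fin d → ℤ,
        ‖∑' lm : Fin d → ℤ, ((q ^ φ lm (κ - lm) : Kˣ) : K) * a lm * b (κ - lm)‖ *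
          ∏ i, r i ^ κ i) ≤
      (⨆ lm : Fin d → ℤ, ‖a lm‖ * ∏ i, r i ^ lm i) *
        (⨆ mu : Fin d → ℤ, ‖b mu‖ * ∏ i, r i ^ mu i) := by
  -- the weight function
  set w : (Fin d → ℤ) → ℝ := fun lm => ∏ i, r i ^ lm i with hw_def
  have hw : ∀ lm, 0 < w lm := fun lm =>
    Finset.prod_pos fun i _ => zpow_pos (hr i) _
  have hwmul : ∀ lm mu, w (lm + mu) = w lm * w mu := by
    intro lm mu
    simp only [hw_def, ← Finset.prod_mul_distrib]
    exact Finset.prod_congr rfl fun i _ => by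
      simp [zpow_add₀ (hr i).ne']
  have hwκ : ∀ (κ lm : Fin d → ℤ), w κ = w lm * w (κ - lm) := by
    intro κ lm
    rw [← hwmul]
    congr 1
    abel
  -- the norm of the twisted term
  have hqnorm : ∀ (n : ℤ), ‖((q ^ n : Kˣ) : K)‖ = 1 := by
    intro n
    rw [Units.val_zpow_eq_zpow_val, norm_zpow, hq, one_zpow]
  have hterm : ∀ (κ lm : Fin d → ℤ),
      ‖((q ^ φ lm (κ - lm) : Kˣ) : K) * a lm * b (κ - lm)‖ = ‖a lm‖ * ‖b (κ - lm)‖ := by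
    intro κ lm
    rw [norm_mul, norm_mul, hqnorm, one_mul]
  -- boundedness
  have hAbdd : BddAbove (Set.range fun lm => ‖a lm‖ * w lm) := ha.bddAbove_range_of_cofinite
  have hBbdd : BddAbove (Set.range fun mu => ‖b mu‖ * w mu) := hb.bddAbove_range_of_cofinite
  set A : ℝ := ⨆ lm, ‖a lm‖ * w lm with hA_def
  set B : ℝ := ⨆ mu, ‖b mu‖ * w mu with hB_def
  have hA0 : 0 ≤ A := le_ciSup_of_le hAbdd 0 (mul_nonneg (norm_nonneg _) (hw 0).le)
  have hB0 : 0 ≤ B := le_ciSup_of_le hBbdd 0 (mul_nonneg (norm_nonneg _) (hw 0).le)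
  have hAle : ∀ lm, ‖a lm‖ * w lm ≤ A := fun lm => le_ciSup hAbdd lm
  have hBle : ∀ mu, ‖b mu‖ * w mu ≤ B := fun mu => le_ciSup hBbdd mu
  -- key pointwise identity
  have hkey : ∀ (κ lm : Fin d → ℤ),
      ‖((q ^ φ lm (κ - lm) : Kˣ) : K) * a lm * b (κ - lm)‖ * w κ
        = (‖a lm‖ * w lm) * (‖b (κ - lm)‖ * w (κ - lm)) := by
    intro κ lm
    rw [hterm, hwκ κ lm]; ring
  -- (i) summability
  have hsum : ∀ κ : Fin d → ℤ,
      Summable fun lm : Fin d → ℤ => ((q ^ φ lm (κ - lm) : Kˣ) : K) * a lm * b (κ - lm) := by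
    intro κ
    apply NonarchimedeanAddGroup.summable_of_tendsto_cofinite_zero
    rw [tendsto_zero_iff_norm_tendsto_zero]
    have hb0 : ∀ lm : Fin d → ℤ,
        ‖((q ^ φ lm (κ - lm) : Kˣ) : K) * a lm * b (κ - lm)‖
          ≤ (‖a lm‖ * w lm) * B / w κ := by
      intro lm
      rw [le_div_iff₀ (hw κ)]
      calc ‖((q ^ φ lm (κ - lm) : Kˣ) : K) * a lm * b (κ - lm)‖ * w κ
          = (‖a lm‖ * w lm) * (‖b (κ - lm)‖ * w (κ - lm)) := hkey κ lm
        _ ≤ (‖a lm‖ * w lm) * B := by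
            apply mul_le_mul_of_nonneg_left (hBle _)
              (mul_nonneg (norm_nonneg _) (hw _).le)
    have hlim : Tendsto (fun lm : Fin d → ℤ => (‖a lm‖ * w lm) * B / w κ) cofinite (nhds 0) := by
      have := (ha.mul_const B).div_const (w κ)
      simpa using this
    exact squeeze_zero (fun lm => norm_nonneg _) hb0 hlim
  refine ⟨hsum, ?_, ?_⟩
  -- a uniform bound for the tsum
  · -- (ii) decay
    rw [Metric.tendsto_nhds]
    intro ε hε
    have hε2 : 0 < ε / 2 := by linarith
    -- finite exceptional sets
    have hSa : {lm : Fin d → ℤ | ¬ ‖a lm‖ * w lm < ε / 2 / (B + 1)}.Finite := by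
      have := ha
      rw [Metric.tendsto_nhds] at this
      have h := this (ε / 2 / (B + 1)) (by positivity)
      rw [eventually_cofinite] at h
      refine h.subset ?_
      intro lm hlm
      simp only [Set.mem_setOf_eq, Real.dist_eq, sub_zero] at *
      intro hcon
      exact hlm (lt_of_abs_lt hcon)
    have hSb : {mu : Fin d → ℤ | ¬ ‖b mu‖ * w mu < ε / 2 / (A + 1)}.Finite := by
      have := hb
      rw [Metric.tendsto_nhds] at this
      have h := this (ε / 2 / (A + 1)) (by positivity)
      rw [eventually_cofinite] at h
      refine h.subset ?_
      intro mu hmu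
      simp only [Set.mem_setOf_eq, Real.dist_eq, sub_zero] at *
      intro hcon
      exact hmu (lt_of_abs_lt hcon)
    have hT : (Set.image2 (· + ·) {lm : Fin d → ℤ | ¬ ‖a lm‖ * w lm < ε / 2 / (B + 1)}
        {mu : Fin d → ℤ | ¬ ‖b mu‖ * w mu < ε / 2 / (A + 1)}).Finite :=
      Set.Finite.image2 _ hSa hSb
    rw [eventually_cofinite]
    refine hT.subset ?_
    intro κ hκ
    simp only [Set.mem_setOf_eq, Real.dist_eq, sub_zero, not_lt] at hκ
    -- show κ is in the bad set
    by_contra hκT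
    apply absurd hκ
    rw [not_le]
    have habs : |‖∑' lm : Fin d → ℤ, ((q ^ φ lm (κ - lm) : Kˣ) : K) * a lm * b (κ - lm)‖ * w κ|
        = ‖∑' lm : Fin d → ℤ, ((q ^ φ lm (κ - lm) : Kˣ) : K) * a lm * b (κ - lm)‖ * w κ := by
      exact abs_of_nonneg (mul_nonneg (norm_nonneg _) (hw κ).le)
    rw [habs]
    have hboundterm : ∀ lm : Fin d → ℤ,
        ‖((q ^ φ lm (κ - lm) : Kˣ) : K) * a lm * b (κ - lm)‖ ≤ ε / 2 / w κ := by
      intro lm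
      rw [le_div_iff₀ (hw κ), hkey κ lm]
      by_cases hla : ‖a lm‖ * w lm < ε / 2 / (B + 1)
      · calc (‖a lm‖ * w lm) * (‖b (κ - lm)‖ * w (κ - lm))
            ≤ (ε / 2 / (B + 1)) * B := by
              apply mul_le_mul hla.le (hBle _)
                (mul_nonneg (norm_nonneg _) (hw _).le) (by positivity)
          _ ≤ ε / 2 := by
              rw [div_mul_eq_mul_div, div_le_iff₀ (by positivity : (0:ℝ) < B + 1)]
              nlinarith
      · have hlb : ‖b (κ - lm)‖ * w (κ - lm) < ε / 2 / (A + 1) := by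
          by_contra hlb
          exact hκT ⟨lm, hla, κ - lm, hlb, by ext i; simp⟩
        calc (‖a lm‖ * w lm) * (‖b (κ - lm)‖ * w (κ - lm))
            ≤ A * (ε / 2 / (A + 1)) := by
              apply mul_le_mul (hAle _) hlb.le
                (mul_nonneg (norm_nonneg _) (hw _).le) hA0
          _ ≤ ε / 2 := by
              rw [mul_div_assoc', div_le_iff₀ (by positivity : (0:ℝ) < A + 1)]
              nlinarith
    have := IsUltrametricDist.norm_tsum_le_of_forall_le
      (f := fun lm : Fin d → ℤ => ((q ^ φ lm (κ - lm) : Kˣ) : K) * a lm * b (κ - lm))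
      hboundterm
    calc ‖∑' lm : Fin d → ℤ, ((q ^ φ lm (κ - lm) : Kˣ) : K) * a lm * b (κ - lm)‖ * w κ
        ≤ (ε / 2 / w κ) * w κ := mul_le_mul_of_nonneg_right this (hw κ).le
      _ = ε / 2 := div_mul_cancel₀ _ (hw κ).ne'
      _ < ε := by linarith
  · -- (iii) submultiplicativity
    apply ciSup_le
    intro κ
    have hboundterm : ∀ lm : Fin d → ℤ,
        ‖((q ^ φ lm (κ - lm) : Kˣ) : K) * a lm * b (κ - lm)‖ ≤ A * B / w κ := by
      intro lm
      rw [le_div_iff₀ (hw κ), hkey κ lm]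
      exact mul_le_mul (hAle _) (hBle _) (mul_nonneg (norm_nonneg _) (hw _).le) hA0
    have := IsUltrametricDist.norm_tsum_le_of_forall_le
      (f := fun lm : Fin d → ℤ => ((q ^ φ lm (κ - lm) : Kˣ) : K) * a lm * b (κ - lm))
      hboundterm
    calc ‖∑' lm : Fin d → ℤ, ((q ^ φ lm (κ - lm) : Kˣ) : K) * a lm * b (κ - lm)‖ * w κ
        ≤ (A * B / w κ) * w κ := mul_le_mul_of_nonneg_right this (hw κ).le
      _ = A * B := div_mul_cancel₀ _ (hw κ).ne'
end

section
/- Let K be a complete non-archimedean valuation field, q ∈ Kˣ a unit with ‖q‖ = 1, d a natural number, φ : (Fin d → ℤ) → (Fin d → ℤ) → ℤ a skew-symmetric biadditive form, and r : Fin d → ℝ with r(i) > 0 for all i. Let a, b : (Fin d → ℤ) → K satisfy the decay condition that ‖a(λ)‖·∏ᵢ r(i)^{λ(i)} → 0 and ‖b(λ)‖·∏ᵢ r(i)^{λ(i)} → 0 along the cofinite filter, and let c(κ) = Σ'_λ q^{φ(λ,κ−λ)}·a(λ)·b(κ−λ) be their twisted convolution. Then the norm ν_r(f) = ⨆_λ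 ‖f(λ)‖·∏ᵢ r(i)^{λ(i)} is multiplicative: ν_r(c) = ν_r(a)·ν_r(b). In other words, ν_r is a multiplicative norm on the algebra of analytic functions on the quantum torus of multiradius r, and hence defines a point of its Berkovich spectrum. -/
open Filter

section aux
variable {α : Type*}

private lemma aux_bdd {F : α → ℝ} (hF : Tendsto F cofinite (nhds 0)) :
    BddAbove (Set.range F) := by
  have h1 : {x | ¬ F x < 1}.Finite := by
    simpa [Filter.eventually_cofinite] using hF.eventually (eventually_lt_nhds one_pos)
  obtain ⟨C, hC⟩ := (h1.image F).bddAbove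
  refine ⟨max C 1, ?_⟩
  rintro y ⟨x, rfl⟩
  by_cases h : F x < 1
  · exact le_max_of_le_right h.le
  · exact le_max_of_le_left (hC (Set.mem_image_of_mem F h))

private lemma aux_attained [Nonempty α] {F : α → ℝ}
    (hF : Tendsto F cofinite (nhds 0)) (hA : 0 < ⨆ x, F x) :
    ∃ x₀, F x₀ = ⨆ x, F x := by
  set A := ⨆ x, F x with hAdef
  have hbdd := aux_bdd hF
  have hT : {x | ¬ F x < A / 2}.Finite := by
    simpa [Filter.eventually_cofinite] using
      hF.eventually (eventually_lt_nhds (by linarith))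
  have hne : ∃ x, A / 2 < F x := by
    by_contra h
    push_neg at h
    have : A ≤ A / 2 := ciSup_le h
    linarith
  obtain ⟨x, hx⟩ := hne
  obtain ⟨x₀, hx₀T, hx₀max⟩ :=
    hT.toFinset.exists_max_image F ⟨x, hT.mem_toFinset.2 (not_lt.2 hx.le)⟩
  refine ⟨x₀, le_antisymm (le_ciSup hbdd x₀) (ciSup_le fun y => ?_)⟩
  by_cases hy : F y < A / 2
  · have : A / 2 ≤ F x₀ := not_lt.1 (by simpa using hT.mem_toFinset.1 hx₀T)
    linarith
  · exact hx₀max y (by simpa using hy)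

private lemma aux_gap [Nonempty α] {F : α → ℝ}
    (hF : Tendsto F cofinite (nhds 0)) (hA : 0 < ⨆ x, F x) :
    ∃ ε > 0, ∀ x, F x ≠ (⨆ x, F x) → F x ≤ (⨆ x, F x) - ε := by
  classical
  set A := ⨆ x, F x with hAdef
  have hbdd := aux_bdd hF
  have hT : {x | ¬ F x < A / 2}.Finite := by
    simpa [Filter.eventually_cofinite] using
      hF.eventually (eventually_lt_nhds (by linarith))
  set V : Set ℝ := F '' {x | ¬ F x < A / 2 ∧ F x ≠ A} with hVdef
  have hVfin : V.Finite := (hT.subset fun x hx => hx.1).image F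
  have hδ : max (A / 2) (sSup V) < A := by
    rcases V.eq_empty_or_nonempty with h | h
    · rw [h]
      simp only [Real.sSup_empty]
      rw [max_lt_iff]
      constructor <;> linarith
    · rw [max_lt_iff]
      refine ⟨by linarith, ?_⟩
      obtain ⟨x, hx, hxe⟩ := h.csSup_mem hVfin
      rw [← hxe]
      exact lt_of_le_of_ne (le_ciSup hbdd x) hx.2
  refine ⟨A - max (A / 2) (sSup V), by linarith, fun x hx => ?_⟩
  have : F x ≤ max (A / 2) (sSup V) := by
    by_cases h : F x < A / 2
    · exact le_max_of_le_left h.le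
    · exact le_max_of_le_right (le_csSup hVfin.bddAbove ⟨x, ⟨h, hx⟩, rfl⟩)
  linarith

private lemma aux_summable {E : Type*} [NormedAddCommGroup E] [IsUltrametricDist E]
    [CompleteSpace E] {f : α → E}
    (hf : Tendsto (fun x => ‖f x‖) cofinite (nhds 0)) : Summable f := by
  rw [summable_iff_vanishing_norm]
  intro ε hε
  have h : {x | ¬ ‖f x‖ < ε / 2}.Finite := by
    simpa [Filter.eventually_cofinite] using
      hf.eventually (eventually_lt_nhds (by linarith))
  refine ⟨h.toFinset, fun t ht => ?_⟩
  have hle : ‖∑ x ∈ t, f x‖ ≤ ε / 2 := by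
    apply IsUltrametricDist.norm_sum_le_of_forall_le_of_nonneg (by linarith)
    intro i hi
    have hi' : i ∉ h.toFinset := Finset.disjoint_left.1 ht hi
    have := h.mem_toFinset.not.1 hi'
    simp only [Set.mem_setOf_eq, not_not] at this
    linarith
  linarith

end aux

private noncomputable def qtw {d : ℕ} (r : Fin d → ℝ) (l : Fin d → ℤ) : ℝ := ∏ i, r i ^ l i

private lemma qtw_def {d : ℕ} (r : Fin d → ℝ) (l : Fin d → ℤ) :
    qtw r l = ∏ i, r i ^ l i := rfl

private lemma qtw_pos {d : ℕ} {r : Fin d → ℝ} (hr : ∀ i, 0 < r i) (l : Fin d → ℤ) :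
    0 < qtw r l :=
  Finset.prod_pos fun i _ => zpow_pos (hr i) _

private lemma qtw_add {d : ℕ} {r : Fin d → ℝ} (hr : ∀ i, 0 < r i) (l m : Fin d → ℤ) :
    qtw r (l + m) = qtw r l * qtw r m := by
  simp only [qtw, Pi.add_apply, zpow_add₀ (hr _).ne', Finset.prod_mul_distrib]

private lemma qtw_sub {d : ℕ} {r : Fin d → ℝ} (hr : ∀ i, 0 < r i) (k l : Fin d → ℤ) :
    qtw r (k - l) = qtw r k / qtw r l := by
  rw [eq_div_iff (qtw_pos hr l).ne', ← qtw_add hr, sub_add_cancel]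

/-- The norm `ν_r` on the algebra of analytic functions on the quantum torus of
multiradius `r` is multiplicative (hence defines a point of the Berkovich spectrum):
for coefficient functions `a, b` satisfying the decay condition, the twisted
convolution `c` satisfies `ν_r(c) = ν_r(a) · ν_r(b)`. -/
theorem quantumTorus_analytic_norm_multiplicative {K : Type*} [NormedField K]
    [IsUltrametricDist K] [CompleteSpace K] {d : ℕ} (q : Kˣ) (hq : ‖(q : K)‖ = 1)
    (φ : (Fin d → ℤ) → (Fin d → ℤ) → ℤ)
    (hskew : ∀ lm mu, φ lm mu = -φ mu lm)
    (haddl : ∀ l₁ l₂ mu, φ (l₁ + l₂) mu = φ l₁ mu + φ l₂ mu)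
    (haddr : ∀ lm m₁ m₂, φ lm (m₁ + m₂) = φ lm m₁ + φ lm m₂)
    (r : Fin d → ℝ) (hr : ∀ i, 0 < r i)
    (a b : (Fin d → ℤ) → K)
    (ha : Tendsto (fun lm : Fin d → ℤ => ‖a lm‖ * ∏ i, r i ^ lm i) cofinite (nhds 0))
    (hb : Tendsto (fun mu : Fin d → ℤ => ‖b mu‖ * ∏ i, r i ^ mu i) cofinite (nhds 0))
    (c : (Fin d → ℤ) → K)
    (hc : ∀ κ : Fin d → ℤ,
      c κ = ∑' lm : Fin d → ℤ, ((q ^ φ lm (κ - lm) : Kˣ) : K) * a lm * b (κ - lm)) :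
    (⨆ κ : Fin d → ℤ, ‖c κ‖ * ∏ i, r i ^ κ i) =
      (⨆ lm : Fin d → ℤ, ‖a lm‖ * ∏ i, r i ^ lm i) *
        (⨆ mu : Fin d → ℤ, ‖b mu‖ * ∏ i, r i ^ mu i) := by
  classical
  haveI hwf : WellFoundedLT (Fin d) := inferInstance
  letI : IsOrderedCancelAddMonoid (Lex (Fin d → ℤ)) := inferInstance
  simp only [← qtw_def] at ha hb ⊢
  set w : (Fin d → ℤ) → ℝ := qtw r with hwdef
  have hw0 : ∀ l, 0 < w l := qtw_pos hr
  have hwadd : ∀ l m, w (l + m) = w l * w m := qtw_add hr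
  have hwsub : ∀ k l, w (k - l) = w k / w l := qtw_sub hr
  set A := ⨆ l, ‖a l‖ * w l with hAdef
  set B := ⨆ l, ‖b l‖ * w l with hBdef
  have hbddA := aux_bdd ha
  have hbddB := aux_bdd hb
  have hA0 : 0 ≤ A :=
    le_trans (mul_nonneg (norm_nonneg _) (hw0 0).le) (le_ciSup hbddA 0)
  have hB0 : 0 ≤ B :=
    le_trans (mul_nonneg (norm_nonneg _) (hw0 0).le) (le_ciSup hbddB 0)
  have ha' : ∀ l, ‖a l‖ ≤ A / w l := fun l =>
    (le_div_iff₀ (hw0 l)).2 (le_ciSup hbddA l)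
  have hb' : ∀ l, ‖b l‖ ≤ B / w l := fun l =>
    (le_div_iff₀ (hw0 l)).2 (le_ciSup hbddB l)
  have hqn : ∀ n : ℤ, ‖((q ^ n : Kˣ) : K)‖ = 1 := fun n => by
    rw [Units.val_zpow_eq_zpow_val, norm_zpow, hq, one_zpow]
  have hterm : ∀ k l : Fin d → ℤ,
      ‖((q ^ φ l (k - l) : Kˣ) : K) * a l * b (k - l)‖ = ‖a l‖ * ‖b (k - l)‖ := by
    intro k l
    rw [norm_mul, norm_mul, hqn, one_mul]
  -- summability of the convolution series
  have hsum : ∀ k : Fin d → ℤ,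
      Summable (fun l : Fin d → ℤ => ((q ^ φ l (k - l) : Kˣ) : K) * a l * b (k - l)) := by
    intro k
    apply aux_summable
    apply squeeze_zero (fun l => norm_nonneg _) (g := fun l => (‖a l‖ * w l) * (B / w k))
    · intro l
      rw [hterm k l]
      calc ‖a l‖ * ‖b (k - l)‖ ≤ ‖a l‖ * (B / w (k - l)) :=
            mul_le_mul_of_nonneg_left (hb' _) (norm_nonneg _)
        _ = (‖a l‖ * w l) * (B / w k) := by
            rw [hwsub]
            have h1 := (hw0 l).ne'
            have h2 := (hw0 k).ne'
            field_simp
    · simpa using ha.mul_const (B / w k)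
  -- upper bound
  have hub : ∀ k, ‖c k‖ * w k ≤ A * B := by
    intro k
    rw [hc k]
    have h1 : ‖∑' l : Fin d → ℤ, ((q ^ φ l (k - l) : Kˣ) : K) * a l * b (k - l)‖
        ≤ A * B / w k := by
      apply IsUltrametricDist.norm_tsum_le_of_forall_le_of_nonneg
        (div_nonneg (mul_nonneg hA0 hB0) (hw0 k).le)
      intro l
      rw [hterm k l]
      calc ‖a l‖ * ‖b (k - l)‖ ≤ (A / w l) * (B / w (k - l)) :=
            mul_le_mul (ha' l) (hb' _) (norm_nonneg _)
              (div_nonneg hA0 (hw0 l).le)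
        _ = A * B / w k := by
            rw [hwsub]
            have h1 := (hw0 l).ne'
            have h2 := (hw0 k).ne'
            field_simp
    calc ‖∑' l : Fin d → ℤ, ((q ^ φ l (k - l) : Kˣ) : K) * a l * b (k - l)‖ * w k
        ≤ (A * B / w k) * w k := mul_le_mul_of_nonneg_right h1 (hw0 k).le
      _ = A * B := div_mul_cancel₀ _ (hw0 k).ne'
  have hbddC : BddAbove (Set.range fun k => ‖c k‖ * w k) := by
    refine ⟨A * B, ?_⟩
    rintro y ⟨k, rfl⟩
    exact hub k
  refine le_antisymm (ciSup_le hub) ?_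
  -- degenerate cases
  rcases eq_or_lt_of_le hA0 with hAz | hApos
  · have haz : ∀ l, a l = 0 := by
      intro l
      have h1 : ‖a l‖ * w l ≤ A := le_ciSup hbddA l
      have h2 : ‖a l‖ * w l = 0 :=
        le_antisymm (hAz ▸ h1) (mul_nonneg (norm_nonneg _) (hw0 l).le)
      have := (mul_eq_zero.1 h2).resolve_right (hw0 l).ne'
      simpa using this
    have hcz : ∀ k, ‖c k‖ * w k = 0 := by
      intro k
      rw [hc k]
      simp [haz]
    calc A * B = 0 * B := by rw [hAz]
      _ = 0 := zero_mul B
      _ ≤ _ := le_ciSup_of_le hbddC 0 (hcz 0).ge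
  rcases eq_or_lt_of_le hB0 with hBz | hBpos
  · have hbz : ∀ l, b l = 0 := by
      intro l
      have h1 : ‖b l‖ * w l ≤ B := le_ciSup hbddB l
      have h2 : ‖b l‖ * w l = 0 :=
        le_antisymm (hBz ▸ h1) (mul_nonneg (norm_nonneg _) (hw0 l).le)
      have := (mul_eq_zero.1 h2).resolve_right (hw0 l).ne'
      simpa using this
    have hcz : ∀ k, ‖c k‖ * w k = 0 := by
      intro k
      rw [hc k]
      simp [hbz]
    calc A * B = A * 0 := by rw [hBz]
      _ = 0 := mul_zero A
      _ ≤ _ := le_ciSup_of_le hbddC 0 (hcz 0).ge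
  -- main case
  obtain ⟨εa, hεa, hga⟩ := aux_gap ha hApos
  obtain ⟨εb, hεb, hgb⟩ := aux_gap hb hBpos
  have hTa : {l | ¬ (‖a l‖ * w l < A / 2)}.Finite := by
    simpa [Filter.eventually_cofinite] using
      ha.eventually (eventually_lt_nhds (by linarith))
  have hTb : {l | ¬ (‖b l‖ * w l < B / 2)}.Finite := by
    simpa [Filter.eventually_cofinite] using
      hb.eventually (eventually_lt_nhds (by linarith))
  have hSa : {l | ‖a l‖ * w l = A}.Finite := by
    apply hTa.subset
    intro l hl
    simp only [Set.mem_setOf_eq] at hl ⊢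
    rw [hl]
    linarith
  have hSb : {l | ‖b l‖ * w l = B}.Finite := by
    apply hTb.subset
    intro l hl
    simp only [Set.mem_setOf_eq] at hl ⊢
    rw [hl]
    linarith
  obtain ⟨la, hla⟩ := aux_attained ha hApos
  obtain ⟨lb, hlb⟩ := aux_attained hb hBpos
  obtain ⟨l₀, hl₀S, hl₀min⟩ :=
    hSa.toFinset.exists_min_image (toLex : (Fin d → ℤ) → Lex (Fin d → ℤ))
      ⟨la, hSa.mem_toFinset.2 hla⟩
  obtain ⟨m₀, hm₀S, hm₀min⟩ :=
    hSb.toFinset.exists_min_image (toLex : (Fin d → ℤ) → Lex (Fin d → ℤ))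
      ⟨lb, hSb.mem_toFinset.2 hlb⟩
  have hAl₀ : ‖a l₀‖ * w l₀ = A := hSa.mem_toFinset.1 hl₀S
  have hBm₀ : ‖b m₀‖ * w m₀ = B := hSb.mem_toFinset.1 hm₀S
  set κ : Fin d → ℤ := l₀ + m₀ with hκdef
  set D : ℝ := max (max ((A - εa) * B) (A * (B - εb))) 0 with hDdef
  have hD0 : 0 ≤ D := le_max_right _ _
  have hDlt : D < A * B := by
    rw [max_lt_iff, max_lt_iff]
    refine ⟨⟨?_, ?_⟩, by positivity⟩
    · nlinarith
    · nlinarith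
  -- domination of all terms other than l₀
  have hdom : ∀ l, l ≠ l₀ → ‖a l‖ * ‖b (κ - l)‖ ≤ D / w κ := by
    intro l hl
    have key : ‖a l‖ * w l ≤ A - εa ∨ ‖b (κ - l)‖ * w (κ - l) ≤ B - εb := by
      by_contra hcon
      push_neg at hcon
      have h1 : ‖a l‖ * w l = A := by
        by_contra h
        exact absurd (hga l h) (not_le.2 hcon.1)
      have h2 : ‖b (κ - l)‖ * w (κ - l) = B := by
        by_contra h
        exact absurd (hgb _ h) (not_le.2 hcon.2)
      have h3 : toLex l₀ ≤ toLex l := hl₀min l (hSa.mem_toFinset.2 h1)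
      have h4 : toLex m₀ ≤ toLex (κ - l) := hm₀min _ (hSb.mem_toFinset.2 h2)
      have h5 : toLex l₀ < toLex l :=
        lt_of_le_of_ne h3 fun h => hl (toLex.injective h).symm
      have h6 : toLex l₀ + toLex m₀ < toLex l + toLex (κ - l) :=
        add_lt_add_of_lt_of_le h5 h4
      have h7 : toLex l + toLex (κ - l) = toLex l₀ + toLex m₀ := by
        rw [← toLex_add, ← toLex_add, add_sub_cancel, hκdef]
      exact absurd h7 (ne_of_gt h6)
    have hwl := (hw0 l).ne'
    have hwκ := (hw0 κ).ne'
    have hwm := (hw0 (κ - l)).ne'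
    rcases key with h | h
    · have hAε : 0 ≤ A - εa :=
        le_trans (mul_nonneg (norm_nonneg _) (hw0 l).le) h
      calc ‖a l‖ * ‖b (κ - l)‖ ≤ ((A - εa) / w l) * (B / w (κ - l)) :=
            mul_le_mul ((le_div_iff₀ (hw0 l)).2 h) (hb' _) (norm_nonneg _)
              (div_nonneg hAε (hw0 l).le)
        _ = (A - εa) * B / w κ := by
            rw [hwsub]
            field_simp
        _ ≤ D / w κ :=
            (div_le_div_iff_of_pos_right (hw0 κ)).2 (le_max_of_le_left (le_max_left _ _))
    · have hBε : 0 ≤ B - εb :=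
        le_trans (mul_nonneg (norm_nonneg _) (hw0 (κ - l)).le) h
      calc ‖a l‖ * ‖b (κ - l)‖ ≤ (A / w l) * ((B - εb) / w (κ - l)) :=
            mul_le_mul (ha' l) ((le_div_iff₀ (hw0 (κ - l))).2 h) (norm_nonneg _)
              (div_nonneg hA0 (hw0 l).le)
        _ = A * (B - εb) / w κ := by
            rw [hwsub]
            field_simp
        _ ≤ D / w κ :=
            (div_le_div_iff_of_pos_right (hw0 κ)).2 (le_max_of_le_left (le_max_right _ _))
  -- the distinguished term
  have hκm : κ - l₀ = m₀ := by rw [hκdef]; exact add_sub_cancel_left _ _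
  have hwκsplit : w κ = w l₀ * w m₀ := by rw [hκdef]; exact hwadd l₀ m₀
  have hterm₀ : ‖((q ^ φ l₀ (κ - l₀) : Kˣ) : K) * a l₀ * b (κ - l₀)‖ = A * B / w κ := by
    rw [hterm κ l₀, hκm]
    have h1 : ‖a l₀‖ = A / w l₀ := by rw [eq_div_iff (hw0 l₀).ne']; exact hAl₀
    have h2 : ‖b m₀‖ = B / w m₀ := by rw [eq_div_iff (hw0 m₀).ne']; exact hBm₀
    rw [h1, h2, div_mul_div_comm, hwκsplit]
  have hcκ : ‖c κ‖ = A * B / w κ := by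
    rw [hc κ, (hsum κ).tsum_eq_add_tsum_ite l₀]
    have hrest : ‖∑' l : Fin d → ℤ, if l = l₀ then 0 else
        ((q ^ φ l (κ - l) : Kˣ) : K) * a l * b (κ - l)‖ ≤ D / w κ := by
      apply IsUltrametricDist.norm_tsum_le_of_forall_le_of_nonneg
        (div_nonneg hD0 (hw0 κ).le)
      intro l
      by_cases h : l = l₀
      · rw [if_pos h, norm_zero]
        exact div_nonneg hD0 (hw0 κ).le
      · rw [if_neg h, hterm κ l]
        exact hdom l h
    have hlt : ‖∑' l : Fin d → ℤ, if l = l₀ then 0 else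
        ((q ^ φ l (κ - l) : Kˣ) : K) * a l * b (κ - l)‖
        < ‖((q ^ φ l₀ (κ - l₀) : Kˣ) : K) * a l₀ * b (κ - l₀)‖ := by
      rw [hterm₀]
      exact lt_of_le_of_lt hrest ((div_lt_div_iff_of_pos_right (hw0 κ)).2 hDlt)
    rw [IsUltrametricDist.norm_add_eq_max_of_norm_ne_norm (ne_of_gt hlt),
      max_eq_left hlt.le, hterm₀]
  have hfin : ‖c κ‖ * w κ = A * B := by
    rw [hcκ, div_mul_cancel₀ _ (hw0 κ).ne']
  exact le_ciSup_of_le hbddC κ hfin.ge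
end

section
/- Let K be a field, q ∈ Kˣ a unit, d a natural number, and a : Fin d → K. In the quantum polynomial algebra K[T₁,…,T_d]_q (the quotient of the free algebra K⟨T₁,…,T_d⟩ by the relations TᵢTⱼ = q·TⱼTᵢ for i < j), the family of ordered products b(l) = (T₁ − a₁)^{l(1)}·(T₂ − a₂)^{l(2)}⋯(T_d − a_d)^{l(d)}, indexed by multi-indices l ∈ (Fin d →₀ ℕ) and with factors taken in increasing order of the index i, is a K-vector space basis of K[T₁,…,T_d]_q. (Here aᵢ denotes the scalar a(i)·1 in the algebra.) -/
/-- The defining relations of the quantum polynomial algebra: `Tᵢ Tⱼ = q · Tⱼ Tᵢ`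
for `i < j`. -/
inductive QuantumPolyRel (K : Type*) [Field K] (q : Kˣ) (d : ℕ) :
    FreeAlgebra K (Fin d) → FreeAlgebra K (Fin d) → Prop
  | comm (i j : Fin d) (h : i < j) :
      QuantumPolyRel K q d (FreeAlgebra.ι K i * FreeAlgebra.ι K j)
        ((q : K) • (FreeAlgebra.ι K j * FreeAlgebra.ι K i))

/-- The quantum polynomial algebra `K[T₁,…,T_d]_q`. -/
abbrev QuantumPoly (K : Type*) [Field K] (q : Kˣ) (d : ℕ) : Type _ :=
  RingQuot (QuantumPolyRel K q d)

/-- The generator `Tᵢ` of the quantum polynomial algebra. -/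
noncomputable def quantumVar (K : Type*) [Field K] (q : Kˣ) (d : ℕ) (i : Fin d) :
    QuantumPoly K q d :=
  RingQuot.mkAlgHom K (QuantumPolyRel K q d) (FreeAlgebra.ι K i)

/-- The ordered product `(T₁ - a₁)^{l 1} (T₂ - a₂)^{l 2} ⋯ (T_d - a_d)^{l d}`, with
factors taken in increasing order of the index. -/
noncomputable def shiftedMonomial {K : Type*} [Field K] {q : Kˣ} {d : ℕ}
    (a : Fin d → K) (l : Fin d →₀ ℕ) : QuantumPoly K q d :=
  ((List.finRange d).map fun i =>
    (quantumVar K q d i - algebraMap K (QuantumPoly K q d) (a i)) ^ l i).prod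

open Finsupp
noncomputable section
namespace QPB
variable {K : Type*} [Field K] {q : Kˣ} {d : ℕ}

def cExp (i : Fin d) (m : Fin d →₀ ℕ) : ℕ := ∑ j : Fin d, if i < j then m j else 0

lemma cExp_add_single (i j : Fin d) (n : ℕ) (m : Fin d →₀ ℕ) :
    cExp i (m + Finsupp.single j n) = cExp i m + if i < j then n else 0 := by
  unfold cExp
  have : ∀ j' : Fin d, (if i < j' then (m + Finsupp.single j n) j' else 0)
      = (if i < j' then m j' else 0) + (if j = j' then (if i < j then n else 0) else 0) := by
    intro j'
    rw [Finsupp.add_apply, Finsupp.single_apply]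
    by_cases h : j = j'
    · subst h; split <;> simp_all
    · simp [h]
  rw [Finset.sum_congr rfl fun j' _ => this j', Finset.sum_add_distrib]
  simp [Finset.sum_ite_eq]

section ops
variable (q)

/-- the operator representing `Tᵢ` -/
def Xop (i : Fin d) : ((Fin d →₀ ℕ) →₀ K) →ₗ[K] ((Fin d →₀ ℕ) →₀ K) :=
  Finsupp.linearCombination K fun m =>
    Finsupp.single (m + Finsupp.single i 1) ((q : K) ^ cExp i m)

lemma Xop_single (i : Fin d) (m : Fin d →₀ ℕ) (r : K) :
    Xop (K := K) q i (Finsupp.single m r)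
      = Finsupp.single (m + Finsupp.single i 1) (r * (q : K) ^ cExp i m) := by
  rw [Xop, Finsupp.linearCombination_single, Finsupp.smul_single, smul_eq_mul]

lemma Xop_apply_ne_zero (i : Fin d) (v : (Fin d →₀ ℕ) →₀ K) (m' : Fin d →₀ ℕ)
    (h : Xop (K := K) q i v m' ≠ 0) :
    ∃ m, v m ≠ 0 ∧ m' = m + Finsupp.single i 1 := by
  rw [Xop, Finsupp.linearCombination_apply, Finsupp.sum, Finsupp.finset_sum_apply] at h
  obtain ⟨m, hm, hne⟩ := Finset.exists_ne_zero_of_sum_ne_zero h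
  refine ⟨m, Finsupp.mem_support_iff.1 hm, ?_⟩
  rw [Finsupp.smul_single, Finsupp.single_apply] at hne
  by_contra hc
  rw [if_neg (fun h' => hc h'.symm)] at hne
  exact hne rfl

lemma Xop_coeff (i : Fin d) (v : (Fin d →₀ ℕ) →₀ K) (m : Fin d →₀ ℕ) :
    Xop (K := K) q i v (m + Finsupp.single i 1) = v m * (q : K) ^ cExp i m := by
  rw [Xop, Finsupp.linearCombination_apply, Finsupp.sum, Finsupp.finset_sum_apply]
  have : ∀ m'' ∈ v.support,
      (v m'' • Finsupp.single (m'' + Finsupp.single i 1) ((q:K) ^ cExp i m''))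
        (m + Finsupp.single i 1)
      = if m'' = m then v m'' * (q:K) ^ cExp i m'' else 0 := by
    intro m'' _
    rw [Finsupp.smul_single, Finsupp.single_apply]
    by_cases h : m'' = m
    · subst h; simp
    · rw [if_neg (by simpa using h), if_neg h]
  rw [Finset.sum_congr rfl this, Finset.sum_ite_eq' v.support m
    (fun m'' => v m'' * (q:K) ^ cExp i m'')]
  by_cases h : m ∈ v.support
  · rw [if_pos h]
  · rw [if_neg h, Finsupp.notMem_support_iff.1 h, zero_mul]

end ops

section rep
variable (K q d)

def phiA : FreeAlgebra K (Fin d) →ₐ[K] Module.End K ((Fin d →₀ ℕ) →₀ K) :=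
  FreeAlgebra.lift K (Xop (K := K) q)

lemma phiA_rel : ∀ x y, QuantumPolyRel K q d x y → phiA K q d x = phiA K q d y := by
  rintro x y ⟨i, j, hij⟩
  simp only [map_mul, map_smul, phiA, FreeAlgebra.lift_ι_apply]
  refine Finsupp.lhom_ext fun m b => ?_
  rw [Module.End.mul_apply, LinearMap.smul_apply, Module.End.mul_apply,
    Xop_single, Xop_single, Xop_single, Xop_single, Finsupp.smul_single]
  rw [cExp_add_single, cExp_add_single, if_pos hij, if_neg (by omega)]
  congr 1
  · abel
  · rw [smul_eq_mul, pow_add, pow_add]; ring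

def Phi : QuantumPoly K q d →ₐ[K] Module.End K ((Fin d →₀ ℕ) →₀ K) :=
  RingQuot.liftAlgHom K ⟨phiA K q d, phiA_rel K q d⟩

lemma Phi_mk (x : FreeAlgebra K (Fin d)) :
    Phi K q d (RingQuot.mkAlgHom K (QuantumPolyRel K q d) x) = phiA K q d x :=
  RingQuot.liftAlgHom_mkAlgHom_apply _ _ _ _

lemma Phi_var (i : Fin d) : Phi K q d (quantumVar K q d i) = Xop (K := K) q i := by
  rw [quantumVar, Phi_mk, phiA, FreeAlgebra.lift_ι_apply]

def Em : QuantumPoly K q d →ₗ[K] ((Fin d →₀ ℕ) →₀ K) where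
  toFun x := Phi K q d x (Finsupp.single 0 1)
  map_add' x y := by simp only [map_add, LinearMap.add_apply]
  map_smul' c x := by simp only [map_smul, LinearMap.smul_apply, RingHom.id_apply]

lemma Em_mul (x y : QuantumPoly K q d) : Em K q d (x * y) = Phi K q d x (Em K q d y) := by
  simp only [Em, LinearMap.coe_mk, AddHom.coe_mk, map_mul, Module.End.mul_apply]

end rep


section vcomp
variable (K q d)

lemma listSum_single (l : Fin d →₀ ℕ) :
    ((List.finRange d).map fun j => Finsupp.single j (l j)).sum = l := by
  rw [← Fin.sum_univ_def (fun j => Finsupp.single j (l j)), Finsupp.univ_sum_single]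

variable {K q d}

lemma Xop_pow_single (i : Fin d) (n : ℕ) (m : Fin d →₀ ℕ) (r : K) :
    ∃ u : Kˣ, (Xop (K := K) q i ^ n) (Finsupp.single m r)
      = Finsupp.single (m + Finsupp.single i n) ((u : K) * r) := by
  induction n with
  | zero => exact ⟨1, by simp⟩
  | succ n ih =>
    obtain ⟨u, hu⟩ := ih
    refine ⟨u * q ^ cExp i (m + Finsupp.single i n), ?_⟩
    rw [pow_succ', Module.End.mul_apply, hu, Xop_single]
    congr 1
    · rw [add_assoc, ← Finsupp.single_add]
    · push_cast; ring

lemma Xop_list (l : Fin d →₀ ℕ) (L : List (Fin d)) (m : Fin d →₀ ℕ) (r : K) :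
    ∃ u : Kˣ, ((L.map fun j => Xop (K := K) q j ^ l j).prod) (Finsupp.single m r)
      = Finsupp.single (m + (L.map fun j => Finsupp.single j (l j)).sum) ((u : K) * r) := by
  induction L generalizing m r with
  | nil => exact ⟨1, by simp⟩
  | cons j L ih =>
    obtain ⟨u, hu⟩ := ih m r
    obtain ⟨u', hu'⟩ := Xop_pow_single (q := q) j (l j)
      (m + (L.map fun j => Finsupp.single j (l j)).sum) ((u : K) * r)
    refine ⟨u' * u, ?_⟩
    rw [List.map_cons, List.prod_cons, Module.End.mul_apply, hu, hu']
    congr 1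
    · rw [List.map_cons, List.sum_cons, add_assoc, add_comm ((L.map fun j => Finsupp.single j (l j)).sum)]
    · push_cast; ring

end vcomp


section ordmon
variable (K q d)

def ordMon (l : Fin d →₀ ℕ) : QuantumPoly K q d :=
  ((List.finRange d).map fun i => quantumVar K q d i ^ l i).prod

lemma Phi_ordMon (l : Fin d →₀ ℕ) :
    Phi K q d (ordMon K q d l) = ((List.finRange d).map fun i => Xop (K := K) q i ^ l i).prod := by
  rw [ordMon, map_list_prod, List.map_map]
  refine congrArg List.prod (List.map_congr_left fun i _ => ?_)
  simp [Function.comp, map_pow, Phi_var]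

lemma Em_apply (x : QuantumPoly K q d) : Em K q d x = Phi K q d x (Finsupp.single 0 1) := rfl

lemma Em_ordMon (l : Fin d →₀ ℕ) :
    ∃ u : Kˣ, Em K q d (ordMon K q d l) = Finsupp.single l (u : K) := by
  obtain ⟨u, hu⟩ := Xop_list (q := q) l (List.finRange d) 0 (1 : K)
  exact ⟨u, by rw [Em_apply, Phi_ordMon, hu, listSum_single, zero_add, mul_one]⟩

end ordmon

section yop
variable (q)

def Yop (c : K) (i : Fin d) : Module.End K ((Fin d →₀ ℕ) →₀ K) :=
  Xop (K := K) q i - algebraMap K _ c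

variable {q}

/-- `v` is supported on multi-indices `≤ m`. -/
def Dle (m : Fin d →₀ ℕ) (v : (Fin d →₀ ℕ) →₀ K) : Prop := ∀ m', v m' ≠ 0 → m' ≤ m

lemma not_add_single_le (i : Fin d) (m : Fin d →₀ ℕ) : ¬ (m + Finsupp.single i 1 ≤ m) := by
  intro h
  have := Finsupp.le_def.1 h i
  simp [Finsupp.add_apply] at this

lemma Ystep (c : K) (i : Fin d) (m : Fin d →₀ ℕ) (v : (Fin d →₀ ℕ) →₀ K) (hv : Dle m v) :
    Dle (m + Finsupp.single i 1) (Yop q c i v) ∧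
      Yop q c i v (m + Finsupp.single i 1) = v m * (q : K) ^ cExp i m := by
  constructor
  · intro m' hm'
    rw [Yop, LinearMap.sub_apply, Finsupp.sub_apply] at hm'
    by_cases hx : Xop (K := K) q i v m' = 0
    · rw [hx, zero_sub, neg_ne_zero, Module.algebraMap_end_apply, Finsupp.smul_apply] at hm'
      have : v m' ≠ 0 := fun h => hm' (by rw [h, smul_zero])
      exact le_trans (hv m' this) le_self_add
    · obtain ⟨m'', hm'', rfl⟩ := Xop_apply_ne_zero q i v m' hx
      exact add_le_add_left (hv m'' hm'') _
  · rw [Yop, LinearMap.sub_apply, Finsupp.sub_apply, Xop_coeff, Module.algebraMap_end_apply,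
      Finsupp.smul_apply]
    have : v (m + Finsupp.single i 1) = 0 := by
      by_contra h
      exact not_add_single_le i m (hv _ h)
    rw [this, smul_zero, sub_zero]

lemma Ypow (c : K) (i : Fin d) (n : ℕ) (m : Fin d →₀ ℕ) (v : (Fin d →₀ ℕ) →₀ K)
    (hv : Dle m v) :
    Dle (m + Finsupp.single i n) ((Yop q c i ^ n) v) ∧
      ∃ u : Kˣ, ((Yop q c i ^ n) v) (m + Finsupp.single i n) = (u : K) * v m := by
  induction n with
  | zero => exact ⟨by simpa using hv, 1, by simp⟩
  | succ n ih =>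
    obtain ⟨hd, u, hu⟩ := ih
    have key := Ystep (q := q) c i (m + Finsupp.single i n) ((Yop q c i ^ n) v) hd
    have haddr : m + Finsupp.single i n + Finsupp.single i 1 = m + Finsupp.single i (n + 1) := by
      rw [add_assoc, ← Finsupp.single_add]
    constructor
    · intro m' hm'
      rw [pow_succ', Module.End.mul_apply] at hm'
      exact haddr ▸ key.1 m' hm'
    · refine ⟨u * q ^ cExp i (m + Finsupp.single i n), ?_⟩
      rw [pow_succ', Module.End.mul_apply, ← haddr, key.2, hu]
      push_cast; ring

lemma Ylist (a : Fin d → K) (l : Fin d →₀ ℕ) (L : List (Fin d)) (m : Fin d →₀ ℕ)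
    (v : (Fin d →₀ ℕ) →₀ K) (hv : Dle m v) :
    Dle (m + (L.map fun j => Finsupp.single j (l j)).sum)
      (((L.map fun j => Yop q (a j) j ^ l j).prod) v) ∧
      ∃ u : Kˣ, (((L.map fun j => Yop q (a j) j ^ l j).prod) v)
        (m + (L.map fun j => Finsupp.single j (l j)).sum) = (u : K) * v m := by
  induction L with
  | nil => exact ⟨by simpa using hv, 1, by simp⟩
  | cons j L ih =>
    obtain ⟨hd, u, hu⟩ := ih
    have key := Ypow (q := q) (a j) j (l j) _ _ hd
    have haddr : m + (L.map fun j => Finsupp.single j (l j)).sum + Finsupp.single j (l j)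
        = m + ((j :: L).map fun j => Finsupp.single j (l j)).sum := by
      rw [List.map_cons, List.sum_cons, add_assoc,
        add_comm ((L.map fun j => Finsupp.single j (l j)).sum)]
    constructor
    · intro m' hm'
      rw [List.map_cons, List.prod_cons, Module.End.mul_apply] at hm'
      exact haddr ▸ key.1 m' hm'
    · obtain ⟨u', hu'⟩ := key.2
      refine ⟨u' * u, ?_⟩
      rw [List.map_cons, List.prod_cons, Module.End.mul_apply, ← haddr, hu', hu]
      push_cast; ring

variable (K q d)

lemma Phi_shifted (a : Fin d → K) (l : Fin d →₀ ℕ) :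
    Phi K q d (shiftedMonomial (q := q) a l)
      = ((List.finRange d).map fun i => Yop q (a i) i ^ l i).prod := by
  rw [shiftedMonomial, map_list_prod, List.map_map]
  refine congrArg List.prod (List.map_congr_left fun i _ => ?_)
  simp [Function.comp, map_pow, map_sub, Phi_var, Yop, AlgHom.commutes]

lemma Em_shifted (a : Fin d → K) (l : Fin d →₀ ℕ) :
    Dle l (Em K q d (shiftedMonomial (q := q) a l)) ∧
      Em K q d (shiftedMonomial (q := q) a l) l ≠ 0 := by
  have hv : Dle (0 : Fin d →₀ ℕ) (Finsupp.single (0 : Fin d →₀ ℕ) (1 : K)) := by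
    intro m' hm'
    rw [Finsupp.single_apply] at hm'
    by_cases h : (0 : Fin d →₀ ℕ) = m'
    · exact h ▸ le_refl _
    · simp [h] at hm'
  have key := Ylist (q := q) a l (List.finRange d) 0 _ hv
  rw [listSum_single, zero_add] at key
  obtain ⟨hd, u, hu⟩ := key
  rw [Em_apply, Phi_shifted]
  refine ⟨hd, ?_⟩
  rw [hu, Finsupp.single_eq_same, mul_one]
  exact u.ne_zero

end yop


section tri

def deg (m : Fin d →₀ ℕ) : ℕ := ∑ i, m i

lemma deg_mono {m m' : Fin d →₀ ℕ} (h : m ≤ m') : deg m ≤ deg m' :=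
  Finset.sum_le_sum fun i _ => Finsupp.le_def.1 h i

lemma eq_of_le_of_deg_le {m m' : Fin d →₀ ℕ} (h : m ≤ m') (h2 : deg m' ≤ deg m) : m = m' := by
  by_contra hne
  have : ∃ i, m i ≠ m' i := by
    by_contra hc
    push_neg at hc
    exact hne (Finsupp.ext hc)
  obtain ⟨i, hi⟩ := this
  have : deg m < deg m' :=
    Finset.sum_lt_sum (fun j _ => Finsupp.le_def.1 h j)
      ⟨i, Finset.mem_univ i, lt_of_le_of_ne (Finsupp.le_def.1 h i) hi⟩
  omega

/-- a triangular family (w.r.t. the product order, with nonzero diagonal) is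
linearly independent -/
lemma tri_linearIndependent (f : (Fin d →₀ ℕ) → ((Fin d →₀ ℕ) →₀ K))
    (hsupp : ∀ l, Dle l (f l)) (hdiag : ∀ l, f l l ≠ 0) : LinearIndependent K f := by
  rw [linearIndependent_iff']
  intro s g hsum l hl
  classical
  by_contra hg
  -- the set of indices with nonzero coefficient
  set t := s.filter (fun l' => g l' ≠ 0) with ht
  have htne : t.Nonempty := ⟨l, Finset.mem_filter.2 ⟨hl, hg⟩⟩
  obtain ⟨l₀, hl₀, hmax⟩ := Finset.exists_max_image t deg htne
  have hl₀s : l₀ ∈ s := (Finset.mem_filter.1 hl₀).1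
  have hgl₀ : g l₀ ≠ 0 := (Finset.mem_filter.1 hl₀).2
  have := congrArg (fun v : (Fin d →₀ ℕ) →₀ K => v l₀) hsum
  simp only [Finsupp.finset_sum_apply, Finsupp.smul_apply, smul_eq_mul,
    Finsupp.coe_zero, Pi.zero_apply] at this
  rw [Finset.sum_eq_single_of_mem l₀ hl₀s] at this
  · exact hgl₀ ((mul_eq_zero.1 this).resolve_right (hdiag l₀))
  · intro l' hl' hne
    by_cases hgz : g l' = 0
    · rw [hgz, zero_mul]
    · by_cases hfz : f l' l₀ = 0
      · rw [hfz, mul_zero]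
      · exfalso
        have h1 : l₀ ≤ l' := hsupp l' l₀ hfz
        have h2 : deg l' ≤ deg l₀ := hmax l' (Finset.mem_filter.2 ⟨hl', hgz⟩)
        exact hne (eq_of_le_of_deg_le h1 h2).symm
  
/-- a triangular family spans -/
lemma tri_span (f : (Fin d →₀ ℕ) → ((Fin d →₀ ℕ) →₀ K))
    (hsupp : ∀ l, Dle l (f l)) (hdiag : ∀ l, f l l ≠ 0) :
    Submodule.span K (Set.range f) = ⊤ := by
  have key : ∀ n (m : Fin d →₀ ℕ), deg m = n →
      Finsupp.single m (1 : K) ∈ Submodule.span K (Set.range f) := by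
    intro n
    induction n using Nat.strong_induction_on with
    | _ n ih =>
      intro m hm
      set P := Submodule.span K (Set.range f) with hP
      have hw : f m ∈ P := Submodule.subset_span ⟨m, rfl⟩
      set r := Finsupp.erase m (f m) with hrdef
      have hr : r ∈ P := by
        have hrs : r = ∑ m' ∈ r.support, Finsupp.single m' (r m') := (Finsupp.sum_single r).symm
        rw [hrs]
        refine Submodule.sum_mem _ fun m' hm' => ?_
        have h1 : r m' ≠ 0 := Finsupp.mem_support_iff.1 hm'
        have hne : m' ≠ m := by
          intro h; subst h; exact h1 Finsupp.erase_same
        have h2 : f m m' ≠ 0 := by rwa [hrdef, Finsupp.erase_ne hne] at h1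
        have h3 : m' ≤ m := hsupp m m' h2
        have h4 : deg m' < n := hm ▸ lt_of_le_of_ne (deg_mono h3)
          (fun h => hne (eq_of_le_of_deg_le h3 (le_of_eq h.symm)))
        have hss : Finsupp.single m' (r m') = r m' • Finsupp.single m' (1 : K) := by
          rw [Finsupp.smul_single, smul_eq_mul, mul_one]
        rw [hss]
        exact Submodule.smul_mem _ _ (ih _ h4 m' rfl)
      have hsm : Finsupp.single m (f m m) ∈ P := by
        have : Finsupp.single m (f m m) = f m - r := by
          rw [eq_sub_iff_add_eq, Finsupp.single_add_erase]
        rw [this]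
        exact Submodule.sub_mem _ hw hr
      have := Submodule.smul_mem P (f m m)⁻¹ hsm
      rwa [Finsupp.smul_single, smul_eq_mul, inv_mul_cancel₀ (hdiag m)] at this
  rw [eq_top_iff, ← Finsupp.basisSingleOne.span_eq, Submodule.span_le]
  rintro _ ⟨m, rfl⟩
  rw [Finsupp.coe_basisSingleOne]
  exact key (deg m) m rfl

end tri


section alg
variable (K q d)

lemma var_comm {i j : Fin d} (h : i < j) :
    quantumVar K q d i * quantumVar K q d j
      = (q : K) • (quantumVar K q d j * quantumVar K q d i) := by
  have := RingQuot.mkAlgHom_rel K (QuantumPolyRel.comm (q := q) i j h)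
  rw [map_mul, map_smul, map_mul] at this
  exact this

lemma var_comm' {i j : Fin d} (h : j < i) :
    quantumVar K q d i * quantumVar K q d j
      = ((q⁻¹ : Kˣ) : K) • (quantumVar K q d j * quantumVar K q d i) := by
  have := var_comm K q d h
  have h2 := congrArg (fun x => ((q⁻¹ : Kˣ) : K) • x) this
  simp only [smul_smul] at h2
  rw [Units.inv_mul, one_smul] at h2
  exact h2.symm

lemma var_comm_pow {i j : Fin d} (h : j < i) (n : ℕ) :
    ∃ u : Kˣ, quantumVar K q d i * quantumVar K q d j ^ n
      = (u : K) • (quantumVar K q d j ^ n * quantumVar K q d i) := by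
  induction n with
  | zero => exact ⟨1, by simp⟩
  | succ n ih =>
    obtain ⟨u, hu⟩ := ih
    refine ⟨u * q⁻¹, ?_⟩
    rw [pow_succ, ← mul_assoc, hu, smul_mul_assoc, mul_assoc, var_comm' K q d h,
      mul_smul_comm, smul_smul, ← mul_assoc, ← pow_succ]
    push_cast
    ring_nf

lemma var_comm_list (i : Fin d) (l : Fin d →₀ ℕ) (L : List (Fin d)) (hL : ∀ j ∈ L, j < i) :
    ∃ u : Kˣ, quantumVar K q d i * ((L.map fun j => quantumVar K q d j ^ l j).prod)
      = (u : K) • (((L.map fun j => quantumVar K q d j ^ l j).prod) * quantumVar K q d i) := by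
  induction L with
  | nil => exact ⟨1, by simp⟩
  | cons j L ih =>
    obtain ⟨u, hu⟩ := ih fun j' hj' => hL j' (List.mem_cons_of_mem _ hj')
    obtain ⟨u', hu'⟩ := var_comm_pow K q d (hL j List.mem_cons_self) (l j)
    refine ⟨u' * u, ?_⟩
    rw [List.map_cons, List.prod_cons, ← mul_assoc, hu', smul_mul_assoc, mul_assoc, hu,
      mul_smul_comm, smul_smul, ← mul_assoc]
    push_cast
    ring_nf

end alg

section split

lemma mem_take_finRange {n k : ℕ} {j : Fin n} (h : j ∈ (List.finRange n).take k) :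
    (j : ℕ) < k := by
  obtain ⟨t, ht, rfl⟩ := List.mem_iff_getElem.1 h
  have hlen := ht
  simp only [List.length_take, List.length_finRange, Nat.lt_min] at hlen
  simp only [List.getElem_take, List.getElem_finRange, Fin.coe_cast]
  exact hlen.1

lemma mem_drop_finRange {n k : ℕ} {j : Fin n} (h : j ∈ (List.finRange n).drop k) :
    k ≤ (j : ℕ) := by
  obtain ⟨t, ht, rfl⟩ := List.mem_iff_getElem.1 h
  have hlen := ht
  simp only [List.length_drop, List.length_finRange] at hlen
  rw [List.getElem_drop]
  simp only [List.getElem_finRange, Fin.coe_cast]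
  omega

lemma finRange_split {n : ℕ} (i : Fin n) :
    List.finRange n
      = (List.finRange n).take i.val ++ i :: (List.finRange n).drop (i.val + 1) := by
  conv_lhs => rw [← List.take_append_drop i.val (List.finRange n)]
  congr 1
  rw [List.drop_eq_getElem_cons (by simp [i.isLt])]
  congr 1
  simp [List.getElem_finRange]

end split


section spantop
variable (K q d)

lemma var_mul_ordMon_mem (i : Fin d) (l : Fin d →₀ ℕ) :
    quantumVar K q d i * ordMon K q d l
      ∈ Submodule.span K (Set.range (ordMon K q d)) := by
  classical
  set T := quantumVar K q d with hT
  set f : Fin d → QuantumPoly K q d := fun j => T j ^ l j with hf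
  set l' : Fin d →₀ ℕ := l + Finsupp.single i 1 with hl'
  set f' : Fin d → QuantumPoly K q d := fun j => T j ^ l' j with hf'
  set A := (List.finRange d).take i.val with hA
  set B := (List.finRange d).drop (i.val + 1) with hB
  have hAlt : ∀ j ∈ A, j < i := fun j hj => mem_take_finRange hj
  have hBgt : ∀ j ∈ B, i < j := fun j hj => by
    have := mem_drop_finRange hj; exact Fin.lt_def.2 (by omega)
  have hsplit := finRange_split i
  have hordl : ordMon K q d l = (A.map f).prod * (f i * (B.map f).prod) := by
    rw [ordMon, hsplit, List.map_append, List.prod_append, List.map_cons, List.prod_cons]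
  have hordl' : ordMon K q d l'
      = (A.map f).prod * (T i ^ (l i + 1) * (B.map f).prod) := by
    rw [ordMon, hsplit, List.map_append, List.prod_append, List.map_cons, List.prod_cons]
    have hAmap : A.map f' = A.map f := List.map_congr_left fun j hj => by
      have : i ≠ j := fun h => absurd (hAlt j hj) (by rw [h]; exact lt_irrefl j)
      simp [hf', hf, hl', Finsupp.add_apply, Finsupp.single_apply, this]
    have hBmap : B.map f' = B.map f := List.map_congr_left fun j hj => by
      have : i ≠ j := fun h => absurd (hBgt j hj) (by rw [h]; exact lt_irrefl j)
      simp [hf', hf, hl', Finsupp.add_apply, Finsupp.single_apply, this]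
    rw [hAmap, hBmap]
    congr 2
    simp [hl', Finsupp.add_apply, Finsupp.single_apply, hT]
  obtain ⟨u, hu⟩ := var_comm_list K q d i l A hAlt
  have : T i * ordMon K q d l = (u : K) • ordMon K q d l' := by
    rw [hordl, ← mul_assoc, hu, smul_mul_assoc, mul_assoc, ← mul_assoc (T i), ← pow_succ',
      hordl']
  rw [this]
  exact Submodule.smul_mem _ _ (Submodule.subset_span ⟨_, rfl⟩)

lemma one_mem_span_ordMon :
    (1 : QuantumPoly K q d) ∈ Submodule.span K (Set.range (ordMon K q d)) := by
  have : ordMon K q d 0 = 1 := by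
    rw [ordMon]
    apply List.prod_eq_one
    intro x hx
    obtain ⟨j, _, rfl⟩ := List.mem_map.1 hx
    simp
  exact this ▸ Submodule.subset_span ⟨0, rfl⟩

lemma var_mul_mem (i : Fin d) (x : QuantumPoly K q d)
    (hx : x ∈ Submodule.span K (Set.range (ordMon K q d))) :
    quantumVar K q d i * x ∈ Submodule.span K (Set.range (ordMon K q d)) := by
  induction hx using Submodule.span_induction with
  | mem x h =>
    obtain ⟨l, rfl⟩ := h
    exact var_mul_ordMon_mem K q d i l
  | zero => rw [mul_zero]; exact Submodule.zero_mem _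
  | add x y hx hy ihx ihy => rw [mul_add]; exact Submodule.add_mem _ ihx ihy
  | smul c x hx ih => rw [mul_smul_comm]; exact Submodule.smul_mem _ _ ih

lemma span_ordMon_eq_top :
    Submodule.span K (Set.range (ordMon K q d)) = ⊤ := by
  rw [eq_top_iff]
  rintro x -
  obtain ⟨y, rfl⟩ := RingQuot.mkAlgHom_surjective K (QuantumPolyRel K q d) x
  have key : ∀ y : FreeAlgebra K (Fin d), ∀ z ∈ Submodule.span K (Set.range (ordMon K q d)),
      RingQuot.mkAlgHom K (QuantumPolyRel K q d) y * z
        ∈ Submodule.span K (Set.range (ordMon K q d)) := by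
    intro y
    induction y using FreeAlgebra.induction with
    | grade0 r =>
      intro z hz
      rw [AlgHom.commutes, ← Algebra.smul_def]
      exact Submodule.smul_mem _ _ hz
    | grade1 i =>
      intro z hz
      exact var_mul_mem K q d i z hz
    | mul x y ihx ihy =>
      intro z hz
      rw [map_mul, mul_assoc]
      exact ihx _ (ihy z hz)
    | add x y ihx ihy =>
      intro z hz
      rw [map_add, add_mul]
      exact Submodule.add_mem _ (ihx z hz) (ihy z hz)
  have := key y 1 (one_mem_span_ordMon K q d)
  rwa [mul_one] at this

end spantop


section inj
variable (K q d)

lemma Em_injective : Function.Injective (Em K q d) := by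
  classical
  have hker : ∀ x, Em K q d x = 0 → x = 0 := by
    intro x hx
    have hx' : x ∈ Submodule.span K (Set.range (ordMon K q d)) := by
      rw [span_ordMon_eq_top]; trivial
    rw [Finsupp.mem_span_range_iff_exists_finsupp] at hx'
    obtain ⟨c, hc⟩ := hx'
    choose U hU using Em_ordMon K q d
    have hEm : Em K q d x = c.sum fun l r => r • Finsupp.single l ((U l : K)) := by
      rw [← hc, map_finsuppSum]
      refine Finsupp.sum_congr fun l _ => ?_
      rw [map_smul, hU]
    have hcz : c = 0 := by
      ext l₀
      by_contra h0
      have hv := congrArg (fun v : (Fin d →₀ ℕ) →₀ K => v l₀) hEm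
      rw [hx] at hv
      simp only [Finsupp.coe_zero, Pi.zero_apply] at hv
      rw [Finsupp.sum_apply, Finsupp.sum,
        Finset.sum_eq_single_of_mem l₀ (Finsupp.mem_support_iff.2 h0)] at hv
      · rw [Finsupp.smul_apply, Finsupp.single_eq_same, smul_eq_mul] at hv
        exact h0 ((mul_eq_zero.1 hv.symm).resolve_right (U l₀).ne_zero)
      · intro l hl hne
        rw [Finsupp.smul_apply, Finsupp.single_eq_of_ne' hne, smul_zero]
    rw [hcz, Finsupp.sum_zero_index] at hc
    exact hc.symm
  intro x y h
  have := hker (x - y) (by rw [map_sub, h, sub_self])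
  exact sub_eq_zero.1 this

end inj
end QPB

/-- The ordered products `(T₁ - a₁)^{l 1} ⋯ (T_d - a_d)^{l d}`, indexed by multi-indices
`l : Fin d →₀ ℕ`, form a `K`-vector space basis of the quantum polynomial algebra
`K[T₁,…,T_d]_q`. -/
theorem shiftedMonomials_isBasis (K : Type*) [Field K] (q : Kˣ) (d : ℕ) (a : Fin d → K) :
    LinearIndependent K (fun l : Fin d →₀ ℕ => (shiftedMonomial (q := q) a l)) ∧
      Submodule.span K (Set.range fun l : Fin d →₀ ℕ =>
        (shiftedMonomial (q := q) a l)) = ⊤ := by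
  classical
  have hsupp := fun l => (QPB.Em_shifted K q d a l).1
  have hdiag := fun l => (QPB.Em_shifted K q d a l).2
  constructor
  · have h := QPB.tri_linearIndependent
      (fun l => QPB.Em K q d (shiftedMonomial (q := q) a l)) hsupp hdiag
    exact LinearIndependent.of_comp (QPB.Em K q d) h
  · have hmap : Submodule.map (QPB.Em K q d)
        (Submodule.span K (Set.range fun l : Fin d →₀ ℕ => shiftedMonomial (q := q) a l))
        = Submodule.span K
            (Set.range fun l => QPB.Em K q d (shiftedMonomial (q := q) a l)) := by
      rw [Submodule.map_span, ← Set.range_comp]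
      rfl
    have htop : Submodule.span K
        (Set.range fun l => QPB.Em K q d (shiftedMonomial (q := q) a l)) = ⊤ :=
      QPB.tri_span _ hsupp hdiag
    have hmapt : Submodule.map (QPB.Em K q d) ⊤ = ⊤ := by
      have h2 : Submodule.map (QPB.Em K q d)
          (Submodule.span K (Set.range fun l : Fin d →₀ ℕ => shiftedMonomial (q := q) a l))
          ≤ Submodule.map (QPB.Em K q d) ⊤ := Submodule.map_mono le_top
      rw [hmap, htop] at h2
      exact top_unique h2
    apply Submodule.map_injective_of_injective (QPB.Em_injective K q d)
    rw [hmap, htop, hmapt]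
end
end

section
/- Let K be a non-archimedean valuation field, q ∈ Kˣ a unit with ‖q‖ = 1 and ‖1 − q‖ < 1, d a natural number, ρ : Fin d → ℝ with ρ(i) > 0 for all i, and a : Fin d → K with ‖a(i)‖ ≤ ρ(i) for all i. Let b be a K-basis of the quantum polynomial algebra K[T₁,…,T_d]_q indexed by multi-indices l ∈ (Fin d →₀ ℕ) such that b(l) = (T₁ − a₁)^{l(1)}·(T₂ − a₂)^{l(2)}⋯(T_d − a_d)^{l(d)} (ordered products, factors in increasing order of index). Define ν_{a,ρ}(f) = ⨆_l ‖(coordinate of f in the basis b at index l)‖·∏ᵢ ρ(i)^{l(i)} (this supremum is a maximum over the finite support). Then ν_{a,ρ} is multiplicative: ν_{a,ρ}(f·g) = ν_{a,ρ}(f)·ν_{a,ρ}(g) for all f, g in K[T₁,…,T_d]_q; in particular ν_{a,ρ} defines a multiplicative seminorm on the quantum polynomial algebra. -/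
namespace QPaux

variable {K : Type*} [Field K] {d : ℕ} (q : Kˣ) (a : Fin d → K) (ρ : Fin d → ℝ)

noncomputable def V (i : Fin d) : QuantumPoly K q d :=
  quantumVar K q d i - algebraMap K (QuantumPoly K q d) (a i)

noncomputable def W (w : List (Fin d)) : QuantumPoly K q d := (w.map (V q a)).prod

noncomputable def mu (w : List (Fin d)) : Fin d →₀ ℕ := Multiset.toFinsupp (w : Multiset (Fin d))

def Rho (k : Fin d →₀ ℕ) : ℝ := ∏ i, ρ i ^ k i

@[simp] lemma W_nil : W q a ([] : List (Fin d)) = 1 := rfl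

lemma W_append (u v : List (Fin d)) : W q a (u ++ v) = W q a u * W q a v := by
  simp [W, List.prod_append]

lemma W_cons (i : Fin d) (v : List (Fin d)) : W q a (i :: v) = V q a i * W q a v := by
  simp [W]

@[simp] lemma mu_nil : mu ([] : List (Fin d)) = 0 := by simp [mu]

lemma mu_append (u v : List (Fin d)) : mu (u ++ v) = mu u + mu v := by
  simp [mu, ← Multiset.coe_add]

lemma mu_cons (i : Fin d) (v : List (Fin d)) :
    mu (i :: v) = Finsupp.single i 1 + mu v := by
  ext j
  rw [mu, mu, Multiset.toFinsupp_apply, Finsupp.add_apply, Finsupp.single_apply,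
    Multiset.toFinsupp_apply, ← Multiset.cons_coe, Multiset.count_cons]
  rcases eq_or_ne j i with rfl | h
  · simp [add_comm]
  · simp [h, Ne.symm h]

lemma Rho_add (k k' : Fin d →₀ ℕ) : Rho ρ (k + k') = Rho ρ k * Rho ρ k' := by
  simp [Rho, pow_add, Finset.prod_mul_distrib]

lemma Rho_single (i : Fin d) : Rho ρ (Finsupp.single i 1) = ρ i := by
  rw [Rho, Finset.prod_eq_single i]
  · simp
  · intro j _ hj; simp [Finsupp.single_apply, hj.symm, Ne.symm hj]
  · simp

lemma Rho_pos (hρ : ∀ i, 0 < ρ i) (k : Fin d →₀ ℕ) : 0 < Rho ρ k :=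
  Finset.prod_pos fun i _ => pow_pos (hρ i) _

/-- canonical sorted word -/
def cList (l : Fin d →₀ ℕ) : List (Fin d) :=
  (List.finRange d).flatMap fun i => List.replicate (l i) i

lemma W_cList (l : Fin d →₀ ℕ) : W q a (cList l) = shiftedMonomial (q := q) a l := by
  simp only [W, cList, shiftedMonomial]
  rw [List.map_flatMap]
  simp only [List.flatMap_def, List.prod_flatten, List.map_map, Function.comp_def,
    List.map_replicate, List.prod_replicate, V]

lemma sorted_cList (l : Fin d →₀ ℕ) : (cList l).Pairwise (· ≤ ·) := by
  rw [cList, List.pairwise_flatMap]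
  refine ⟨fun i _ => ?_, ?_⟩
  · rw [List.pairwise_replicate]; exact Or.inr le_rfl
  · refine (List.pairwise_lt_finRange d).imp ?_
    intro i j hij x hx y hy
    rw [List.eq_of_mem_replicate hx, List.eq_of_mem_replicate hy]
    exact hij.le

lemma mu_replicate (n : ℕ) (i : Fin d) : mu (List.replicate n i) = Finsupp.single i n := by
  induction n with
  | zero => simp
  | succ n ih =>
    rw [List.replicate_succ, mu_cons, ih, ← Finsupp.single_add, add_comm]

lemma mu_flatMap (L : List (Fin d)) (f : Fin d → List (Fin d)) :
    mu (L.flatMap f) = (L.map fun i => mu (f i)).sum := by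
  induction L with
  | nil => simp
  | cons x t ih => rw [List.flatMap_cons, mu_append, ih, List.map_cons, List.sum_cons]

lemma mu_cList (l : Fin d →₀ ℕ) : mu (cList l) = l := by
  rw [cList, mu_flatMap]
  have : ∀ i : Fin d, mu (List.replicate (l i) i) = Finsupp.single i (l i) :=
    fun i => mu_replicate _ _
  simp only [this]
  rw [← Fin.sum_univ_def]
  exact Finsupp.univ_sum_single l

lemma sorted_eq_cList {w : List (Fin d)} (hw : w.Pairwise (· ≤ ·)) : w = cList (mu w) := by
  refine List.Perm.eq_of_pairwise' hw (sorted_cList _) ?_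
  rw [← Multiset.coe_eq_coe]
  have : mu w = mu (cList (mu w)) := (mu_cList (mu w)).symm
  exact Multiset.toFinsupp.injective this

-- part2

def inv : List (Fin d) → ℕ
  | [] => 0
  | x :: t => t.countP (fun y => decide (y < x)) + inv t

lemma inv_append (u v : List (Fin d)) :
    inv (u ++ v) = inv u + (u.map fun x => v.countP (fun y => decide (y < x))).sum + inv v := by
  induction u with
  | nil => simp [inv]
  | cons x t ih =>
    simp only [List.cons_append, inv, ih, List.map_cons, List.sum_cons]
    rw [List.countP_append]
    omega

lemma countP_perm {v v' : List (Fin d)} (h : v.Perm v') (p : Fin d → Bool) :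
    v.countP p = v'.countP p := h.countP_eq p

lemma inv_swap {i j : Fin d} (h : i < j) (u v : List (Fin d)) :
    inv (u ++ j :: i :: v) = inv (u ++ i :: j :: v) + 1 := by
  have hperm : (i :: j :: v).Perm (j :: i :: v) := List.Perm.swap _ _ _
  rw [inv_append, inv_append]
  have h1 : ∀ x : Fin d, (j :: i :: v).countP (fun y => decide (y < x)) =
      (i :: j :: v).countP (fun y => decide (y < x)) := fun x => (hperm.countP_eq _).symm
  simp only [h1]
  have h2 : inv (j :: i :: v) = inv (i :: j :: v) + 1 := by
    simp only [inv, List.countP_cons]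
    have : ¬ (j < i) := not_lt.2 h.le
    simp [h, this]
    ring
  omega

lemma exists_desc : ∀ (w : List (Fin d)), ¬ w.Pairwise (· ≤ ·) →
    ∃ (u : List (Fin d)) (i j : Fin d) (v : List (Fin d)), w = u ++ j :: i :: v ∧ i < j
  | [], hw => absurd List.Pairwise.nil hw
  | [x], hw => absurd (List.pairwise_singleton _ x) hw
  | x :: y :: t, hw => by
    by_cases hxy : x ≤ y
    · by_cases ht : (y :: t).Pairwise (· ≤ ·)
      · exact absurd (List.pairwise_cons.2 ⟨fun b hb => by rcases List.mem_cons.1 hb with rfl | hb; exacts [hxy, hxy.trans (List.rel_of_pairwise_cons ht hb)], ht⟩) hw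
      · obtain ⟨u, i, j, v, he, hij⟩ := exists_desc (y :: t) ht
        exact ⟨x :: u, i, j, v, by simp [he], hij⟩
    · exact ⟨[], y, x, t, by simp, not_le.1 hxy⟩


-- part3
lemma T_comm {i j : Fin d} (h : i < j) :
    quantumVar K q d i * quantumVar K q d j = (q : K) • (quantumVar K q d j * quantumVar K q d i) := by
  have := RingQuot.mkAlgHom_rel K (QuantumPolyRel.comm (K := K) (q := q) i j h)
  simpa [quantumVar, map_mul, map_smul] using this

lemma T_comm' {i j : Fin d} (h : i < j) :
    quantumVar K q d j * quantumVar K q d i = ((q : K)⁻¹) • (quantumVar K q d i * quantumVar K q d j) := by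
  rw [T_comm q h, smul_smul, inv_mul_cancel₀ q.ne_zero, one_smul]

lemma V_comm {i j : Fin d} (h : i < j) :
    V q a j * V q a i = ((q : K)⁻¹) • (V q a i * V q a j)
      + (((q : K)⁻¹ - 1) * a i) • V q a j
      + (((q : K)⁻¹ - 1) * a j) • V q a i
      + (((q : K)⁻¹ - 1) * (a i * a j)) • (1 : QuantumPoly K q d) := by
  simp only [V, sub_mul, mul_sub, Algebra.algebraMap_eq_smul_one, smul_mul_assoc,
    mul_smul_comm, one_mul, mul_one, T_comm' q h]
  module

lemma W_swap {i j : Fin d} (h : i < j) (u v : List (Fin d)) :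
    W q a (u ++ j :: i :: v) = ((q : K)⁻¹) • W q a (u ++ i :: j :: v)
      + (((q : K)⁻¹ - 1) * a i) • W q a (u ++ j :: v)
      + (((q : K)⁻¹ - 1) * a j) • W q a (u ++ i :: v)
      + (((q : K)⁻¹ - 1) * (a i * a j)) • W q a (u ++ v) := by
  simp only [W_append, W_cons, ← mul_assoc]
  rw [show W q a u * V q a j * V q a i = W q a u * (V q a j * V q a i) from by rw [mul_assoc],
    V_comm q a h]
  simp only [mul_add, add_mul, mul_smul_comm, smul_mul_assoc, mul_one, one_mul, mul_assoc]


-- part4 : the main word estimate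
section Word

variable {K₀ : Type*} [NormedField K₀] [IsUltrametricDist K₀] {d₀ : ℕ} {q₀ : K₀ˣ}
  {a₀ : Fin d₀ → K₀} {ρ₀ : Fin d₀ → ℝ}

theorem word_bound (hq : ‖(q₀ : K₀)‖ = 1) (hq1 : ‖1 - (q₀ : K₀)‖ < 1)
    (hρ : ∀ i, 0 < ρ₀ i) (ha : ∀ i, ‖a₀ i‖ ≤ ρ₀ i)
    (B : Module.Basis (Fin d₀ →₀ ℕ) K₀ (QuantumPoly K₀ q₀ d₀))
    (hB : ∀ l, B l = shiftedMonomial (q := q₀) a₀ l) (w : List (Fin d₀)) :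
    ‖B.repr (W q₀ a₀ w) (mu w)‖ = 1 ∧
      ∀ k, k ≠ mu w →
        ‖B.repr (W q₀ a₀ w) k‖ * Rho ρ₀ k ≤ ‖1 - (q₀ : K₀)‖ * Rho ρ₀ (mu w) := by
  set θ : ℝ := ‖1 - (q₀ : K₀)‖ with hθdef
  have hθ0 : 0 ≤ θ := norm_nonneg _
  by_cases hw : w.Pairwise (· ≤ ·)
  · have hWB : W q₀ a₀ w = B (mu w) := by
      rw [sorted_eq_cList hw, W_cList, ← hB, mu_cList]
    rw [hWB, B.repr_self]
    constructor
    · simp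
    · intro k hk
      rw [Finsupp.single_apply, if_neg (Ne.symm hk)]
      simp only [norm_zero, zero_mul]
      exact mul_nonneg hθ0 (Rho_pos ρ₀ hρ _).le
  · obtain ⟨u, i, j, v, hwe, hij⟩ := exists_desc _ hw
    rw [hwe]
    -- abbreviations
    set c : K₀ := (q₀ : K₀)⁻¹ with hc
    have hcnorm : ‖c‖ = 1 := by rw [hc, norm_inv, hq, inv_one]
    have hc1 : ‖c - 1‖ = θ := by
      have h1 : c - 1 = c * (1 - (q₀ : K₀)) := by
        rw [hc, mul_sub, mul_one, inv_mul_cancel₀ q₀.ne_zero]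
      rw [h1, norm_mul, hcnorm, one_mul]
    -- the four smaller words
    have IH0 := word_bound hq hq1 hρ ha B hB (u ++ i :: j :: v)
    have IH1 := word_bound hq hq1 hρ ha B hB (u ++ j :: v)
    have IH2 := word_bound hq hq1 hρ ha B hB (u ++ i :: v)
    have IH3 := word_bound hq hq1 hρ ha B hB (u ++ v)
    -- weak bounds (2')
    have weak : ∀ (w' : List (Fin d₀)),
        (‖B.repr (W q₀ a₀ w') (mu w')‖ = 1 ∧
          ∀ k, k ≠ mu w' → ‖B.repr (W q₀ a₀ w') k‖ * Rho ρ₀ k ≤ θ * Rho ρ₀ (mu w')) →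
        ∀ k, ‖B.repr (W q₀ a₀ w') k‖ * Rho ρ₀ k ≤ Rho ρ₀ (mu w') := by
      intro w' h k
      rcases eq_or_ne k (mu w') with rfl | hk
      · rw [h.1, one_mul]
      · exact (h.2 k hk).trans (by
          have := Rho_pos ρ₀ hρ (mu w')
          nlinarith [hq1.le])
    have IH0' := weak _ IH0
    have IH1' := weak _ IH1
    have IH2' := weak _ IH2
    have IH3' := weak _ IH3
    -- multiset identities
    have hm0 : mu (u ++ i :: j :: v) = mu (u ++ j :: i :: v) := by
      simp only [mu_append, mu_cons]; abel
    have hm1 : Rho ρ₀ (mu (u ++ j :: i :: v)) = Rho ρ₀ (mu (u ++ j :: v)) * ρ₀ i := by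
      have : mu (u ++ j :: i :: v) = mu (u ++ j :: v) + Finsupp.single i 1 := by
        simp only [mu_append, mu_cons]; abel
      rw [this, Rho_add, Rho_single]
    have hm2 : Rho ρ₀ (mu (u ++ j :: i :: v)) = Rho ρ₀ (mu (u ++ i :: v)) * ρ₀ j := by
      have : mu (u ++ j :: i :: v) = mu (u ++ i :: v) + Finsupp.single j 1 := by
        simp only [mu_append, mu_cons]; abel
      rw [this, Rho_add, Rho_single]
    have hm3 : Rho ρ₀ (mu (u ++ j :: i :: v)) = Rho ρ₀ (mu (u ++ v)) * (ρ₀ i * ρ₀ j) := by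
      have : mu (u ++ j :: i :: v) = mu (u ++ v) + (Finsupp.single i 1 + Finsupp.single j 1) := by
        simp only [mu_append, mu_cons]; abel
      rw [this, Rho_add, Rho_add, Rho_single, Rho_single]
    set m : Fin d₀ →₀ ℕ := mu (u ++ j :: i :: v) with hm
    have hMpos : 0 < Rho ρ₀ m := Rho_pos ρ₀ hρ m
    -- coefficientwise decomposition
    have hrepr : ∀ k, B.repr (W q₀ a₀ (u ++ j :: i :: v)) k
        = c * B.repr (W q₀ a₀ (u ++ i :: j :: v)) k
          + ((c - 1) * a₀ i) * B.repr (W q₀ a₀ (u ++ j :: v)) k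
          + ((c - 1) * a₀ j) * B.repr (W q₀ a₀ (u ++ i :: v)) k
          + ((c - 1) * (a₀ i * a₀ j)) * B.repr (W q₀ a₀ (u ++ v)) k := by
      intro k
      rw [W_swap q₀ a₀ hij u v]
      simp [Finsupp.add_apply, Finsupp.smul_apply, smul_eq_mul]
      rw [hc]
    -- norms of the scalar coefficients
    have hn1 : ‖(c - 1) * a₀ i‖ ≤ θ * ρ₀ i := by
      rw [norm_mul, hc1]
      exact mul_le_mul_of_nonneg_left (ha i) hθ0
    have hn2 : ‖(c - 1) * a₀ j‖ ≤ θ * ρ₀ j := by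
      rw [norm_mul, hc1]
      exact mul_le_mul_of_nonneg_left (ha j) hθ0
    have hn3 : ‖(c - 1) * (a₀ i * a₀ j)‖ ≤ θ * (ρ₀ i * ρ₀ j) := by
      rw [norm_mul, hc1, norm_mul]
      have := mul_le_mul (ha i) (ha j) (norm_nonneg _) (hρ i).le
      exact mul_le_mul_of_nonneg_left this hθ0
    -- bounds for the three correction terms, valid at every k
    have hcor : ∀ k, ‖((c - 1) * a₀ i) * B.repr (W q₀ a₀ (u ++ j :: v)) k
          + ((c - 1) * a₀ j) * B.repr (W q₀ a₀ (u ++ i :: v)) k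
          + ((c - 1) * (a₀ i * a₀ j)) * B.repr (W q₀ a₀ (u ++ v)) k‖ * Rho ρ₀ k
          ≤ θ * Rho ρ₀ m := by
      intro k
      have hb1 : ‖((c - 1) * a₀ i) * B.repr (W q₀ a₀ (u ++ j :: v)) k‖ * Rho ρ₀ k
          ≤ θ * Rho ρ₀ m := by
        rw [norm_mul, mul_assoc]
        calc ‖(c - 1) * a₀ i‖ * (‖B.repr (W q₀ a₀ (u ++ j :: v)) k‖ * Rho ρ₀ k)
            ≤ (θ * ρ₀ i) * Rho ρ₀ (mu (u ++ j :: v)) := by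
              exact mul_le_mul hn1 (IH1' k)
                (mul_nonneg (norm_nonneg _) (Rho_pos ρ₀ hρ k).le)
                (mul_nonneg hθ0 (hρ i).le)
          _ = θ * Rho ρ₀ m := by rw [hm1]; ring
      have hb2 : ‖((c - 1) * a₀ j) * B.repr (W q₀ a₀ (u ++ i :: v)) k‖ * Rho ρ₀ k
          ≤ θ * Rho ρ₀ m := by
        rw [norm_mul, mul_assoc]
        calc ‖(c - 1) * a₀ j‖ * (‖B.repr (W q₀ a₀ (u ++ i :: v)) k‖ * Rho ρ₀ k)
            ≤ (θ * ρ₀ j) * Rho ρ₀ (mu (u ++ i :: v)) := by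
              exact mul_le_mul hn2 (IH2' k)
                (mul_nonneg (norm_nonneg _) (Rho_pos ρ₀ hρ k).le)
                (mul_nonneg hθ0 (hρ j).le)
          _ = θ * Rho ρ₀ m := by rw [hm2]; ring
      have hb3 : ‖((c - 1) * (a₀ i * a₀ j)) * B.repr (W q₀ a₀ (u ++ v)) k‖ * Rho ρ₀ k
          ≤ θ * Rho ρ₀ m := by
        rw [norm_mul, mul_assoc]
        calc ‖(c - 1) * (a₀ i * a₀ j)‖ * (‖B.repr (W q₀ a₀ (u ++ v)) k‖ * Rho ρ₀ k)
            ≤ (θ * (ρ₀ i * ρ₀ j)) * Rho ρ₀ (mu (u ++ v)) := by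
              exact mul_le_mul hn3 (IH3' k)
                (mul_nonneg (norm_nonneg _) (Rho_pos ρ₀ hρ k).le)
                (mul_nonneg hθ0 (mul_pos (hρ i) (hρ j)).le)
          _ = θ * Rho ρ₀ m := by rw [hm3]; ring
      have hRk : 0 ≤ Rho ρ₀ k := (Rho_pos ρ₀ hρ k).le
      have tri : ‖((c - 1) * a₀ i) * B.repr (W q₀ a₀ (u ++ j :: v)) k
          + ((c - 1) * a₀ j) * B.repr (W q₀ a₀ (u ++ i :: v)) k
          + ((c - 1) * (a₀ i * a₀ j)) * B.repr (W q₀ a₀ (u ++ v)) k‖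
          ≤ max (max ‖((c - 1) * a₀ i) * B.repr (W q₀ a₀ (u ++ j :: v)) k‖
              ‖((c - 1) * a₀ j) * B.repr (W q₀ a₀ (u ++ i :: v)) k‖)
            ‖((c - 1) * (a₀ i * a₀ j)) * B.repr (W q₀ a₀ (u ++ v)) k‖ :=
        (IsUltrametricDist.norm_add_le_max _ _).trans
          (max_le_max (IsUltrametricDist.norm_add_le_max _ _) le_rfl)
      have := mul_le_mul_of_nonneg_right tri hRk
      refine this.trans ?_
      rw [max_mul_of_nonneg _ _ hRk, max_mul_of_nonneg _ _ hRk]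
      exact max_le (max_le hb1 hb2) hb3
    constructor
    · -- norm of the top coefficient is 1
      rw [hrepr m]
      rw [add_assoc, add_assoc, ← add_assoc (((c - 1) * a₀ i) * _)]
      have hmain : ‖c * B.repr (W q₀ a₀ (u ++ i :: j :: v)) m‖ = 1 := by
        have h10 := IH0.1
        rw [hm0] at h10
        rw [norm_mul, hcnorm, one_mul, h10]
      have hrest : ‖((c - 1) * a₀ i) * B.repr (W q₀ a₀ (u ++ j :: v)) m
          + ((c - 1) * a₀ j) * B.repr (W q₀ a₀ (u ++ i :: v)) m
          + ((c - 1) * (a₀ i * a₀ j)) * B.repr (W q₀ a₀ (u ++ v)) m‖ < 1 := by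
        have h := hcor m
        have hle : ‖((c - 1) * a₀ i) * B.repr (W q₀ a₀ (u ++ j :: v)) m
            + ((c - 1) * a₀ j) * B.repr (W q₀ a₀ (u ++ i :: v)) m
            + ((c - 1) * (a₀ i * a₀ j)) * B.repr (W q₀ a₀ (u ++ v)) m‖ ≤ θ :=
          le_of_mul_le_mul_right h hMpos
        exact lt_of_le_of_lt hle hq1
      have hne : ‖c * B.repr (W q₀ a₀ (u ++ i :: j :: v)) m‖
          ≠ ‖((c - 1) * a₀ i) * B.repr (W q₀ a₀ (u ++ j :: v)) m
          + ((c - 1) * a₀ j) * B.repr (W q₀ a₀ (u ++ i :: v)) m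
          + ((c - 1) * (a₀ i * a₀ j)) * B.repr (W q₀ a₀ (u ++ v)) m‖ := by
        rw [hmain]; exact (ne_of_lt hrest).symm
      rw [IsUltrametricDist.norm_add_eq_max_of_norm_ne_norm hne, hmain]
      exact max_eq_left hrest.le
    · intro k hk
      rw [hrepr k]
      have hRk : 0 ≤ Rho ρ₀ k := (Rho_pos ρ₀ hρ k).le
      have hb0 : ‖c * B.repr (W q₀ a₀ (u ++ i :: j :: v)) k‖ * Rho ρ₀ k ≤ θ * Rho ρ₀ m := by
        rw [norm_mul, hcnorm, one_mul]
        have := IH0.2 k (by rw [hm0]; exact hk)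
        rw [hm0] at this
        exact this
      have tri : ‖c * B.repr (W q₀ a₀ (u ++ i :: j :: v)) k
          + ((c - 1) * a₀ i) * B.repr (W q₀ a₀ (u ++ j :: v)) k
          + ((c - 1) * a₀ j) * B.repr (W q₀ a₀ (u ++ i :: v)) k
          + ((c - 1) * (a₀ i * a₀ j)) * B.repr (W q₀ a₀ (u ++ v)) k‖
          ≤ max ‖c * B.repr (W q₀ a₀ (u ++ i :: j :: v)) k‖
              (‖((c - 1) * a₀ i) * B.repr (W q₀ a₀ (u ++ j :: v)) k
                + ((c - 1) * a₀ j) * B.repr (W q₀ a₀ (u ++ i :: v)) k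
                + ((c - 1) * (a₀ i * a₀ j)) * B.repr (W q₀ a₀ (u ++ v)) k‖) := by
        rw [add_assoc, add_assoc, ← add_assoc (((c - 1) * a₀ i) * _)]
        exact IsUltrametricDist.norm_add_le_max _ _
      have := mul_le_mul_of_nonneg_right tri hRk
      refine this.trans ?_
      rw [max_mul_of_nonneg _ _ hRk]
      exact max_le hb0 (hcor k)
termination_by (w.length, inv w)
decreasing_by
  · simp_wf
    rw [Prod.lex_iff]
    refine Or.inr ⟨by simp [hwe], ?_⟩
    have h := inv_swap hij u v
    rw [hwe]
    omega
  · simp_wf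
    exact Prod.Lex.left _ _ (by simp [hwe]; try omega)
  · simp_wf
    exact Prod.Lex.left _ _ (by simp [hwe]; try omega)
  · simp_wf
    exact Prod.Lex.left _ _ (by simp [hwe]; try omega)

end Word

end QPaux

/-- Let `K` be a non-archimedean valuation field, `q` a unit with `‖q‖ = 1` and
`‖1 - q‖ < 1`, `ρᵢ > 0` and `‖aᵢ‖ ≤ ρᵢ`. Expanding elements of `K[T₁,…,T_d]_q` in the
basis of ordered products `(T₁-a₁)^{l 1} ⋯ (T_d-a_d)^{l d}`, the seminorm
`ν_{a,ρ}(f) = ⨆_l ‖coeff of f at l‖ ∏ᵢ ρᵢ^{l i}` is multiplicative. -/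
theorem quantumPoly_nu_multiplicative {K : Type*} [NormedField K] [IsUltrametricDist K]
    {d : ℕ} (q : Kˣ) (hq : ‖(q : K)‖ = 1) (hq1 : ‖1 - (q : K)‖ < 1)
    (ρ : Fin d → ℝ) (hρ : ∀ i, 0 < ρ i)
    (a : Fin d → K) (ha : ∀ i, ‖a i‖ ≤ ρ i)
    (B : Module.Basis (Fin d →₀ ℕ) K (QuantumPoly K q d))
    (hB : ∀ l : Fin d →₀ ℕ, B l = shiftedMonomial (q := q) a l)
    (f g : QuantumPoly K q d) :
    (⨆ l : Fin d →₀ ℕ, ‖B.repr (f * g) l‖ * ∏ i, ρ i ^ l i) =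
      (⨆ l : Fin d →₀ ℕ, ‖B.repr f l‖ * ∏ i, ρ i ^ l i) *
        (⨆ l : Fin d →₀ ℕ, ‖B.repr g l‖ * ∏ i, ρ i ^ l i) := by
  classical
  open QPaux in
  show (⨆ l, ‖B.repr (f * g) l‖ * Rho ρ l) =
      (⨆ l, ‖B.repr f l‖ * Rho ρ l) * (⨆ l, ‖B.repr g l‖ * Rho ρ l)
  set F : QuantumPoly K q d → (Fin d →₀ ℕ) → ℝ :=
    fun h l => ‖B.repr h l‖ * QPaux.Rho ρ l with hF
  have hFnonneg : ∀ h l, 0 ≤ F h l :=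
    fun h l => mul_nonneg (norm_nonneg _) (QPaux.Rho_pos ρ hρ l).le
  have hfin : ∀ h : QuantumPoly K q d, (Set.range (F h)).Finite := by
    intro h
    apply Set.Finite.subset
      (Set.Finite.insert 0 (Set.Finite.image (F h) (B.repr h).support.finite_toSet))
    rintro _ ⟨l, rfl⟩
    by_cases hl : l ∈ (B.repr h).support
    · exact Set.mem_insert_of_mem _ ⟨l, hl, rfl⟩
    · have : F h l = 0 := by
        simp [hF, Finsupp.notMem_support_iff.1 hl]
      rw [this]; exact Set.mem_insert _ _
  have hbdd : ∀ h : QuantumPoly K q d, BddAbove (Set.range (F h)) :=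
    fun h => (hfin h).bddAbove
  have hle : ∀ (h : QuantumPoly K q d) l, F h l ≤ ⨆ l', F h l' :=
    fun h l => le_ciSup (hbdd h) l
  have hmem : ∀ h : QuantumPoly K q d, ∃ l, (⨆ l', F h l') = F h l := by
    intro h
    have hne : (Set.range (F h)).Nonempty := ⟨F h 0, ⟨0, rfl⟩⟩
    obtain ⟨l, hl⟩ := hne.csSup_mem (hfin h)
    exact ⟨l, by rw [iSup, hl]⟩
  by_cases hf0 : f = 0
  · subst hf0
    simp only [zero_mul, map_zero, Finsupp.coe_zero, Pi.zero_apply, norm_zero, ciSup_const]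
  by_cases hg0 : g = 0
  · subst hg0
    simp only [mul_zero, map_zero, Finsupp.coe_zero, Pi.zero_apply, norm_zero, ciSup_const,
      zero_mul]
  -- nontrivial case
  set θ : ℝ := ‖1 - (q : K)‖ with hθ
  have hθ0 : 0 ≤ θ := norm_nonneg _
  set νf : ℝ := ⨆ l, F f l with hνf
  set νg : ℝ := ⨆ l, F g l with hνg
  have hνfpos : 0 < νf := by
    have hne : B.repr f ≠ 0 := fun hr => hf0 (by
      have := congrArg B.repr.symm hr
      simpa using this)
    obtain ⟨l, hl⟩ := Finsupp.ne_iff.1 hne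
    have : 0 < F f l := mul_pos (norm_pos_iff.2 (by simpa using hl)) (QPaux.Rho_pos ρ hρ l)
    exact lt_of_lt_of_le this (hle f l)
  have hνgpos : 0 < νg := by
    have hne : B.repr g ≠ 0 := fun hr => hg0 (by
      have := congrArg B.repr.symm hr
      simpa using this)
    obtain ⟨m, hm⟩ := Finsupp.ne_iff.1 hne
    have : 0 < F g m := mul_pos (norm_pos_iff.2 (by simpa using hm)) (QPaux.Rho_pos ρ hρ m)
    exact lt_of_lt_of_le this (hle g m)
  -- lex-maximal maximizers
  have hmaxset : ∀ h : QuantumPoly K q d, h ≠ 0 → (0 < ⨆ l', F h l') →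
      ∃ l₀, l₀ ∈ (B.repr h).support ∧ F h l₀ = (⨆ l', F h l') ∧
        ∀ l ∈ (B.repr h).support, F h l = (⨆ l', F h l') → toLex l ≤ toLex l₀ := by
    intro h hh hpos
    obtain ⟨l₁, hl₁⟩ := hmem h
    have hl₁pos : 0 < F h l₁ := by rw [← hl₁]; exact hpos
    have hl₁s : l₁ ∈ (B.repr h).support := by
      rw [Finsupp.mem_support_iff]
      intro hz
      rw [hF] at hl₁pos
      simp only [hz, norm_zero, zero_mul] at hl₁pos
      exact lt_irrefl 0 hl₁pos
    classical
    let T : Finset (Lex (Fin d →₀ ℕ)) :=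
      ((B.repr h).support.filter (fun l => F h l = ⨆ l', F h l')).image toLex
    have hTne : T.Nonempty :=
      ⟨toLex l₁, Finset.mem_image_of_mem _ (Finset.mem_filter.2 ⟨hl₁s, hl₁.symm⟩)⟩
    obtain ⟨l, hl, hl2⟩ := Finset.mem_image.1 (T.max'_mem hTne)
    refine ⟨l, (Finset.mem_filter.1 hl).1, (Finset.mem_filter.1 hl).2, ?_⟩
    intro l' hl' hFl'
    calc toLex l' ≤ T.max' hTne :=
          T.le_max' _ (Finset.mem_image_of_mem _ (Finset.mem_filter.2 ⟨hl', hFl'⟩))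
      _ = toLex l := hl2.symm
  obtain ⟨l₀, hl₀s, hl₀F, hl₀max⟩ := hmaxset f hf0 hνfpos
  obtain ⟨m₀, hm₀s, hm₀F, hm₀max⟩ := hmaxset g hg0 hνgpos
  -- expansion of the product
  have hWmu : ∀ l m : Fin d →₀ ℕ, mu (cList l ++ cList m) = l + m := by
    intro l m; rw [mu_append, mu_cList, mu_cList]
  have hfg : f * g = ∑ l ∈ (B.repr f).support, ∑ m ∈ (B.repr g).support,
      (B.repr f l * B.repr g m) • QPaux.W q a (cList l ++ cList m) := by
    have hf' : f = ∑ l ∈ (B.repr f).support, B.repr f l • B l := by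
      conv_lhs => rw [← B.linearCombination_repr f]
      rw [Finsupp.linearCombination_apply, Finsupp.sum]
    have hg' : g = ∑ m ∈ (B.repr g).support, B.repr g m • B m := by
      conv_lhs => rw [← B.linearCombination_repr g]
      rw [Finsupp.linearCombination_apply, Finsupp.sum]
    conv_lhs => rw [hf', hg']
    rw [Finset.sum_mul_sum]
    refine Finset.sum_congr rfl fun l _ => Finset.sum_congr rfl fun m _ => ?_
    rw [smul_mul_smul_comm, W_append, W_cList, W_cList, ← hB, ← hB]
  have hrepr2 : ∀ k, B.repr (f * g) k = ∑ l ∈ (B.repr f).support, ∑ m ∈ (B.repr g).support,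
      B.repr f l * B.repr g m * B.repr (QPaux.W q a (cList l ++ cList m)) k := by
    intro k
    rw [hfg]
    simp only [map_sum, Finsupp.finset_sum_apply, map_smul, Finsupp.smul_apply, smul_eq_mul]
  have hrepr : ∀ k, B.repr (f * g) k = ∑ p ∈ (B.repr f).support ×ˢ (B.repr g).support,
      B.repr f p.1 * B.repr g p.2 * B.repr (QPaux.W q a (cList p.1 ++ cList p.2)) k := by
    intro k
    rw [hrepr2 k]
    exact (Finset.sum_product' _ _
      (fun l m => B.repr f l * B.repr g m *
        B.repr (QPaux.W q a (cList l ++ cList m)) k)).symm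
  -- bounds from word_bound
  have hword := fun (l m : Fin d →₀ ℕ) =>
    QPaux.word_bound hq hq1 hρ ha B hB (cList l ++ cList m)
  have htop : ∀ l m : Fin d →₀ ℕ,
      ‖B.repr (QPaux.W q a (cList l ++ cList m)) (l + m)‖ = 1 := by
    intro l m
    have := (hword l m).1
    rwa [hWmu] at this
  have hoff : ∀ l m k, k ≠ l + m →
      ‖B.repr (QPaux.W q a (cList l ++ cList m)) k‖ * Rho ρ k ≤ θ * Rho ρ (l + m) := by
    intro l m k hk
    have := (hword l m).2 k (by rwa [hWmu])
    rwa [hWmu] at this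
  have hweak : ∀ l m k,
      ‖B.repr (QPaux.W q a (cList l ++ cList m)) k‖ * Rho ρ k ≤ Rho ρ (l + m) := by
    intro l m k
    rcases eq_or_ne k (l + m) with rfl | hk
    · rw [htop, one_mul]
    · refine (hoff l m k hk).trans ?_
      have := QPaux.Rho_pos ρ hρ (l + m)
      nlinarith [hq1.le]
  -- upper bound
  have hub : ∀ k, F (f * g) k ≤ νf * νg := by
    intro k
    have hRk : 0 < Rho ρ k := QPaux.Rho_pos ρ hρ k
    simp only [hF]
    rw [hrepr k, ← le_div_iff₀ hRk]
    refine IsUltrametricDist.norm_sum_le_of_forall_le_of_nonneg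
      (by positivity) fun p _ => ?_
    rw [norm_mul, norm_mul]
    rw [le_div_iff₀ hRk]
    calc ‖B.repr f p.1‖ * ‖B.repr g p.2‖ *
          ‖B.repr (QPaux.W q a (cList p.1 ++ cList p.2)) k‖ * Rho ρ k
        = ‖B.repr f p.1‖ * ‖B.repr g p.2‖ *
          (‖B.repr (QPaux.W q a (cList p.1 ++ cList p.2)) k‖ * Rho ρ k) := by ring
      _ ≤ ‖B.repr f p.1‖ * ‖B.repr g p.2‖ * Rho ρ (p.1 + p.2) := by
          refine mul_le_mul_of_nonneg_left (hweak p.1 p.2 k) ?_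
          positivity
      _ = F f p.1 * F g p.2 := by rw [QPaux.Rho_add]; simp only [hF]; ring
      _ ≤ νf * νg := mul_le_mul (hle f p.1) (hle g p.2) (hFnonneg g p.2) hνfpos.le
  -- lower bound : the coefficient at l₀ + m₀
  set k₀ : Fin d →₀ ℕ := l₀ + m₀ with hk₀
  have hRk₀ : 0 < Rho ρ k₀ := QPaux.Rho_pos ρ hρ k₀
  set A : ℝ := ‖B.repr f l₀‖ * ‖B.repr g m₀‖ with hA
  have hARho : A * Rho ρ k₀ = νf * νg := by
    rw [hA, hk₀, QPaux.Rho_add, hνf, hνg, ← hl₀F, ← hm₀F]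
    simp only [hF]
    ring
  have hApos : 0 < A := by
    have h1 : (0:ℝ) < ‖B.repr f l₀‖ :=
      norm_pos_iff.2 (Finsupp.mem_support_iff.1 hl₀s)
    have h2 : (0:ℝ) < ‖B.repr g m₀‖ :=
      norm_pos_iff.2 (Finsupp.mem_support_iff.1 hm₀s)
    exact mul_pos h1 h2
  -- each term in the erased sum is strictly below A
  have hterm_lt : ∀ p ∈ ((B.repr f).support ×ˢ (B.repr g).support).erase (l₀, m₀),
      ‖B.repr f p.1 * B.repr g p.2 *
        B.repr (QPaux.W q a (cList p.1 ++ cList p.2)) k₀‖ < A := by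
    rintro ⟨l, m⟩ hp
    have hpne : (l, m) ≠ (l₀, m₀) := Finset.ne_of_mem_erase hp
    have hps := Finset.mem_of_mem_erase hp
    have hls : l ∈ (B.repr f).support := (Finset.mem_product.1 hps).1
    have hms : m ∈ (B.repr g).support := (Finset.mem_product.1 hps).2
    rcases eq_or_ne (l + m) k₀ with hsum | hsum
    · -- same total index, but smaller coefficient product
      have hr1 : ‖B.repr (QPaux.W q a (cList l ++ cList m)) k₀‖ = 1 := by
        rw [← hsum]; exact htop l m
      rw [norm_mul, norm_mul, hr1, mul_one]
      -- strict inequality on F-products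
      have hstrict : F f l * F g m < νf * νg := by
        have hFl : F f l ≤ νf := hle f l
        have hFm : F g m ≤ νg := hle g m
        rcases lt_or_eq_of_le hFl with hlt | heq
        · calc F f l * F g m ≤ F f l * νg :=
                mul_le_mul_of_nonneg_left hFm (hFnonneg f l)
            _ < νf * νg := mul_lt_mul_of_pos_right hlt hνgpos
        · rcases lt_or_eq_of_le hFm with hlt | heq2
          · calc F f l * F g m < F f l * νg :=
                  mul_lt_mul_of_pos_left hlt (by rw [heq]; exact hνfpos)
              _ = νf * νg := by rw [heq]
          · -- both are maximizers; contradiction with lex maximality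
            exfalso
            have h1 : toLex l ≤ toLex l₀ := hl₀max l hls heq
            have h2 : toLex m ≤ toLex m₀ := hm₀max m hms heq2
            have hll : l = l₀ := by
              by_contra hne
              have h1' : toLex l < toLex l₀ :=
                lt_of_le_of_ne h1 (fun hc => hne (by exact_mod_cast hc))
              have : toLex (l + m) < toLex (l₀ + m₀) := by
                calc toLex (l + m) = toLex l + toLex m := rfl
                  _ < toLex l₀ + toLex m₀ :=
                      add_lt_add_of_lt_of_le h1' h2
                  _ = toLex (l₀ + m₀) := rfl
              rw [hsum, hk₀] at this
              exact lt_irrefl _ this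
            have hmm : m = m₀ := by
              have := hsum
              rw [hll, hk₀] at this
              exact add_left_cancel this
            exact hpne (by rw [hll, hmm])
      -- convert to coefficient norms
      have hRlm : Rho ρ l * Rho ρ m = Rho ρ k₀ := by
        rw [← QPaux.Rho_add, hsum]
      have : F f l * F g m = ‖B.repr f l‖ * ‖B.repr g m‖ * Rho ρ k₀ := by
        simp only [hF]; rw [← hRlm]; ring
      rw [this, ← hARho] at hstrict
      exact lt_of_mul_lt_mul_right hstrict hRk₀.le
    · -- different total index: gain a factor θ < 1
      rw [norm_mul, norm_mul]
      have hchain : ‖B.repr f l‖ * ‖B.repr g m‖ *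
            ‖B.repr (QPaux.W q a (cList l ++ cList m)) k₀‖ * Rho ρ k₀
          ≤ θ * (νf * νg) := by
        calc ‖B.repr f l‖ * ‖B.repr g m‖ *
              ‖B.repr (QPaux.W q a (cList l ++ cList m)) k₀‖ * Rho ρ k₀
            = ‖B.repr f l‖ * ‖B.repr g m‖ *
              (‖B.repr (QPaux.W q a (cList l ++ cList m)) k₀‖ * Rho ρ k₀) := by ring
          _ ≤ ‖B.repr f l‖ * ‖B.repr g m‖ * (θ * Rho ρ (l + m)) := by
              refine mul_le_mul_of_nonneg_left ?_ (by positivity)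
              exact hoff l m k₀ (Ne.symm hsum)
          _ = θ * (‖B.repr f l‖ * Rho ρ l * (‖B.repr g m‖ * Rho ρ m)) := by
              rw [QPaux.Rho_add]; ring
          _ ≤ θ * (νf * νg) := by
              refine mul_le_mul_of_nonneg_left ?_ hθ0
              exact mul_le_mul (hle f l) (hle g m) (hFnonneg g m) hνfpos.le
      have hθlt : θ * (νf * νg) < νf * νg := by
        have : 0 < νf * νg := mul_pos hνfpos hνgpos
        nlinarith
      have hfinal : ‖B.repr f l‖ * ‖B.repr g m‖ *
            ‖B.repr (QPaux.W q a (cList l ++ cList m)) k₀‖ * Rho ρ k₀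
          < A * Rho ρ k₀ := by
        rw [hARho]; exact lt_of_le_of_lt hchain hθlt
      exact lt_of_mul_lt_mul_right hfinal hRk₀.le
  -- dominant term
  have hmain : ‖B.repr f l₀ * B.repr g m₀ *
      B.repr (QPaux.W q a (cList l₀ ++ cList m₀)) k₀‖ = A := by
    rw [norm_mul, norm_mul, hk₀, htop l₀ m₀, mul_one]
  have hcoeff : ‖B.repr (f * g) k₀‖ = A := by
    rw [hrepr k₀]
    rw [← Finset.add_sum_erase _ _ (Finset.mem_product.2 (⟨hl₀s, hm₀s⟩ : (l₀, m₀).1 ∈ (B.repr f).support ∧ (l₀, m₀).2 ∈ (B.repr g).support))]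
    rcases Finset.eq_empty_or_nonempty
        (((B.repr f).support ×ˢ (B.repr g).support).erase (l₀, m₀)) with he | hne
    · rw [he, Finset.sum_empty, add_zero, hmain]
    · have hrest : ‖∑ p ∈ ((B.repr f).support ×ˢ (B.repr g).support).erase (l₀, m₀),
          B.repr f p.1 * B.repr g p.2 *
            B.repr (QPaux.W q a (cList p.1 ++ cList p.2)) k₀‖ < A := by
        refine lt_of_le_of_lt (hne.norm_sum_le_sup'_norm _) ?_
        rw [Finset.sup'_lt_iff]
        intro p hp
        exact hterm_lt p hp
      have hneq : ‖B.repr f l₀ * B.repr g m₀ *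
          B.repr (QPaux.W q a (cList l₀ ++ cList m₀)) k₀‖
          ≠ ‖∑ p ∈ ((B.repr f).support ×ˢ (B.repr g).support).erase (l₀, m₀),
            B.repr f p.1 * B.repr g p.2 *
              B.repr (QPaux.W q a (cList p.1 ++ cList p.2)) k₀‖ := by
        rw [hmain]; exact (ne_of_lt hrest).symm
      rw [IsUltrametricDist.norm_add_eq_max_of_norm_ne_norm hneq, hmain]
      exact max_eq_left hrest.le
  have hlb : νf * νg ≤ ⨆ l, F (f * g) l := by
    have : F (f * g) k₀ = νf * νg := by
      simp only [hF]; rw [hcoeff, hARho]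
    rw [← this]
    exact hle (f * g) k₀
  exact le_antisymm (ciSup_le hub) hlb
end
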